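/- arXiv:2103.10660 — 7 statements merged into one kernel-verified Lean document; each statement's English description precedes it below -/
import Mathlib

section
/- For every n ∈ ℤ and every integer i ≥ 1, Pr[A_n = i] = Σ_{r=0}^{L} C(L,r) · w_r^2 · (1 − w_r)^{i−1}. -/
open MeasureTheory ProbabilityTheory

lemma count_aux (L : ℕ) (f : ℕ → ℝ) :
    ∑ x : Fin L → Bool, f (Finset.univ.filter (fun i => x i = true)).card
      = ∑ r ∈ Finset.range (L + 1), (L.choose r : ℝ) * f r := by
  have h1 : ∑ x : Fin L → Bool, f (Finset.univ.filter (fun i => x i = true)).card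
      = ∑ s : Finset (Fin L), f s.card := by
    apply Finset.sum_nbij' (i := fun x => Finset.univ.filter (fun i => x i = true))
      (j := fun s => fun i => decide (i ∈ s)) <;> intro a _ <;>
      simp [Finset.ext_iff, funext_iff]
  rw [h1, show (∑ s : Finset (Fin L), f s.card)
      = ∑ s ∈ (Finset.univ : Finset (Fin L)).powerset, f s.card by
    rw [Finset.powerset_univ], Finset.sum_powerset_apply_card]
  simp [Finset.card_univ, nsmul_eq_mul, mul_comm]

/-- For every `n : ℤ` and every integer `i ≥ 1`,
`Pr[A n = i] = ∑_{r=0}^{L} C(L,r) · w r ^ 2 · (1 - w r) ^ (i-1)`. -/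
theorem stmt1
    {Ω : Type*} [MeasurableSpace Ω] (μ : Measure Ω) [IsProbabilityMeasure μ]
    (p : ℝ) (hp0 : 0 < p) (hp1 : p < 1) (L : ℕ) (hL : 1 ≤ L)
    (b : ℤ → Ω → (Fin L → Bool)) (hb : ∀ n, Measurable (b n))
    (hindep : iIndepFun b μ)
    (hdist : ∀ (n : ℤ) (x : Fin L → Bool),
      μ (b n ⁻¹' {x}) =
        ENNReal.ofReal
          (p ^ (Finset.univ.filter fun i => x i = true).card *
            (1 - p) ^ (L - (Finset.univ.filter fun i => x i = true).card)))
    (A : ℤ → Ω → ℕ)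
    (hA : ∀ n ω, A n ω = sInf {m : ℕ | 1 ≤ m ∧ b (n - (m : ℤ)) ω = b n ω})
    (w : ℕ → ℝ) (hw : ∀ r, w r = p ^ r * (1 - p) ^ (L - r)) :
    ∀ (n : ℤ) (i : ℕ), 1 ≤ i →
      μ {ω | A n ω = i} =
        ENNReal.ofReal
          (∑ r ∈ Finset.range (L + 1),
            (L.choose r : ℝ) * (w r) ^ 2 * (1 - w r) ^ (i - 1)) := by
  intro n i hi
  -- basic bounds on w
  have hp0' : (0:ℝ) ≤ p := hp0.le
  have hq0 : (0:ℝ) ≤ 1 - p := by linarith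
  have hw0 : ∀ r, 0 ≤ w r := fun r => by
    rw [hw]; positivity
  have hw1 : ∀ r, w r ≤ 1 := fun r => by
    rw [hw]
    calc p ^ r * (1-p) ^ (L - r) ≤ 1 * 1 := by
          apply mul_le_mul (pow_le_one₀ hp0' hp1.le) (pow_le_one₀ hq0 (by linarith)) (by positivity) one_pos.le
      _ = 1 := by ring
  set ones : (Fin L → Bool) → ℕ := fun x => (Finset.univ.filter fun j => x j = true).card
    with hones
  -- description of the event
  set E : (Fin L → Bool) → Set Ω := fun x =>
    (b n ⁻¹' {x}) ∩ ((b (n - (i:ℤ)) ⁻¹' {x}) ∩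
      ⋂ m ∈ Finset.Ico 1 i, (b (n - (m:ℤ)) ⁻¹' {x})ᶜ) with hE
  have hset : {ω | A n ω = i} = ⋃ x : Fin L → Bool, E x := by
    ext ω
    simp only [Set.mem_setOf_eq, Set.mem_iUnion, hE, Set.mem_inter_iff, Set.mem_preimage,
      Set.mem_singleton_iff, Set.mem_iInter, Set.mem_compl_iff, Finset.mem_Ico]
    rw [hA]
    set S := {m : ℕ | 1 ≤ m ∧ b (n - (m : ℤ)) ω = b n ω} with hS
    constructor
    · intro h
      have hne : S.Nonempty := by
        by_contra hcon
        rw [Set.not_nonempty_iff_eq_empty] at hcon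
        rw [hcon, Nat.sInf_empty] at h
        omega
      have hmem := Nat.sInf_mem hne
      rw [h] at hmem
      refine ⟨b n ω, rfl, hmem.2, ?_⟩
      intro m hm
      have : m ∉ S := Nat.notMem_of_lt_sInf (h ▸ hm.2)
      simp only [hS, Set.mem_setOf_eq, not_and] at this
      exact this hm.1
    · rintro ⟨x, rfl, hbi, hlt⟩
      have hiS : i ∈ S := ⟨hi, hbi⟩
      have h1 : sInf S ≤ i := Nat.sInf_le hiS
      have h2 : i ≤ sInf S := by
        by_contra hcon
        push_neg at hcon
        have := Nat.sInf_mem ⟨i, hiS⟩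
        exact hlt _ ⟨this.1, hcon⟩ this.2
      omega
  have hmE : ∀ x, MeasurableSet (E x) := by
    intro x
    refine (((hb n) (measurableSet_singleton x)).inter
      (((hb _) (measurableSet_singleton x)).inter ?_))
    exact MeasurableSet.biInter (Finset.Ico 1 i).countable_toSet
      (fun m _ => ((hb _) (measurableSet_singleton x)).compl)
  have hdisj : Pairwise (Function.onFun Disjoint E) := by
    intro x y hxy
    simp only [Function.onFun, Set.disjoint_left]
    rintro ω ⟨h1, -⟩ ⟨h2, -⟩
    exact hxy (h1.symm.trans h2)
  rw [hset, measure_iUnion hdisj hmE, tsum_fintype]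
  -- compute μ (E x)
  have hEx : ∀ x : Fin L → Bool,
      μ (E x) = ENNReal.ofReal ((w (ones x)) ^ 2 * (1 - w (ones x)) ^ (i - 1)) := by
    intro x
    classical
    set sets : ℤ → Set (Fin L → Bool) := fun k =>
      if k = n ∨ k = n - (i:ℤ) then {x} else {x}ᶜ with hsets
    set T : Finset ℤ :=
      insert n (insert (n - (i:ℤ)) ((Finset.Ico 1 i).image fun m : ℕ => n - (m:ℤ))) with hT
    have hni : n ≠ n - (i:ℤ) := by
      intro h
      have : (i:ℤ) = 0 := by linarith
      omega
    have hnim : n ∉ (insert (n - (i:ℤ)) ((Finset.Ico 1 i).image fun m : ℕ => n - (m:ℤ))) := by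
      simp only [Finset.mem_insert, Finset.mem_image, Finset.mem_Ico]
      push_neg
      exact ⟨hni, fun m hm => by omega⟩
    have hiim : (n - (i:ℤ)) ∉ ((Finset.Ico 1 i).image fun m : ℕ => n - (m:ℤ)) := by
      simp only [Finset.mem_image, Finset.mem_Ico]
      rintro ⟨m, hm, heq⟩
      omega
    have hsets_n : sets n = {x} := by simp [hsets]
    have hsets_i : sets (n - (i:ℤ)) = {x} := by simp [hsets]
    have hsets_m : ∀ m : ℕ, 1 ≤ m → m < i → sets (n - (m:ℤ)) = {x}ᶜ := by
      intro m h1 h2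
      rw [hsets]
      dsimp only
      rw [if_neg]
      push_neg
      constructor <;> intro h <;> omega
    have hEeq : E x = ⋂ k ∈ T, b k ⁻¹' sets k := by
      rw [hT, Finset.set_biInter_insert, Finset.set_biInter_insert,
        Finset.set_biInter_finset_image, hsets_n, hsets_i, hE]
      dsimp only
      congr 1
      congr 1
      apply Set.iInter₂_congr
      intro m hm
      simp only [Finset.mem_Ico] at hm
      rw [hsets_m m hm.1 hm.2, Set.preimage_compl]
    have hmsets : ∀ k, k ∈ T → MeasurableSet (sets k) := by
      intro k _
      rw [hsets]
      dsimp only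
      split
      · exact measurableSet_singleton x
      · exact (measurableSet_singleton x).compl
    have hprod := hindep.measure_inter_preimage_eq_mul T hmsets
    rw [hEeq, hprod, hT, Finset.prod_insert hnim, Finset.prod_insert hiim,
      Finset.prod_image (by intro a _ c _ h; have h' : n - (a:ℤ) = n - (c:ℤ) := h; omega)]
    have hvx : μ (b n ⁻¹' sets n) = ENNReal.ofReal (w (ones x)) := by
      rw [hsets_n, hdist n x, hw]
    have hvx2 : μ (b (n - (i:ℤ)) ⁻¹' sets (n - (i:ℤ))) = ENNReal.ofReal (w (ones x)) := by
      rw [hsets_i, hdist _ x, hw]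
    have hcompl : ∀ m : ℕ, 1 ≤ m → m < i →
        μ (b (n - (m:ℤ)) ⁻¹' sets (n - (m:ℤ))) = ENNReal.ofReal (1 - w (ones x)) := by
      intro m h1 h2
      rw [hsets_m m h1 h2, Set.preimage_compl,
        measure_compl ((hb _) (measurableSet_singleton x)) (measure_ne_top μ _),
        hdist _ x, measure_univ, ENNReal.ofReal_sub 1 (hw0 _), ENNReal.ofReal_one]
      congr 2
      rw [hw]
    rw [hvx, hvx2]
    have hprodc : ∏ m ∈ Finset.Ico 1 i, μ (b (n - (m:ℤ)) ⁻¹' sets (n - (m:ℤ)))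
        = ENNReal.ofReal (1 - w (ones x)) ^ (i - 1) := by
      rw [Finset.prod_congr rfl (fun m hm => by
        simp only [Finset.mem_Ico] at hm
        exact hcompl m hm.1 hm.2), Finset.prod_const, Nat.card_Ico]
    rw [hprodc, ← ENNReal.ofReal_pow (by linarith [hw1 (ones x)]),
      ← ENNReal.ofReal_mul (hw0 _), ← ENNReal.ofReal_mul (hw0 _)]
    congr 1
    ring
  rw [Finset.sum_congr rfl (fun x _ => hEx x),
    ← ENNReal.ofReal_sum_of_nonneg (fun x _ =>
      mul_nonneg (sq_nonneg _) (pow_nonneg (by linarith [hw1 (ones x)]) _))]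
  congr 1
  simp only [hones]
  rw [count_aux L (fun r => (w r) ^ 2 * (1 - w r) ^ (i - 1))]
  apply Finset.sum_congr rfl
  intro r _
  ring
end

section
/- For every n ∈ ℤ and integers i ≥ 1, k ≥ 1 and 1 ≤ j ≤ k−1, the events {A_n = i} and {A_{n+k} = j} are independent; in particular Pr[A_n = i, A_{n+k} = j] = (Σ_{r=0}^{L} C(L,r) w_r^2 (1−w_r)^{i−1}) · (Σ_{r=0}^{L} C(L,r) w_r^2 (1−w_r)^{j−1}). -/
open MeasureTheory ProbabilityTheory

/-- number of `true` coordinates -/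
def stmt2cx {L : ℕ} (x : Fin L → Bool) : ℕ := (Finset.univ.filter fun i => x i = true).card

lemma stmt2_card_fiber (L r : ℕ) :
    (Finset.univ.filter fun x : Fin L → Bool => stmt2cx x = r).card = L.choose r := by
  have h : L.choose r = ((Finset.univ : Finset (Fin L)).powersetCard r).card := by
    rw [Finset.card_powersetCard, Finset.card_univ, Fintype.card_fin]
  rw [h]
  apply Finset.card_bij (fun x _ => Finset.univ.filter fun i => x i = true)
  · intro x hx
    simp only [Finset.mem_filter, Finset.mem_univ, true_and, stmt2cx] at hx
    simp [Finset.mem_powersetCard, hx, Finset.filter_subset]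
    exact (Finset.mem_filter.1 hx).2
  · intro x _ y _ h
    funext i
    rw [Bool.eq_iff_iff]
    constructor <;> intro hi
    · have := Finset.ext_iff.1 h i
      simpa [hi] using this
    · have := Finset.ext_iff.1 h i
      simpa [hi] using this
  · intro s hs
    simp only [Finset.mem_powersetCard] at hs
    refine ⟨fun i => decide (i ∈ s), ?_, ?_⟩
    · simp only [Finset.mem_filter, Finset.mem_univ, true_and, stmt2cx, decide_eq_true_eq]
      rw [← hs.2]
      congr 1
      exact Finset.mem_filter.2 ⟨Finset.mem_univ _, by simp⟩
    · ext i; simp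

/-- the per-index set used in the decomposition of the event `A n = i` -/
def stmt2sf {L : ℕ} (x : Fin L → Bool) (n0 : ℤ) (i0 : ℕ) (m : ℤ) : Set (Fin L → Bool) :=
  if m = n0 - i0 ∨ m = n0 then {x} else {x}ᶜ

/-- the basic rectangle event -/
def stmt2T {Ω : Type*} {L : ℕ} (b : ℤ → Ω → (Fin L → Bool)) (n0 : ℤ) (i0 : ℕ)
    (x : Fin L → Bool) : Set Ω :=
  ⋂ m ∈ Finset.Icc (n0 - i0) n0, b m ⁻¹' stmt2sf x n0 i0 m

lemma stmt2_measurableSet {L : ℕ} (s : Set (Fin L → Bool)) : MeasurableSet s :=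
  (Set.toFinite s).measurableSet

lemma stmt2_mem_T {Ω : Type*} {L : ℕ} (b : ℤ → Ω → (Fin L → Bool)) (n0 : ℤ) (i0 : ℕ)
    (x : Fin L → Bool) (ω : Ω) :
    ω ∈ stmt2T b n0 i0 x ↔ ∀ m ∈ Finset.Icc (n0 - (i0 : ℤ)) n0, b m ω ∈ stmt2sf x n0 i0 m := by
  simp [stmt2T]

lemma stmt2_T_val {Ω : Type*} {L : ℕ} (b : ℤ → Ω → (Fin L → Bool)) (n0 : ℤ) (i0 : ℕ)
    (x : Fin L → Bool) (ω : Ω) (hω : ω ∈ stmt2T b n0 i0 x) : b n0 ω = x := by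
  have h := (stmt2_mem_T b n0 i0 x ω).1 hω n0 (by simp only [Finset.mem_Icc]; omega)
  simpa [stmt2sf] using h

/-- event decomposition -/
lemma stmt2_event_eq {Ω : Type*} {L : ℕ} (b : ℤ → Ω → (Fin L → Bool))
    (A : ℤ → Ω → ℕ)
    (hA : ∀ n ω, A n ω = sInf {m : ℕ | 1 ≤ m ∧ b (n - (m : ℤ)) ω = b n ω})
    (n0 : ℤ) (i0 : ℕ) (hi0 : 1 ≤ i0) :
    {ω | A n0 ω = i0} = ⋃ x : Fin L → Bool, stmt2T b n0 i0 x := by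
  ext ω
  simp only [Set.mem_setOf_eq, Set.mem_iUnion, hA]
  constructor
  · intro hAi
    have hne : {m : ℕ | 1 ≤ m ∧ b (n0 - (m : ℤ)) ω = b n0 ω}.Nonempty := by
      by_contra h
      rw [Set.not_nonempty_iff_eq_empty] at h
      rw [h, Nat.sInf_empty] at hAi
      omega
    have hmem := Nat.sInf_mem hne
    rw [hAi] at hmem
    refine ⟨b n0 ω, (stmt2_mem_T b n0 i0 _ ω).2 ?_⟩
    intro m hm
    simp only [Finset.mem_Icc] at hm
    by_cases hcase : m = n0 - i0 ∨ m = n0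
    · simp only [stmt2sf, if_pos hcase, Set.mem_singleton_iff]
      rcases hcase with h | h
      · rw [h]; exact hmem.2
      · rw [h]
    · push_neg at hcase
      simp only [stmt2sf, if_neg (not_or.mpr hcase), Set.mem_compl_iff,
        Set.mem_singleton_iff]
      set m' := (n0 - m).toNat with hm'
      have hmz : (m' : ℤ) = n0 - m := Int.toNat_of_nonneg (by omega)
      have hm1 : 1 ≤ m' := by omega
      have hm2 : m' < i0 := by omega
      have hnot := Nat.notMem_of_lt_sInf (s := {m : ℕ | 1 ≤ m ∧ b (n0 - (m : ℤ)) ω = b n0 ω})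
        (by rw [hAi]; exact hm2)
      simp only [Set.mem_setOf_eq, not_and] at hnot
      have := hnot hm1
      have hrw : n0 - (m' : ℤ) = m := by omega
      rw [hrw] at this
      exact this
  · rintro ⟨x, hx⟩
    rw [stmt2_mem_T] at hx
    have hxn : b n0 ω = x := by
      have := hx n0 (by simp only [Finset.mem_Icc]; omega)
      simpa [stmt2sf] using this
    have hxi : b (n0 - (i0 : ℤ)) ω = x := by
      have := hx (n0 - i0) (by simp only [Finset.mem_Icc]; omega)
      simpa [stmt2sf] using this
    have hiS : i0 ∈ {m : ℕ | 1 ≤ m ∧ b (n0 - (m : ℤ)) ω = b n0 ω} := by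
      exact ⟨hi0, by rw [hxi, hxn]⟩
    have hlow : ∀ m ∈ {m : ℕ | 1 ≤ m ∧ b (n0 - (m : ℤ)) ω = b n0 ω}, i0 ≤ m := by
      intro m hm
      by_contra h
      push_neg at h
      obtain ⟨hm1, hm2⟩ := hm
      have hmem : (n0 - (m : ℤ)) ∈ Finset.Icc (n0 - (i0 : ℤ)) n0 := by
        simp only [Finset.mem_Icc]; omega
      have := hx _ hmem
      have hne : ¬((n0 - (m : ℤ)) = n0 - i0 ∨ (n0 - (m : ℤ)) = n0) := by
        push_neg; constructor <;> omega
      simp only [stmt2sf, if_neg hne, Set.mem_compl_iff, Set.mem_singleton_iff] at this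
      rw [hm2, hxn] at this
      exact this rfl
    exact le_antisymm (Nat.sInf_le hiS) (le_csInf ⟨i0, hiS⟩ hlow)

lemma stmt2_meas_T {Ω : Type*} [MeasurableSpace Ω] (μ : Measure Ω) [IsProbabilityMeasure μ]
    {L : ℕ} (b : ℤ → Ω → (Fin L → Bool))
    (hindep : iIndepFun b μ)
    (w : ℕ → ℝ) (hw0 : ∀ r, 0 ≤ w r) (hw1 : ∀ r, w r ≤ 1)
    (hsing : ∀ (m : ℤ) (x : Fin L → Bool), μ (b m ⁻¹' {x}) = ENNReal.ofReal (w (stmt2cx x)))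
    (hb : ∀ n, Measurable (b n))
    (n0 : ℤ) (i0 : ℕ) (hi0 : 1 ≤ i0) (x : Fin L → Bool) :
    μ (stmt2T b n0 i0 x) =
      ENNReal.ofReal (w (stmt2cx x) ^ 2 * (1 - w (stmt2cx x)) ^ (i0 - 1)) := by
  have hcomp : ∀ (m : ℤ), μ (b m ⁻¹' {x}ᶜ) = ENNReal.ofReal (1 - w (stmt2cx x)) := by
    intro m
    rw [Set.preimage_compl, measure_compl ((hb m) (stmt2_measurableSet _)) (measure_ne_top μ _),
      measure_univ, hsing, ENNReal.ofReal_sub _ (hw0 _), ENNReal.ofReal_one]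
  have hprod := hindep.measure_inter_preimage_eq_mul (Finset.Icc (n0 - (i0 : ℤ)) n0)
      (sets := stmt2sf x n0 i0) (fun m _ => stmt2_measurableSet _)
  rw [stmt2T, hprod]
  have hsplit : Finset.Icc (n0 - (i0 : ℤ)) n0 =
      insert (n0 - (i0 : ℤ)) (insert n0 (Finset.Ioo (n0 - (i0 : ℤ)) n0)) := by
    ext m
    simp only [Finset.mem_Icc, Finset.mem_insert, Finset.mem_Ioo]
    omega
  rw [hsplit, Finset.prod_insert (by simp only [Finset.mem_insert, Finset.mem_Ioo]; omega),
    Finset.prod_insert (by simp only [Finset.mem_Ioo]; omega)]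
  have h1 : stmt2sf x n0 i0 (n0 - (i0 : ℤ)) = {x} := by simp [stmt2sf]
  have h2 : stmt2sf x n0 i0 n0 = {x} := by simp [stmt2sf]
  have h3 : ∏ m ∈ Finset.Ioo (n0 - (i0 : ℤ)) n0, μ (b m ⁻¹' stmt2sf x n0 i0 m)
      = ENNReal.ofReal (1 - w (stmt2cx x)) ^ (i0 - 1) := by
    have hc : ∀ m ∈ Finset.Ioo (n0 - (i0 : ℤ)) n0,
        μ (b m ⁻¹' stmt2sf x n0 i0 m) = ENNReal.ofReal (1 - w (stmt2cx x)) := by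
      intro m hm
      simp only [Finset.mem_Ioo] at hm
      have hnm : ¬(m = n0 - (i0 : ℤ) ∨ m = n0) := by omega
      simp only [stmt2sf, if_neg hnm]
      exact hcomp m
    rw [Finset.prod_congr rfl hc, Finset.prod_const, Int.card_Ioo]
    congr 1
    omega
  rw [h1, h2, hsing, hsing, h3,
    ← ENNReal.ofReal_pow (by linarith [hw1 (stmt2cx x)] : (0 : ℝ) ≤ 1 - w (stmt2cx x)),
    ← ENNReal.ofReal_mul (hw0 _), ← ENNReal.ofReal_mul (hw0 _)]
  exact congrArg ENNReal.ofReal (by ring)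

lemma stmt2_meas_T_inter {Ω : Type*} [MeasurableSpace Ω] (μ : Measure Ω)
    [IsProbabilityMeasure μ] {L : ℕ} (b : ℤ → Ω → (Fin L → Bool))
    (hindep : iIndepFun b μ)
    (n0 n1 : ℤ) (i0 i1 : ℕ) (hsep : n0 < n1 - (i1 : ℤ)) (x y : Fin L → Bool) :
    μ (stmt2T b n0 i0 x ∩ stmt2T b n1 i1 y) =
      μ (stmt2T b n0 i0 x) * μ (stmt2T b n1 i1 y) := by
  classical
  set S1 := Finset.Icc (n0 - (i0 : ℤ)) n0 with hS1
  set S2 := Finset.Icc (n1 - (i1 : ℤ)) n1 with hS2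
  have hdisj : Disjoint S1 S2 := by
    rw [Finset.disjoint_left]
    intro m h1 h2
    simp only [hS1, hS2, Finset.mem_Icc] at h1 h2
    omega
  set st : ℤ → Set (Fin L → Bool) :=
    fun m => if m ∈ S1 then stmt2sf x n0 i0 m else stmt2sf y n1 i1 m with hst
  have hTT : stmt2T b n0 i0 x ∩ stmt2T b n1 i1 y = ⋂ m ∈ S1 ∪ S2, b m ⁻¹' st m := by
    rw [Finset.set_biInter_inter, stmt2T, stmt2T]
    congr 1
    · exact Set.iInter₂_congr fun m hm => by rw [hst]; simp only [if_pos (show m ∈ S1 from hm)]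
    · exact Set.iInter₂_congr fun m hm => by
        rw [hst]; simp only [if_neg (Finset.disjoint_right.1 hdisj hm)]
  have e1 := hindep.measure_inter_preimage_eq_mul (S1 ∪ S2) (sets := st)
      (fun m _ => stmt2_measurableSet _)
  have e2 := hindep.measure_inter_preimage_eq_mul S1 (sets := stmt2sf x n0 i0)
      (fun m _ => stmt2_measurableSet _)
  have e3 := hindep.measure_inter_preimage_eq_mul S2 (sets := stmt2sf y n1 i1)
      (fun m _ => stmt2_measurableSet _)
  rw [hTT, e1, Finset.prod_union hdisj, stmt2T, stmt2T, e2, e3]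
  congr 1
  · exact Finset.prod_congr rfl fun m hm => by rw [hst]; simp only [if_pos hm]
  · exact Finset.prod_congr rfl fun m hm => by
      rw [hst]; simp only [if_neg (Finset.disjoint_right.1 hdisj hm)]

lemma stmt2_sum {L : ℕ} (w : ℕ → ℝ) (hw0 : ∀ r, 0 ≤ w r) (hw1 : ∀ r, w r ≤ 1) (i0 : ℕ) :
    ∑ x : Fin L → Bool, ENNReal.ofReal (w (stmt2cx x) ^ 2 * (1 - w (stmt2cx x)) ^ (i0 - 1))
      = ENNReal.ofReal (∑ r ∈ Finset.range (L + 1),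
          (L.choose r : ℝ) * w r ^ 2 * (1 - w r) ^ (i0 - 1)) := by
  have hnn : ∀ r, (0 : ℝ) ≤ w r ^ 2 * (1 - w r) ^ (i0 - 1) := fun r =>
    mul_nonneg (pow_nonneg (hw0 r) 2) (pow_nonneg (by linarith [hw1 r]) _)
  rw [← ENNReal.ofReal_sum_of_nonneg (fun x _ => hnn _)]
  congr 1
  have hmaps : ∀ x ∈ (Finset.univ : Finset (Fin L → Bool)), stmt2cx x ∈ Finset.range (L + 1) := by
    intro x _
    have : stmt2cx x ≤ L := by
      have := Finset.card_filter_le (Finset.univ : Finset (Fin L)) (fun i => x i = true)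
      simpa [stmt2cx] using this
    simp only [Finset.mem_range]
    omega
  rw [← Finset.sum_fiberwise_of_maps_to hmaps
    (fun x => w (stmt2cx x) ^ 2 * (1 - w (stmt2cx x)) ^ (i0 - 1))]
  refine Finset.sum_congr rfl fun r _ => ?_
  have hinner : ∀ x ∈ Finset.univ.filter (fun x : Fin L → Bool => stmt2cx x = r),
      w (stmt2cx x) ^ 2 * (1 - w (stmt2cx x)) ^ (i0 - 1)
        = w r ^ 2 * (1 - w r) ^ (i0 - 1) := by
    intro x hx
    simp only [Finset.mem_filter] at hx
    rw [hx.2]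
  rw [Finset.sum_congr rfl hinner, Finset.sum_const, stmt2_card_fiber, nsmul_eq_mul]
  ring

/-- For every `n : ℤ` and integers `i ≥ 1`, `k ≥ 1` and `1 ≤ j ≤ k-1`,
the events `{A n = i}` and `{A (n+k) = j}` are independent; in particular the joint
probability equals the product of the two sums. -/
theorem stmt2
    {Ω : Type*} [MeasurableSpace Ω] (μ : Measure Ω) [IsProbabilityMeasure μ]
    (p : ℝ) (hp0 : 0 < p) (hp1 : p < 1) (L : ℕ) (hL : 1 ≤ L)
    (b : ℤ → Ω → (Fin L → Bool)) (hb : ∀ n, Measurable (b n))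
    (hindep : iIndepFun b μ)
    (hdist : ∀ (n : ℤ) (x : Fin L → Bool),
      μ (b n ⁻¹' {x}) =
        ENNReal.ofReal
          (p ^ (Finset.univ.filter fun i => x i = true).card *
            (1 - p) ^ (L - (Finset.univ.filter fun i => x i = true).card)))
    (A : ℤ → Ω → ℕ)
    (hA : ∀ n ω, A n ω = sInf {m : ℕ | 1 ≤ m ∧ b (n - (m : ℤ)) ω = b n ω})
    (w : ℕ → ℝ) (hw : ∀ r, w r = p ^ r * (1 - p) ^ (L - r)) :
    ∀ (n : ℤ) (i k j : ℕ), 1 ≤ i → 1 ≤ k → 1 ≤ j → j ≤ k - 1 →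
      (μ ({ω | A n ω = i} ∩ {ω | A (n + (k : ℤ)) ω = j}) =
        μ {ω | A n ω = i} * μ {ω | A (n + (k : ℤ)) ω = j}) ∧
      (μ ({ω | A n ω = i} ∩ {ω | A (n + (k : ℤ)) ω = j}) =
        ENNReal.ofReal
          ((∑ r ∈ Finset.range (L + 1),
              (L.choose r : ℝ) * (w r) ^ 2 * (1 - w r) ^ (i - 1)) *
           (∑ r ∈ Finset.range (L + 1),
              (L.choose r : ℝ) * (w r) ^ 2 * (1 - w r) ^ (j - 1)))) := by
  intro n i k j hi hk hj hjk
  have hw0 : ∀ r, 0 ≤ w r := fun r => by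
    rw [hw]
    exact mul_nonneg (pow_nonneg hp0.le _) (pow_nonneg (by linarith) _)
  have hw1 : ∀ r, w r ≤ 1 := fun r => by
    rw [hw]
    calc p ^ r * (1 - p) ^ (L - r) ≤ 1 * 1 := by
          apply mul_le_mul
          · exact pow_le_one₀ hp0.le hp1.le
          · exact pow_le_one₀ (by linarith) (by linarith)
          · exact pow_nonneg (by linarith) _
          · norm_num
      _ = 1 := by norm_num
  have hsing : ∀ (m : ℤ) (x : Fin L → Bool),
      μ (b m ⁻¹' {x}) = ENNReal.ofReal (w (stmt2cx x)) := by
    intro m x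
    rw [hdist m x, hw]
    rfl
  have hTmeas : ∀ (n0 : ℤ) (i0 : ℕ) (x : Fin L → Bool), MeasurableSet (stmt2T b n0 i0 x) :=
    fun n0 i0 x =>
      MeasurableSet.biInter (Set.to_countable _) fun m _ => (hb m) (stmt2_measurableSet _)
  -- the marginal measures
  have hmargsum : ∀ (n0 : ℤ) (i0 : ℕ),
      μ (⋃ x : Fin L → Bool, stmt2T b n0 i0 x) = ∑ x : Fin L → Bool, μ (stmt2T b n0 i0 x) := by
    intro n0 i0
    rw [measure_iUnion ?_ (fun x => hTmeas n0 i0 x), tsum_fintype]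
    intro x x' hne
    refine Set.disjoint_left.2 fun ω h1 h2 => hne ?_
    rw [← stmt2_T_val b n0 i0 x ω h1, stmt2_T_val b n0 i0 x' ω h2]
  have hsumT : ∀ (n0 : ℤ) (i0 : ℕ), 1 ≤ i0 →
      ∑ x : Fin L → Bool, μ (stmt2T b n0 i0 x)
        = ENNReal.ofReal (∑ r ∈ Finset.range (L + 1),
            (L.choose r : ℝ) * w r ^ 2 * (1 - w r) ^ (i0 - 1)) := by
    intro n0 i0 hi0
    rw [Finset.sum_congr rfl
      (fun x _ => stmt2_meas_T μ b hindep w hw0 hw1 hsing hb n0 i0 hi0 x)]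
    exact stmt2_sum w hw0 hw1 i0
  have hmarg : ∀ (n0 : ℤ) (i0 : ℕ), 1 ≤ i0 →
      μ {ω | A n0 ω = i0} = ENNReal.ofReal (∑ r ∈ Finset.range (L + 1),
        (L.choose r : ℝ) * w r ^ 2 * (1 - w r) ^ (i0 - 1)) := by
    intro n0 i0 hi0
    rw [stmt2_event_eq b A hA n0 i0 hi0, hmargsum, hsumT n0 i0 hi0]
  -- joint
  have hsep : n < (n + (k : ℤ)) - (j : ℤ) := by omega
  have hjoint : μ ({ω | A n ω = i} ∩ {ω | A (n + (k : ℤ)) ω = j}) =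
      (∑ x : Fin L → Bool, μ (stmt2T b n i x)) *
      (∑ y : Fin L → Bool, μ (stmt2T b (n + (k : ℤ)) j y)) := by
    rw [stmt2_event_eq b A hA n i hi, stmt2_event_eq b A hA (n + (k : ℤ)) j hj]
    have hU : (⋃ x : Fin L → Bool, stmt2T b n i x) ∩
        (⋃ y : Fin L → Bool, stmt2T b (n + (k : ℤ)) j y)
        = ⋃ q : (Fin L → Bool) × (Fin L → Bool),
            stmt2T b n i q.1 ∩ stmt2T b (n + (k : ℤ)) j q.2 := by
      ext ω
      simp only [Set.mem_inter_iff, Set.mem_iUnion]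
      constructor
      · rintro ⟨⟨x, hx⟩, ⟨y, hy⟩⟩; exact ⟨(x, y), hx, hy⟩
      · rintro ⟨q, h1, h2⟩; exact ⟨⟨q.1, h1⟩, ⟨q.2, h2⟩⟩
    rw [hU, measure_iUnion ?_ (fun q => (hTmeas _ _ _).inter (hTmeas _ _ _)), tsum_fintype]
    · rw [Fintype.sum_prod_type, Finset.sum_mul_sum]
      refine Finset.sum_congr rfl fun x _ => Finset.sum_congr rfl fun y _ => ?_
      exact stmt2_meas_T_inter μ b hindep n (n + (k : ℤ)) i j hsep x y
    · intro q q' hne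
      refine Set.disjoint_left.2 fun ω h1 h2 => hne ?_
      ext : 1
      · rw [← stmt2_T_val b n i q.1 ω h1.1, stmt2_T_val b n i q'.1 ω h2.1]
      · rw [← stmt2_T_val b (n + (k : ℤ)) j q.2 ω h1.2, stmt2_T_val b _ j q'.2 ω h2.2]
  have hSnn : ∀ (i0 : ℕ), (0 : ℝ) ≤ ∑ r ∈ Finset.range (L + 1),
      (L.choose r : ℝ) * w r ^ 2 * (1 - w r) ^ (i0 - 1) := by
    intro i0
    refine Finset.sum_nonneg fun r _ => ?_
    have h1 : (0 : ℝ) ≤ 1 - w r := by linarith [hw1 r]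
    positivity
  constructor
  · rw [hjoint, hmarg n i hi, hmarg (n + (k : ℤ)) j hj, ← hsumT n i hi,
      ← hsumT (n + (k : ℤ)) j hj]
  · rw [hjoint, hsumT n i hi, hsumT (n + (k : ℤ)) j hj,
      ← ENNReal.ofReal_mul (hSnn i)]
end

section
/- For every n ∈ ℤ and integers i ≥ 1 and k ≥ 1, Pr[A_n = i, A_{n+k} = k] = Σ_{r=0}^{L} C(L,r) · w_r^3 · (1 − w_r)^{i+k−2}. -/
open MeasureTheory ProbabilityTheory

/-- For every `n : ℤ` and integers `i ≥ 1` and `k ≥ 1`,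
`Pr[A n = i, A (n+k) = k] = ∑_{r=0}^{L} C(L,r) · w r ^ 3 · (1 - w r) ^ (i+k-2)`. -/
theorem stmt3
    {Ω : Type*} [MeasurableSpace Ω] (μ : Measure Ω) [IsProbabilityMeasure μ]
    (p : ℝ) (hp0 : 0 < p) (hp1 : p < 1) (L : ℕ) (hL : 1 ≤ L)
    (b : ℤ → Ω → (Fin L → Bool)) (hb : ∀ n, Measurable (b n))
    (hindep : iIndepFun b μ)
    (hdist : ∀ (n : ℤ) (x : Fin L → Bool),
      μ (b n ⁻¹' {x}) =
        ENNReal.ofReal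
          (p ^ (Finset.univ.filter fun i => x i = true).card *
            (1 - p) ^ (L - (Finset.univ.filter fun i => x i = true).card)))
    (A : ℤ → Ω → ℕ)
    (hA : ∀ n ω, A n ω = sInf {m : ℕ | 1 ≤ m ∧ b (n - (m : ℤ)) ω = b n ω})
    (w : ℕ → ℝ) (hw : ∀ r, w r = p ^ r * (1 - p) ^ (L - r)) :
    ∀ (n : ℤ) (i k : ℕ), 1 ≤ i → 1 ≤ k →
      μ ({ω | A n ω = i} ∩ {ω | A (n + (k : ℤ)) ω = k}) =
        ENNReal.ofReal
          (∑ r ∈ Finset.range (L + 1),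
            (L.choose r : ℝ) * (w r) ^ 3 * (1 - w r) ^ (i + k - 2)) := by
  classical
  intro n i k hi hk
  -- the number of `true` coordinates
  set r : (Fin L → Bool) → ℕ := fun x => (Finset.univ.filter fun j => x j = true).card with hr
  -- basic bounds on w
  have hw_pos : ∀ s : ℕ, 0 < w s := by
    intro s
    rw [hw]
    exact mul_pos (pow_pos hp0 s) (pow_pos (by linarith) _)
  have hw_le : ∀ s : ℕ, w s ≤ 1 := by
    intro s
    rw [hw]
    have h1 : p ^ s ≤ 1 := pow_le_one₀ hp0.le hp1.le
    have h2 : (1 - p) ^ (L - s) ≤ 1 := pow_le_one₀ (by linarith) (by linarith)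
    calc p ^ s * (1 - p) ^ (L - s) ≤ 1 * 1 :=
          mul_le_mul h1 h2 (pow_nonneg (by linarith) _) zero_le_one
      _ = 1 := by ring
  -- measures of the single-coordinate events
  have hx_meas : ∀ (t : ℤ) (x : Fin L → Bool),
      μ (b t ⁻¹' {x}) = ENNReal.ofReal (w (r x)) := by
    intro t x
    rw [hdist, hw]
  have hxc_meas : ∀ (t : ℤ) (x : Fin L → Bool),
      μ (b t ⁻¹' {x}ᶜ) = ENNReal.ofReal (1 - w (r x)) := by
    intro t x
    have hm : MeasurableSet (b t ⁻¹' {x}) := (hb t) (measurableSet_singleton x)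
    rw [Set.preimage_compl, measure_compl hm (measure_ne_top μ _), measure_univ, hx_meas,
      ENNReal.ofReal_sub _ (hw_pos (r x)).le, ENNReal.ofReal_one]
  -- characterization of `A ν ω = j`
  have hAset : ∀ (ν : ℤ) (j : ℕ), 1 ≤ j → ∀ ω : Ω,
      (A ν ω = j ↔ (b (ν - (j : ℤ)) ω = b ν ω ∧
        ∀ m : ℕ, 1 ≤ m → m < j → b (ν - (m : ℤ)) ω ≠ b ν ω)) := by
    intro ν j hj ω
    rw [hA]
    set S : Set ℕ := {m : ℕ | 1 ≤ m ∧ b (ν - (m : ℤ)) ω = b ν ω} with hS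
    constructor
    · intro h
      have hne : S.Nonempty := by
        by_contra hne
        rw [Set.not_nonempty_iff_eq_empty] at hne
        rw [hne, Nat.sInf_empty] at h
        omega
      have hmem := Nat.sInf_mem hne
      rw [h] at hmem
      refine ⟨hmem.2, fun m hm1 hm2 hbm => ?_⟩
      have hlt : m < sInf S := by rw [h]; exact hm2
      exact Nat.notMem_of_lt_sInf hlt ⟨hm1, hbm⟩
    · rintro ⟨h1, h2⟩
      have hjS : j ∈ S := ⟨hj, h1⟩
      have hle : sInf S ≤ j := Nat.sInf_le hjS
      have hmem := Nat.sInf_mem ⟨j, hjS⟩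
      rcases lt_or_eq_of_le hle with h | h
      · exact absurd hmem.2 (h2 _ hmem.1 h)
      · exact h
  -- index sets
  set T1 : Finset ℤ := {n - (i : ℤ), n, n + (k : ℤ)} with hT1
  set T2 : Finset ℤ := (Finset.Ico 1 i).image (fun m : ℕ => n - (m : ℤ)) with hT2
  set T3 : Finset ℤ := (Finset.Ico 1 k).image (fun m : ℕ => n + (k : ℤ) - (m : ℤ)) with hT3
  set T : Finset ℤ := T1 ∪ T2 ∪ T3 with hT
  have hmemT1 : ∀ t : ℤ, t ∈ T1 ↔ (t = n - (i : ℤ) ∨ t = n ∨ t = n + (k : ℤ)) := by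
    intro t; simp [hT1]
  have hmemT2 : ∀ t : ℤ, t ∈ T2 ↔ ∃ m : ℕ, (1 ≤ m ∧ m < i) ∧ t = n - (m : ℤ) := by
    intro t; simp [hT2, Finset.mem_image, Finset.mem_Ico, eq_comm]
  have hmemT3 : ∀ t : ℤ, t ∈ T3 ↔ ∃ m : ℕ, (1 ≤ m ∧ m < k) ∧ t = n + (k : ℤ) - (m : ℤ) := by
    intro t; simp [hT3, Finset.mem_image, Finset.mem_Ico, eq_comm]
  have hT2_not_T1 : ∀ t ∈ T2, t ∉ T1 := by
    intro t ht
    rw [hmemT2] at ht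
    obtain ⟨m, ⟨hm1, hm2⟩, rfl⟩ := ht
    rw [hmemT1]
    push_neg
    refine ⟨?_, ?_, ?_⟩ <;> omega
  have hT3_not_T1 : ∀ t ∈ T3, t ∉ T1 := by
    intro t ht
    rw [hmemT3] at ht
    obtain ⟨m, ⟨hm1, hm2⟩, rfl⟩ := ht
    rw [hmemT1]
    push_neg
    refine ⟨?_, ?_, ?_⟩ <;> omega
  have hd12 : Disjoint T1 T2 := by
    rw [Finset.disjoint_right]
    intro t ht
    exact hT2_not_T1 t ht
  have hd13 : Disjoint (T1 ∪ T2) T3 := by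
    rw [Finset.disjoint_left]
    intro t ht ht3
    rw [hmemT3] at ht3
    obtain ⟨m, ⟨hm1, hm2⟩, rfl⟩ := ht3
    rcases Finset.mem_union.1 ht with h | h
    · rw [hmemT1] at h
      rcases h with h | h | h <;> omega
    · rw [hmemT2] at h
      obtain ⟨m', ⟨hm1', hm2'⟩, h⟩ := h
      omega
  -- cardinalities
  have hcT1 : T1.card = 3 := by
    rw [hT1]
    rw [Finset.card_insert_of_notMem (by simp; constructor <;> omega),
      Finset.card_insert_of_notMem (by simp; omega), Finset.card_singleton]
  have hinj2 : Function.Injective (fun m : ℕ => n - (m : ℤ)) := by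
    intro a b h
    simp only at h
    omega
  have hinj3 : Function.Injective (fun m : ℕ => n + (k : ℤ) - (m : ℤ)) := by
    intro a b h
    simp only at h
    omega
  have hcT2 : T2.card = i - 1 := by
    rw [hT2, Finset.card_image_of_injective _ hinj2, Nat.card_Ico]
  have hcT3 : T3.card = k - 1 := by
    rw [hT3, Finset.card_image_of_injective _ hinj3, Nat.card_Ico]
  -- the per-value events
  set E : (Fin L → Bool) → Set Ω := fun x =>
    ⋂ t ∈ T, b t ⁻¹' (if t ∈ T1 then ({x} : Set (Fin L → Bool)) else ({x} : Set (Fin L → Bool))ᶜ)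
    with hE
  have hE_mem : ∀ (x : Fin L → Bool) (ω : Ω), ω ∈ E x ↔
      (b (n - (i : ℤ)) ω = x ∧ b n ω = x ∧ b (n + (k : ℤ)) ω = x ∧
        (∀ m : ℕ, 1 ≤ m → m < i → b (n - (m : ℤ)) ω ≠ x) ∧
        (∀ m : ℕ, 1 ≤ m → m < k → b (n + (k : ℤ) - (m : ℤ)) ω ≠ x)) := by
    intro x ω
    rw [hE]
    simp only [Set.mem_iInter, Set.mem_preimage]
    constructor
    · intro h
      have h1 : b (n - (i : ℤ)) ω = x := by
        have := h (n - (i : ℤ)) (by rw [hT]; simp [hmemT1])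
        rw [if_pos (by rw [hmemT1]; tauto)] at this
        simpa using this
      have h2 : b n ω = x := by
        have := h n (by rw [hT]; simp [hmemT1])
        rw [if_pos (by rw [hmemT1]; tauto)] at this
        simpa using this
      have h3 : b (n + (k : ℤ)) ω = x := by
        have := h (n + (k : ℤ)) (by rw [hT]; simp [hmemT1])
        rw [if_pos (by rw [hmemT1]; tauto)] at this
        simpa using this
      refine ⟨h1, h2, h3, fun m hm1 hm2 => ?_, fun m hm1 hm2 => ?_⟩
      · have hmem : n - (m : ℤ) ∈ T2 := by rw [hmemT2]; exact ⟨m, ⟨hm1, hm2⟩, rfl⟩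
        have := h (n - (m : ℤ)) (by rw [hT]; simp [hmem])
        rw [if_neg (hT2_not_T1 _ hmem)] at this
        simpa using this
      · have hmem : n + (k : ℤ) - (m : ℤ) ∈ T3 := by rw [hmemT3]; exact ⟨m, ⟨hm1, hm2⟩, rfl⟩
        have := h (n + (k : ℤ) - (m : ℤ)) (by rw [hT]; simp [hmem])
        rw [if_neg (hT3_not_T1 _ hmem)] at this
        simpa using this
    · rintro ⟨h1, h2, h3, h4, h5⟩ t ht
      by_cases ht1 : t ∈ T1
      · rw [if_pos ht1]
        rw [hmemT1] at ht1
        rcases ht1 with rfl | rfl | rfl <;> simpa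
      · rw [if_neg ht1]
        rw [hT] at ht
        rcases Finset.mem_union.1 ht with ht' | ht'
        · rcases Finset.mem_union.1 ht' with ht'' | ht''
          · exact absurd ht'' ht1
          · rw [hmemT2] at ht''
            obtain ⟨m, ⟨hm1, hm2⟩, rfl⟩ := ht''
            simpa using h4 m hm1 hm2
        · rw [hmemT3] at ht'
          obtain ⟨m, ⟨hm1, hm2⟩, rfl⟩ := ht'
          simpa using h5 m hm1 hm2
  -- the event as a disjoint union
  have hEvent : {ω | A n ω = i} ∩ {ω | A (n + (k : ℤ)) ω = k} = ⋃ x : Fin L → Bool, E x := by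
    ext ω
    simp only [Set.mem_inter_iff, Set.mem_setOf_eq, Set.mem_iUnion,
      hAset n i hi ω, hAset (n + (k : ℤ)) k hk ω, hE_mem]
    have hkk : n + (k : ℤ) - (k : ℤ) = n := by ring
    rw [hkk]
    constructor
    · rintro ⟨⟨h1, h2⟩, ⟨h3, h4⟩⟩
      exact ⟨b n ω, by rw [h1], rfl, h3.symm, fun m hm1 hm2 => h2 m hm1 hm2,
        fun m hm1 hm2 hbm => h4 m hm1 hm2 (by rw [hbm, h3])⟩
    · rintro ⟨x, h1, h2, h3, h4, h5⟩
      refine ⟨⟨by rw [h1, h2], fun m hm1 hm2 hbm => h4 m hm1 hm2 (by rw [hbm, h2])⟩,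
        ⟨by rw [h2, h3], fun m hm1 hm2 hbm => h5 m hm1 hm2 (by rw [hbm, h3])⟩⟩
  -- measurability of the pieces
  have hpieces_meas : ∀ (x : Fin L → Bool) (t : ℤ),
      MeasurableSet (if t ∈ T1 then ({x} : Set (Fin L → Bool)) else ({x} : Set (Fin L → Bool))ᶜ) := by
    intro x t
    split
    · exact measurableSet_singleton x
    · exact (measurableSet_singleton x).compl
  have hE_measset : ∀ x : Fin L → Bool, MeasurableSet (E x) := by
    intro x
    rw [hE]
    exact Finset.measurableSet_biInter T (fun t _ => (hb t) (hpieces_meas x t))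
  -- measure of each piece by independence
  have hE_val : ∀ x : Fin L → Bool,
      μ (E x) = ENNReal.ofReal (w (r x) ^ 3 * (1 - w (r x)) ^ (i + k - 2)) := by
    intro x
    have hprod := hindep.meas_biInter (S := T)
      (s := fun t => b t ⁻¹' (if t ∈ T1 then ({x} : Set (Fin L → Bool)) else ({x} : Set (Fin L → Bool))ᶜ))
      (fun t _ => ⟨_, hpieces_meas x t, rfl⟩)
    rw [hE, hprod, hT, Finset.prod_union hd13, Finset.prod_union hd12]
    have e1 : ∏ t ∈ T1, μ (b t ⁻¹' (if t ∈ T1 then ({x} : Set (Fin L → Bool)) else ({x} : Set (Fin L → Bool))ᶜ))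
        = ENNReal.ofReal (w (r x)) ^ 3 := by
      rw [Finset.prod_congr rfl (fun t ht => by rw [if_pos ht, hx_meas]), Finset.prod_const, hcT1]
    have e2 : ∏ t ∈ T2, μ (b t ⁻¹' (if t ∈ T1 then ({x} : Set (Fin L → Bool)) else ({x} : Set (Fin L → Bool))ᶜ))
        = ENNReal.ofReal (1 - w (r x)) ^ (i - 1) := by
      rw [Finset.prod_congr rfl (fun t ht => by rw [if_neg (hT2_not_T1 t ht), hxc_meas]),
        Finset.prod_const, hcT2]
    have e3 : ∏ t ∈ T3, μ (b t ⁻¹' (if t ∈ T1 then ({x} : Set (Fin L → Bool)) else ({x} : Set (Fin L → Bool))ᶜ))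
        = ENNReal.ofReal (1 - w (r x)) ^ (k - 1) := by
      rw [Finset.prod_congr rfl (fun t ht => by rw [if_neg (hT3_not_T1 t ht), hxc_meas]),
        Finset.prod_const, hcT3]
    rw [e1, e2, e3]
    have hw1 : (0 : ℝ) ≤ w (r x) := (hw_pos _).le
    have hw2 : (0 : ℝ) ≤ 1 - w (r x) := by linarith [hw_le (r x)]
    rw [← ENNReal.ofReal_pow hw1, ← ENNReal.ofReal_pow hw2, ← ENNReal.ofReal_pow hw2,
      ← ENNReal.ofReal_mul (pow_nonneg hw1 _), ← ENNReal.ofReal_mul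
      (mul_nonneg (pow_nonneg hw1 _) (pow_nonneg hw2 _)), mul_assoc, ← pow_add,
      show i - 1 + (k - 1) = i + k - 2 by omega]
  -- pairwise disjointness
  have hdisj : Pairwise (Function.onFun Disjoint E) := by
    intro x y hxy
    rw [Function.onFun, Set.disjoint_left]
    intro ω hωx hωy
    have h1 := ((hE_mem x ω).1 hωx).2.1
    have h2 := ((hE_mem y ω).1 hωy).2.1
    exact hxy (h1 ▸ h2 ▸ rfl)
  -- put everything together
  rw [hEvent, measure_iUnion hdisj hE_measset, tsum_fintype]
  have hsum : ∀ x : Fin L → Bool, μ (E x) =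
      ENNReal.ofReal (w (r x) ^ 3 * (1 - w (r x)) ^ (i + k - 2)) := hE_val
  rw [Finset.sum_congr rfl (fun x _ => hsum x)]
  rw [← ENNReal.ofReal_sum_of_nonneg (fun x _ =>
    mul_nonneg (pow_nonneg (hw_pos _).le _)
      (pow_nonneg (by linarith [hw_le (r x)]) _))]
  congr 1
  -- counting: sum over x grouped by r x
  have hbij : ∑ x : Fin L → Bool, w (r x) ^ 3 * (1 - w (r x)) ^ (i + k - 2) =
      ∑ s ∈ (Finset.univ : Finset (Fin L)).powerset,
        w s.card ^ 3 * (1 - w s.card) ^ (i + k - 2) := by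
    refine Finset.sum_bij' (fun x _ => Finset.univ.filter fun j => x j = true)
      (fun s _ => fun j => decide (j ∈ s)) ?_ ?_ ?_ ?_ ?_
    · intro x _
      exact Finset.mem_powerset.2 (Finset.filter_subset _ _)
    · intro s _
      exact Finset.mem_univ _
    · intro x _
      funext j
      by_cases h : x j = true <;> simp [h]
    · intro s _
      ext j
      simp
    · intro x _
      rfl
  rw [hbij, Finset.sum_powerset]
  have hcard : (Finset.univ : Finset (Fin L)).card = L := by simp
  rw [hcard]
  refine Finset.sum_congr rfl fun j hj => ?_
  have : ∑ t ∈ Finset.powersetCard j (Finset.univ : Finset (Fin L)),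
      w t.card ^ 3 * (1 - w t.card) ^ (i + k - 2)
      = ∑ t ∈ Finset.powersetCard j (Finset.univ : Finset (Fin L)),
        w j ^ 3 * (1 - w j) ^ (i + k - 2) := by
    refine Finset.sum_congr rfl fun t ht => ?_
    rw [(Finset.mem_powersetCard.1 ht).2]
  rw [this, Finset.sum_const, Finset.card_powersetCard, hcard, nsmul_eq_mul, mul_assoc]
end

section
/- For every n ∈ ℤ and integers i ≥ 1, k ≥ 1 and j with k+1 ≤ j ≤ k+i−1, one has Pr[A_n = i, A_{n+k} = j] = Σ_{r1=0}^{L} Σ_{r2=0, r2≠r1}^{L} C(L,r1) C(L,r2) h(r1,r2) + Σ_{r=0}^{L} C(L,r)(C(L,r)−1) h(r,r), where h(r1,r2) = w_{r1}^2 w_{r2}^2 (1−w_{r1})^{i−j+k−1} (1−w_{r1}−w_{r2})^{j−k−1} (1−w_{r2})^{k−1}. -/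
open MeasureTheory ProbabilityTheory

open Finset

variable {L : ℕ}

def cnt (z : Fin L → Bool) : ℕ := (Finset.univ.filter fun i => z i = true).card

lemma cnt_le (z : Fin L → Bool) : cnt z ≤ L := by
  simpa [cnt] using (card_filter_le Finset.univ _).trans (by simp)

lemma card_cnt_eq (r : ℕ) :
    (Finset.univ.filter fun z : Fin L → Bool => cnt z = r).card = L.choose r := by
  have hc : L.choose r = (Finset.powersetCard r (Finset.univ : Finset (Fin L))).card := by
    rw [Finset.card_powersetCard, Finset.card_univ, Fintype.card_fin]
  rw [hc]
  refine Finset.card_bij' (fun z _ => Finset.univ.filter fun i => z i = true)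
      (fun s _ => fun i => decide (i ∈ s)) ?_ ?_ ?_ ?_
  · intro z hz
    rw [Finset.mem_filter] at hz
    rw [Finset.mem_powersetCard]
    exact ⟨Finset.subset_univ _, hz.2⟩
  · intro s hs
    simp only [Finset.mem_powersetCard] at hs
    rw [Finset.mem_filter]; refine ⟨Finset.mem_univ _, ?_⟩; unfold cnt
    rw [← hs.2]
    congr 1
    ext i; simp
  · intro z hz
    funext i; simp
  · intro s hs
    ext i; simp

lemma group_sum (f : ℕ → ℝ) :
    ∑ z : Fin L → Bool, f (cnt z) =
      ∑ r ∈ Finset.range (L + 1), (L.choose r : ℝ) * f r := by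
  rw [← Finset.sum_fiberwise_of_maps_to (g := cnt) (t := Finset.range (L+1))
    (fun z _ => by simpa [Nat.lt_succ_iff] using cnt_le z)]
  refine Finset.sum_congr rfl fun r _ => ?_
  rw [Finset.sum_congr rfl (fun z hz => by rw [(Finset.mem_filter.1 hz).2]),
    Finset.sum_const, card_cnt_eq, nsmul_eq_mul]

lemma pair_group (F : ℕ → ℕ → ℝ) :
    ∑ x : Fin L → Bool, ∑ y ∈ Finset.univ.erase x, F (cnt x) (cnt y)
    = (∑ r1 ∈ Finset.range (L+1), ∑ r2 ∈ (Finset.range (L+1)).erase r1,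
        (L.choose r1 : ℝ) * (L.choose r2 : ℝ) * F r1 r2)
      + ∑ r ∈ Finset.range (L+1), (L.choose r : ℝ) * ((L.choose r : ℝ) - 1) * F r r := by
  have h1 : ∀ x : Fin L → Bool, ∑ y ∈ Finset.univ.erase x, F (cnt x) (cnt y)
      = (∑ y : Fin L → Bool, F (cnt x) (cnt y)) - F (cnt x) (cnt x) :=
    fun x => Finset.sum_erase_eq_sub (Finset.mem_univ x)
  have h2 : ∀ r1 ∈ Finset.range (L+1), ∑ r2 ∈ (Finset.range (L+1)).erase r1,
      (L.choose r1 : ℝ) * (L.choose r2 : ℝ) * F r1 r2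
      = (∑ r2 ∈ Finset.range (L+1), (L.choose r1 : ℝ) * (L.choose r2 : ℝ) * F r1 r2)
        - (L.choose r1 : ℝ) * (L.choose r1 : ℝ) * F r1 r1 :=
    fun r1 hr1 => Finset.sum_erase_eq_sub hr1
  rw [Finset.sum_congr rfl h2]
  simp_rw [h1]
  rw [Finset.sum_sub_distrib, Finset.sum_sub_distrib,
    group_sum (f := fun r => F r r),
    group_sum (f := fun r1 => ∑ y : Fin L → Bool, F r1 (cnt y))]
  have h3 : ∀ r1, (L.choose r1 : ℝ) * ∑ y : Fin L → Bool, F r1 (cnt y)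
      = ∑ r2 ∈ Finset.range (L+1), (L.choose r1 : ℝ) * ((L.choose r2 : ℝ) * F r1 r2) := by
    intro r1
    rw [group_sum (f := fun r2 => F r1 r2), Finset.mul_sum]
  simp_rw [h3]
  ring_nf
  have h4 : ∑ x ∈ Finset.range (1+L), (L.choose x : ℝ) * ((L.choose x : ℝ) - 1) * F x x
      = ∑ x ∈ Finset.range (1+L),
          ((L.choose x : ℝ) * (L.choose x : ℝ) * F x x - (L.choose x : ℝ) * F x x) :=
    Finset.sum_congr rfl fun r _ => by ring
  rw [Finset.sum_add_distrib, Finset.sum_neg_distrib]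
  ring

section W
variable {p : ℝ} (hp0 : 0 < p) (hp1 : p < 1) {L : ℕ} (hL : 1 ≤ L)

def Wt (p : ℝ) (z : Fin L → Bool) : ℝ := p ^ cnt z * (1 - p) ^ (L - cnt z)

include hp0 hp1 in
lemma Wt_pos (z : Fin L → Bool) : 0 < Wt p z :=
  mul_pos (pow_pos hp0 _) (pow_pos (by linarith) _)

include hp0 hp1 hL in
lemma Wt_lt_one (z : Fin L → Bool) : Wt p z < 1 := by
  unfold Wt
  rcases Nat.eq_zero_or_pos (cnt z) with h | h
  · rw [h, pow_zero, one_mul]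
    exact pow_lt_one₀ (by linarith) (by linarith) (by omega)
  · calc p ^ cnt z * (1 - p) ^ (L - cnt z) ≤ p ^ cnt z * 1 := by
          apply mul_le_mul_of_nonneg_left (pow_le_one₀ (by linarith) (by linarith))
            (le_of_lt (pow_pos hp0 _))
      _ < 1 := by rw [mul_one]; exact pow_lt_one₀ (by linarith) hp1 (by omega)

lemma sum_Wt : ∑ z : Fin L → Bool, Wt p z = 1 := by
  unfold Wt
  rw [group_sum (f := fun r => p ^ r * (1 - p) ^ (L - r))]
  have hb := add_pow p (1 - p) L
  simp only [add_sub_cancel, one_pow] at hb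
  have h2 : ∑ r ∈ Finset.range (L + 1), (L.choose r : ℝ) * (p ^ r * (1 - p) ^ (L - r))
      = ∑ m ∈ Finset.range (L + 1), p ^ m * (1 - p) ^ (L - m) * (L.choose m : ℝ) :=
    Finset.sum_congr rfl fun r _ => by ring
  rw [h2, ← hb]

include hp0 hp1 in
lemma Wt_add_le_one {x y : Fin L → Bool} (hxy : x ≠ y) : Wt p x + Wt p y ≤ 1 := by
  have h1 : Wt p x + Wt p y = ∑ z ∈ ({x, y} : Finset (Fin L → Bool)), Wt p z :=
    (Finset.sum_pair hxy).symm
  rw [h1, ← sum_Wt (p := p) (L := L)]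
  exact Finset.sum_le_sum_of_subset_of_nonneg (Finset.subset_univ _)
    fun z _ _ => le_of_lt (Wt_pos hp0 hp1 z)

end W

section M
open MeasureTheory
variable {Ω : Type*} [MeasurableSpace Ω] {μ : Measure Ω} [IsProbabilityMeasure μ]
  {p : ℝ} (hp0 : 0 < p) (hp1 : p < 1) {L : ℕ} (hL : 1 ≤ L)
  {b : ℤ → Ω → (Fin L → Bool)} (hb : ∀ n, Measurable (b n))
  (hd : ∀ (t : ℤ) (x : Fin L → Bool), μ (b t ⁻¹' {x}) = ENNReal.ofReal (Wt p x))

include hp0 hp1 hb hd in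
lemma meas_compl_single (t : ℤ) (x : Fin L → Bool) :
    μ (b t ⁻¹' ({x}ᶜ)) = ENNReal.ofReal (1 - Wt p x) := by
  rw [Set.preimage_compl, measure_compl (hb t (measurableSet_singleton x)) (measure_ne_top μ _),
    measure_univ, hd t x, ENNReal.ofReal_sub _ (Wt_pos hp0 hp1 x).le, ENNReal.ofReal_one]

include hp0 hp1 hb hd in
lemma meas_compl_pair (t : ℤ) {x y : Fin L → Bool} (hxy : x ≠ y) :
    μ (b t ⁻¹' (({x} ∪ {y} : Set (Fin L → Bool))ᶜ)) = ENNReal.ofReal (1 - Wt p x - Wt p y) := by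
  rw [Set.preimage_compl,
    measure_compl (hb t ((measurableSet_singleton x).union (measurableSet_singleton y)))
      (measure_ne_top μ _), measure_univ]
  have hu : μ (b t ⁻¹' ({x} ∪ {y})) = ENNReal.ofReal (Wt p x + Wt p y) := by
    rw [Set.preimage_union,
      measure_union (by simp only [Set.disjoint_left, Set.mem_preimage, Set.mem_singleton_iff]; intro a ha hb2; exact hxy (ha ▸ hb2 ▸ rfl)
        : Disjoint (b t ⁻¹' {x}) (b t ⁻¹' {y})) (hb t (measurableSet_singleton y)),
      hd t x, hd t y, ENNReal.ofReal_add (Wt_pos hp0 hp1 x).le (Wt_pos hp0 hp1 y).le]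
  rw [hu, sub_sub, ← ENNReal.ofReal_one, ← ENNReal.ofReal_sub _ (by linarith [Wt_pos hp0 hp1 (L := L) x, Wt_pos hp0 hp1 (L := L) y])]

end M

lemma A_eq_iff {Ω : Type*} {L : ℕ} (b : ℤ → Ω → (Fin L → Bool)) (A : ℤ → Ω → ℕ)
    (hA : ∀ n ω, A n ω = sInf {m : ℕ | 1 ≤ m ∧ b (n - (m : ℤ)) ω = b n ω})
    (n : ℤ) (i : ℕ) (hi : 1 ≤ i) (ω : Ω) :
    A n ω = i ↔ (b (n - (i : ℤ)) ω = b n ω ∧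
      ∀ m : ℕ, 1 ≤ m → m < i → b (n - (m : ℤ)) ω ≠ b n ω) := by
  rw [hA]
  set S := {m : ℕ | 1 ≤ m ∧ b (n - (m : ℤ)) ω = b n ω} with hS
  constructor
  · intro h
    have hne : S.Nonempty := by
      by_contra hcon
      rw [Set.not_nonempty_iff_eq_empty] at hcon
      rw [hcon, Nat.sInf_empty] at h
      omega
    have hmem : i ∈ S := h ▸ Nat.sInf_mem hne
    refine ⟨hmem.2, fun m hm1 hmi hbm => ?_⟩
    exact Nat.notMem_of_lt_sInf (show m < sInf S by omega) ⟨hm1, hbm⟩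
  · rintro ⟨h1, h2⟩
    have hmem : i ∈ S := ⟨hi, h1⟩
    have hle : sInf S ≤ i := Nat.sInf_le hmem
    rcases Nat.lt_or_ge (sInf S) i with hlt | hge
    · have := Nat.sInf_mem (Set.nonempty_of_mem hmem)
      exact absurd this.2 (h2 _ this.1 hlt)
    · omega

def Sset {L : ℕ} (x y : Fin L → Bool) (n a c d : ℤ) (t : ℤ) : Set (Fin L → Bool) :=
  if t = d then {y} else if t = n then {x} else if t = a then {x}
  else if t = c then {y} else if n < t then {y}ᶜ
  else if c < t then ({x} ∪ {y} : Set (Fin L → Bool))ᶜ else {x}ᶜ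

lemma event_eq {Ω : Type*} {L : ℕ} (b : ℤ → Ω → (Fin L → Bool)) (A : ℤ → Ω → ℕ)
    (hA : ∀ n ω, A n ω = sInf {m : ℕ | 1 ≤ m ∧ b (n - (m : ℤ)) ω = b n ω})
    (n : ℤ) (i k j : ℕ) (hi : 1 ≤ i) (hk : 1 ≤ k) (hj1 : k + 1 ≤ j) (hj2 : j ≤ k + i - 1)
    {x y : Fin L → Bool} (hxy : x ≠ y) :
    {ω | A n ω = i} ∩ {ω | A (n + (k : ℤ)) ω = j} ∩ b n ⁻¹' {x} ∩ (b (n + (k : ℤ)) ⁻¹' {y})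
    = ⋂ t ∈ Finset.Icc (n - (i : ℤ)) (n + (k : ℤ)),
        b t ⁻¹' Sset x y n (n - (i : ℤ)) (n + (k : ℤ) - (j : ℤ)) (n + (k : ℤ)) t := by
  ext ω
  simp only [Set.mem_inter_iff, Set.mem_setOf_eq, Set.mem_preimage, Set.mem_singleton_iff,
    Set.mem_iInter, Finset.mem_Icc]
  rw [A_eq_iff b A hA n i hi ω, A_eq_iff b A hA (n + (k : ℤ)) j (by omega) ω]
  constructor
  · rintro ⟨⟨⟨⟨hbi, hA1⟩, hbj, hA2⟩, hx⟩, hy⟩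
    intro t ht
    unfold Sset
    split_ifs with h1 h2 h3 h4 h5 h6
    · rw [h1]; exact hy
    · rw [h2]; exact hx
    · rw [h3]; exact hbi.trans hx
    · rw [h4]; exact hbj.trans hy
    · -- n < t < n+k : b t ω ≠ y
      simp only [Set.mem_compl_iff, Set.mem_singleton_iff]
      intro hbt
      have hm : (((n + (k : ℤ) - t).toNat : ℤ)) = n + (k : ℤ) - t := by omega
      have := hA2 (n + (k : ℤ) - t).toNat (by omega) (by omega)
      rw [hm, show n + (k : ℤ) - (n + (k : ℤ) - t) = t from by ring] at this
      exact this (hbt.trans hy.symm)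
    · -- c < t < n : b t ω ∉ {x} ∪ {y}
      simp only [Set.mem_compl_iff, Set.mem_union, Set.mem_singleton_iff]
      rintro (hbt | hbt)
      · have hm : (((n - t).toNat : ℤ)) = n - t := by omega
        have := hA1 (n - t).toNat (by omega) (by omega)
        rw [hm, show n - (n - t) = t from by ring] at this
        exact this (hbt.trans hx.symm)
      · have hm : (((n + (k : ℤ) - t).toNat : ℤ)) = n + (k : ℤ) - t := by omega
        have := hA2 (n + (k : ℤ) - t).toNat (by omega) (by omega)
        rw [hm, show n + (k : ℤ) - (n + (k : ℤ) - t) = t from by ring] at this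
        exact this (hbt.trans hy.symm)
    · -- a < t < c : b t ω ≠ x
      simp only [Set.mem_compl_iff, Set.mem_singleton_iff]
      intro hbt
      have hm : (((n - t).toNat : ℤ)) = n - t := by omega
      have := hA1 (n - t).toNat (by omega) (by omega)
      rw [hm, show n - (n - t) = t from by ring] at this
      exact this (hbt.trans hx.symm)
  · intro h
    have hd : b (n + (k : ℤ)) ω = y := by
      have := h (n + (k : ℤ)) ⟨by omega, le_refl _⟩
      unfold Sset at this
      rwa [if_pos rfl] at this
    have hnx : b n ω = x := by
      have := h n ⟨by omega, by omega⟩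
      unfold Sset at this
      rwa [if_neg (by omega), if_pos rfl] at this
    have hax : b (n - (i : ℤ)) ω = x := by
      have := h (n - (i : ℤ)) ⟨le_refl _, by omega⟩
      unfold Sset at this
      rwa [if_neg (by omega), if_neg (by omega), if_pos rfl] at this
    have hcy : b (n + (k : ℤ) - (j : ℤ)) ω = y := by
      have := h (n + (k : ℤ) - (j : ℤ)) ⟨by omega, by omega⟩
      unfold Sset at this
      rwa [if_neg (by omega), if_neg (by omega), if_neg (by omega), if_pos rfl] at this
    refine ⟨⟨⟨⟨hax.trans hnx.symm, ?_⟩, hcy.trans hd.symm, ?_⟩, hnx⟩, hd⟩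
    · intro m hm1 hmi
      have ht := h (n - (m : ℤ)) ⟨by omega, by omega⟩
      unfold Sset at ht
      rw [if_neg (by omega), if_neg (by omega), if_neg (by omega)] at ht
      rcases lt_trichotomy (n - (m : ℤ)) (n + (k : ℤ) - (j : ℤ)) with hc | hc | hc
      · rw [if_neg (by omega), if_neg (by omega), if_neg (by omega)] at ht
        simp only [Set.mem_compl_iff, Set.mem_singleton_iff] at ht
        rw [hnx]; exact ht
      · rw [if_pos hc] at ht
        simp only [Set.mem_singleton_iff] at ht
        rw [hnx, ht]; exact fun hcon => hxy hcon.symm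
      · rw [if_neg (by omega), if_neg (by omega), if_pos (by omega)] at ht
        simp only [Set.mem_compl_iff, Set.mem_union, Set.mem_singleton_iff] at ht
        push_neg at ht
        rw [hnx]; exact ht.1
    · intro m hm1 hmj
      have ht := h (n + (k : ℤ) - (m : ℤ)) ⟨by omega, by omega⟩
      unfold Sset at ht
      rw [if_neg (by omega)] at ht
      rcases lt_trichotomy (n + (k : ℤ) - (m : ℤ)) n with hc | hc | hc
      · rw [if_neg (by omega), if_neg (by omega), if_neg (by omega), if_neg (by omega),
          if_pos (by omega)] at ht
        simp only [Set.mem_compl_iff, Set.mem_union, Set.mem_singleton_iff] at ht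
        push_neg at ht
        rw [hd]; exact ht.2
      · rw [if_pos hc] at ht
        simp only [Set.mem_singleton_iff] at ht
        rw [hd, ht]; exact hxy
      · rw [if_neg (by omega), if_neg (by omega), if_neg (by omega), if_pos hc] at ht
        simp only [Set.mem_compl_iff, Set.mem_singleton_iff] at ht
        rw [hd]; exact ht

section P
open MeasureTheory ProbabilityTheory
variable {Ω : Type*} [MeasurableSpace Ω] {μ : Measure Ω} [IsProbabilityMeasure μ]
  {p : ℝ} (hp0 : 0 < p) (hp1 : p < 1) {L : ℕ} (hL : 1 ≤ L)
  {b : ℤ → Ω → (Fin L → Bool)} (hb : ∀ n, Measurable (b n))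
  (hindep : iIndepFun b μ)
  (hd : ∀ (t : ℤ) (x : Fin L → Bool), μ (b t ⁻¹' {x}) = ENNReal.ofReal (Wt p x))

lemma Sset_measurable {x y : Fin L → Bool} (n a c d t : ℤ) :
    MeasurableSet (Sset x y n a c d t) := by
  unfold Sset
  split_ifs <;>
    first
      | exact measurableSet_singleton _
      | exact (measurableSet_singleton _).compl
      | exact ((measurableSet_singleton _).union (measurableSet_singleton _)).compl

include hp0 hp1 hL hb hindep hd in
lemma meas_prod (n : ℤ) (i k j : ℕ) (hi : 1 ≤ i) (hk : 1 ≤ k)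
    (hj1 : k + 1 ≤ j) (hj2 : j ≤ k + i - 1) {x y : Fin L → Bool} (hxy : x ≠ y) :
    μ (⋂ t ∈ Finset.Icc (n - (i : ℤ)) (n + (k : ℤ)),
        b t ⁻¹' Sset x y n (n - (i : ℤ)) (n + (k : ℤ) - (j : ℤ)) (n + (k : ℤ)) t)
    = ENNReal.ofReal ((Wt p x) ^ 2 * (Wt p y) ^ 2 * (1 - Wt p x) ^ (i + k - 1 - j) *
        (1 - Wt p x - Wt p y) ^ (j - k - 1) * (1 - Wt p y) ^ (k - 1)) := by
  set a : ℤ := n - (i : ℤ) with ha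
  set c : ℤ := n + (k : ℤ) - (j : ℤ) with hc
  set d : ℤ := n + (k : ℤ) with hdd
  have hmeas := hindep.meas_biInter (S := Finset.Icc a d)
    (s := fun t => b t ⁻¹' Sset x y n a c d t)
    (fun t _ => ⟨Sset x y n a c d t, Sset_measurable n a c d t, rfl⟩)
  rw [hmeas]
  -- decompose the interval
  have hdecomp : Finset.Icc a d =
      insert a (insert c (insert n (insert d
        (Finset.Ioo a c ∪ Finset.Ioo c n ∪ Finset.Ioo n d)))) := by
    ext t
    simp only [Finset.mem_Icc, Finset.mem_insert, Finset.mem_union, Finset.mem_Ioo]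
    omega
  rw [hdecomp]
  have hdisj2 : Disjoint (Finset.Ioo a c) (Finset.Ioo c n) := by
    rw [Finset.disjoint_left]
    intro t h1 h2
    simp only [Finset.mem_Ioo] at h1 h2
    omega
  have hdisj1 : Disjoint (Finset.Ioo a c ∪ Finset.Ioo c n) (Finset.Ioo n d) := by
    rw [Finset.disjoint_left]
    intro t h1 h2
    simp only [Finset.mem_union, Finset.mem_Ioo] at h1 h2
    omega
  rw [Finset.prod_insert (by simp only [Finset.mem_insert, Finset.mem_union, Finset.mem_Ioo]; omega),
    Finset.prod_insert (by simp only [Finset.mem_insert, Finset.mem_union, Finset.mem_Ioo]; omega),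
    Finset.prod_insert (by simp only [Finset.mem_insert, Finset.mem_union, Finset.mem_Ioo]; omega),
    Finset.prod_insert (by simp only [Finset.mem_union, Finset.mem_Ioo]; omega),
    Finset.prod_union hdisj1, Finset.prod_union hdisj2]
  -- the four special points
  have fa : μ (b a ⁻¹' Sset x y n a c d a) = ENNReal.ofReal (Wt p x) := by
    unfold Sset; rw [if_neg (by omega), if_neg (by omega), if_pos rfl]; exact hd a x
  have fc : μ (b c ⁻¹' Sset x y n a c d c) = ENNReal.ofReal (Wt p y) := by
    unfold Sset; rw [if_neg (by omega), if_neg (by omega), if_neg (by omega), if_pos rfl]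
    exact hd c y
  have fn : μ (b n ⁻¹' Sset x y n a c d n) = ENNReal.ofReal (Wt p x) := by
    unfold Sset; rw [if_neg (by omega), if_pos rfl]; exact hd n x
  have fd : μ (b d ⁻¹' Sset x y n a c d d) = ENNReal.ofReal (Wt p y) := by
    unfold Sset; rw [if_pos rfl]; exact hd d y
  -- the three intervals
  have fI1 : ∏ t ∈ Finset.Ioo a c, μ (b t ⁻¹' Sset x y n a c d t)
      = ENNReal.ofReal (1 - Wt p x) ^ (i + k - 1 - j) := by
    rw [Finset.prod_congr rfl (fun t ht => ?_), Finset.prod_const, Int.card_Ioo,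
      show (c - a - 1).toNat = i + k - 1 - j from by omega]
    have ht' := Finset.mem_Ioo.1 ht
    unfold Sset
    rw [if_neg (by omega), if_neg (by omega), if_neg (by omega), if_neg (by omega),
      if_neg (by omega), if_neg (by omega)]
    exact meas_compl_single hp0 hp1 hb hd t x
  have fI2 : ∏ t ∈ Finset.Ioo c n, μ (b t ⁻¹' Sset x y n a c d t)
      = ENNReal.ofReal (1 - Wt p x - Wt p y) ^ (j - k - 1) := by
    rw [Finset.prod_congr rfl (fun t ht => ?_), Finset.prod_const, Int.card_Ioo,
      show (n - c - 1).toNat = j - k - 1 from by omega]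
    have ht' := Finset.mem_Ioo.1 ht
    unfold Sset
    rw [if_neg (by omega), if_neg (by omega), if_neg (by omega), if_neg (by omega),
      if_neg (by omega), if_pos (by omega)]
    exact meas_compl_pair hp0 hp1 hb hd t hxy
  have fI3 : ∏ t ∈ Finset.Ioo n d, μ (b t ⁻¹' Sset x y n a c d t)
      = ENNReal.ofReal (1 - Wt p y) ^ (k - 1) := by
    rw [Finset.prod_congr rfl (fun t ht => ?_), Finset.prod_const, Int.card_Ioo,
      show (d - n - 1).toNat = k - 1 from by omega]
    have ht' := Finset.mem_Ioo.1 ht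
    unfold Sset
    rw [if_neg (by omega), if_neg (by omega), if_neg (by omega), if_neg (by omega),
      if_pos (by omega)]
    exact meas_compl_single hp0 hp1 hb hd t y
  rw [fa, fc, fn, fd, fI1, fI2, fI3]
  have w1 : (0:ℝ) ≤ Wt p x := (Wt_pos hp0 hp1 x).le
  have w2 : (0:ℝ) ≤ Wt p y := (Wt_pos hp0 hp1 y).le
  have w3 : (0:ℝ) ≤ 1 - Wt p x := by linarith [Wt_lt_one hp0 hp1 hL x]
  have w4 : (0:ℝ) ≤ 1 - Wt p y := by linarith [Wt_lt_one hp0 hp1 hL y]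
  have w5 : (0:ℝ) ≤ 1 - Wt p x - Wt p y := by linarith [Wt_add_le_one hp0 hp1 hxy]
  conv_rhs => rw [ENNReal.ofReal_mul (by positivity), ENNReal.ofReal_mul (by positivity),
    ENNReal.ofReal_mul (by positivity), ENNReal.ofReal_mul (by positivity),
    ENNReal.ofReal_pow w1, ENNReal.ofReal_pow w2, ENNReal.ofReal_pow w3,
    ENNReal.ofReal_pow w5, ENNReal.ofReal_pow w4]
  ring

end P

/-- joint probability of `A n = i` and `A (n+k) = j` for
`k+1 ≤ j ≤ k+i-1`, with
`h r1 r2 = w r1 ^2 · w r2 ^2 · (1-w r1)^(i-j+k-1) · (1-w r1-w r2)^(j-k-1) · (1-w r2)^(k-1)`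
(the exponent `i-j+k-1` is written as the natural number `i+k-1-j`). -/
theorem stmt4
    {Ω : Type*} [MeasurableSpace Ω] (μ : Measure Ω) [IsProbabilityMeasure μ]
    (p : ℝ) (hp0 : 0 < p) (hp1 : p < 1) (L : ℕ) (hL : 1 ≤ L)
    (b : ℤ → Ω → (Fin L → Bool)) (hb : ∀ n, Measurable (b n))
    (hindep : iIndepFun b μ)
    (hdist : ∀ (n : ℤ) (x : Fin L → Bool),
      μ (b n ⁻¹' {x}) =
        ENNReal.ofReal
          (p ^ (Finset.univ.filter fun i => x i = true).card *
            (1 - p) ^ (L - (Finset.univ.filter fun i => x i = true).card)))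
    (A : ℤ → Ω → ℕ)
    (hA : ∀ n ω, A n ω = sInf {m : ℕ | 1 ≤ m ∧ b (n - (m : ℤ)) ω = b n ω})
    (w : ℕ → ℝ) (hw : ∀ r, w r = p ^ r * (1 - p) ^ (L - r)) :
    ∀ (n : ℤ) (i k j : ℕ), 1 ≤ i → 1 ≤ k → k + 1 ≤ j → j ≤ k + i - 1 →
      ∀ h : ℕ → ℕ → ℝ,
        (∀ r1 r2, h r1 r2 =
          (w r1) ^ 2 * (w r2) ^ 2 * (1 - w r1) ^ (i + k - 1 - j) *
            (1 - w r1 - w r2) ^ (j - k - 1) * (1 - w r2) ^ (k - 1)) →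
      μ ({ω | A n ω = i} ∩ {ω | A (n + (k : ℤ)) ω = j}) =
        ENNReal.ofReal
          ((∑ r1 ∈ Finset.range (L + 1), ∑ r2 ∈ (Finset.range (L + 1)).erase r1,
              (L.choose r1 : ℝ) * (L.choose r2 : ℝ) * h r1 r2) +
           ∑ r ∈ Finset.range (L + 1),
              (L.choose r : ℝ) * ((L.choose r : ℝ) - 1) * h r r) := by
  intro n i k j hi hk hj1 hj2 h hh
  have hd : ∀ (t : ℤ) (x : Fin L → Bool), μ (b t ⁻¹' {x}) = ENNReal.ofReal (Wt p x) :=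
    fun t x => hdist t x
  set P : (Fin L → Bool) → (Fin L → Bool) → Set Ω := fun x y =>
    {ω | A n ω = i} ∩ {ω | A (n + (k : ℤ)) ω = j} ∩ b n ⁻¹' {x} ∩ (b (n + (k : ℤ)) ⁻¹' {y})
    with hP
  -- diagonal pieces are empty
  have hdiag : ∀ x, P x x = ∅ := by
    intro x
    ext ω
    simp only [hP, Set.mem_inter_iff, Set.mem_setOf_eq, Set.mem_preimage,
      Set.mem_singleton_iff, Set.mem_empty_iff_false, iff_false, not_and]
    intro h1 h4
    obtain ⟨⟨hA1, hA2⟩, h3⟩ := h1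
    rw [A_eq_iff b A hA (n + (k : ℤ)) j (by omega) ω] at hA2
    have := hA2.2 k hk (by omega)
    apply this
    rw [show n + (k : ℤ) - (k : ℤ) = n from by ring, h3, h4]
  -- the event as a union of pieces
  have hXE : {ω | A n ω = i} ∩ {ω | A (n + (k : ℤ)) ω = j}
      = ⋃ q ∈ (Finset.univ : Finset ((Fin L → Bool) × (Fin L → Bool))), P q.1 q.2 := by
    ext ω
    constructor
    · intro hω
      exact Set.mem_biUnion (Finset.mem_univ ((b n ω, b (n + (k : ℤ)) ω)))
        ⟨⟨hω, rfl⟩, rfl⟩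
    · intro hω
      obtain ⟨q, _, hq⟩ := Set.mem_iUnion₂.1 hω
      exact hq.1.1
  -- measurability of pieces
  have hPmeas : ∀ q ∈ (Finset.univ : Finset ((Fin L → Bool) × (Fin L → Bool))),
      MeasurableSet (P q.1 q.2) := by
    intro q _
    rcases eq_or_ne q.1 q.2 with hq | hq
    · rw [← hq, hdiag]; exact MeasurableSet.empty
    · rw [hP]
      simp only
      rw [event_eq b A hA n i k j hi hk hj1 hj2 hq]
      exact Finset.measurableSet_biInter _ fun t _ => hb t (Sset_measurable n _ _ _ t)
  -- pairwise disjointness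
  have hPdisj : (↑(Finset.univ : Finset ((Fin L → Bool) × (Fin L → Bool))) :
      Set ((Fin L → Bool) × (Fin L → Bool))).PairwiseDisjoint (fun q => P q.1 q.2) := by
    intro q _ q' _ hne
    refine Set.disjoint_left.2 fun ω hω hω' => hne ?_
    have e1 : b n ω = q.1 := hω.1.2
    have e2 : b (n + (k : ℤ)) ω = q.2 := hω.2
    have e1' : b n ω = q'.1 := hω'.1.2
    have e2' : b (n + (k : ℤ)) ω = q'.2 := hω'.2
    exact Prod.ext (e1 ▸ e1') (e2 ▸ e2')
  rw [hXE, measure_biUnion_finset hPdisj hPmeas, Fintype.sum_prod_type]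
  -- evaluate each nonzero piece
  have hterm : ∀ (x y : Fin L → Bool), x ≠ y →
      μ (P x y) = ENNReal.ofReal (h (cnt x) (cnt y)) := by
    intro x y hxy
    rw [hP]
    simp only
    rw [event_eq b A hA n i k j hi hk hj1 hj2 hxy,
      meas_prod hp0 hp1 hL hb hindep hd n i k j hi hk hj1 hj2 hxy]
    congr 1
    rw [hh (cnt x) (cnt y), hw (cnt x), hw (cnt y)]
    rfl
  have hnonneg : ∀ (x y : Fin L → Bool), x ≠ y → 0 ≤ h (cnt x) (cnt y) := by
    intro x y hxy
    rw [hh (cnt x) (cnt y), hw (cnt x), hw (cnt y)]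
    show (0:ℝ) ≤ Wt p x ^ 2 * Wt p y ^ 2 * (1 - Wt p x) ^ (i + k - 1 - j) *
      (1 - Wt p x - Wt p y) ^ (j - k - 1) * (1 - Wt p y) ^ (k - 1)
    have w1 := (Wt_pos hp0 hp1 (L := L) x).le
    have w2 := (Wt_pos hp0 hp1 (L := L) y).le
    have w3 : (0:ℝ) ≤ 1 - Wt p x := by linarith [Wt_lt_one hp0 hp1 hL x]
    have w4 : (0:ℝ) ≤ 1 - Wt p y := by linarith [Wt_lt_one hp0 hp1 hL y]
    have w5 : (0:ℝ) ≤ 1 - Wt p x - Wt p y := by linarith [Wt_add_le_one hp0 hp1 hxy]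
    positivity
  have hrow : ∀ x : Fin L → Bool, ∑ y : Fin L → Bool, μ (P x y)
      = ∑ y ∈ Finset.univ.erase x, μ (P x y) := by
    intro x
    rw [← Finset.add_sum_erase _ _ (Finset.mem_univ x), hdiag, measure_empty, zero_add]
  simp_rw [hrow]
  have hrow2 : ∀ x : Fin L → Bool, ∑ y ∈ Finset.univ.erase x, μ (P x y)
      = ENNReal.ofReal (∑ y ∈ Finset.univ.erase x, h (cnt x) (cnt y)) := by
    intro x
    rw [ENNReal.ofReal_sum_of_nonneg
      (fun y hy => hnonneg x y (Finset.ne_of_mem_erase hy).symm)]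
    exact Finset.sum_congr rfl fun y hy =>
      hterm x y (Finset.ne_of_mem_erase hy).symm
  simp_rw [hrow2]
  rw [← ENNReal.ofReal_sum_of_nonneg (fun x _ => Finset.sum_nonneg
    (fun y hy => hnonneg x y (Finset.ne_of_mem_erase hy).symm))]
  rw [pair_group h]
end

section
/- There exist real numbers C > 0 and δ with 0 < δ < 1 such that for all n ∈ ℤ and all integers k ≥ 1, i ≥ 1, j ≥ 1, |Pr[A_n = i, A_{n+k} = j] − Pr[A_n = i] · Pr[A_{n+k} = j]| < C · δ^{i+j}. -/
open MeasureTheory ProbabilityTheory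

lemma aux_indep {Ω : Type*} [MeasurableSpace Ω] (μ : Measure Ω) [IsProbabilityMeasure μ]
    (L : ℕ)
    (b : ℤ → Ω → (Fin L → Bool)) (hb : ∀ n, Measurable (b n))
    (hindep : iIndepFun b μ)
    (hunif : ∀ (n : ℤ) (x : Fin L → Bool), μ (b n ⁻¹' {x}) = ((2 : ENNReal) ^ L)⁻¹)
    (n : ℤ) (T : Finset ℤ) (hn : n ∉ T) :
    μ {ω | ∀ m ∈ T, b m ω ≠ b n ω} = (1 - ((2 : ENNReal) ^ L)⁻¹) ^ T.card := by
  classical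
  set p : ENNReal := ((2 : ENNReal) ^ L)⁻¹ with hp
  have hcomp : ∀ (m : ℤ) (x : Fin L → Bool), μ (b m ⁻¹' {x})ᶜ = 1 - p := by
    intro m x
    rw [measure_compl (hb m (measurableSet_singleton x)) (measure_ne_top μ _),
      measure_univ, hunif]
  have hset : {ω | ∀ m ∈ T, b m ω ≠ b n ω}
      = ⋃ x : (Fin L → Bool), ((b n ⁻¹' {x}) ∩ ⋂ m ∈ T, (b m ⁻¹' {x})ᶜ) := by
    ext ω
    simp only [Set.mem_setOf_eq, Set.mem_iUnion, Set.mem_inter_iff, Set.mem_preimage,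
      Set.mem_iInter, Set.mem_singleton_iff, Set.mem_compl_iff]
    constructor
    · intro h
      exact ⟨b n ω, rfl, fun m hm => h m hm⟩
    · rintro ⟨x, rfl, h⟩ m hm
      exact h m hm
  have hterm : ∀ x : (Fin L → Bool),
      μ ((b n ⁻¹' {x}) ∩ ⋂ m ∈ T, (b m ⁻¹' {x})ᶜ) = p * (1 - p) ^ T.card := by
    intro x
    set f : ℤ → Set Ω := fun i => if i = n then b n ⁻¹' {x} else (b i ⁻¹' {x})ᶜ with hf
    have heq : (b n ⁻¹' {x}) ∩ ⋂ m ∈ T, (b m ⁻¹' {x})ᶜ = ⋂ i ∈ insert n T, f i := by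
      rw [Finset.set_biInter_insert]
      congr 1
      · simp [hf]
      · exact Set.iInter₂_congr fun m hm => by
          rw [hf]
          simp only [if_neg (fun h : m = n => hn (h ▸ hm))]
    rw [heq, hindep.meas_biInter]
    · rw [Finset.prod_insert hn]
      have h1 : μ (f n) = p := by simp [hf, hunif]
      have h2 : ∀ m ∈ T, μ (f m) = 1 - p := by
        intro m hm
        have hmn : m ≠ n := fun h => hn (h ▸ hm)
        simp only [hf, if_neg hmn]
        exact hcomp m x
      rw [h1, Finset.prod_congr rfl h2, Finset.prod_const]
    · intro i _
      by_cases h : i = n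
      · subst h; exact ⟨{x}, measurableSet_singleton x, by simp [hf]⟩
      · exact ⟨{x}ᶜ, (measurableSet_singleton x).compl, by simp [hf, h]⟩
  rw [hset, measure_iUnion, tsum_fintype]
  · rw [Finset.sum_congr rfl fun x _ => hterm x, Finset.sum_const, Finset.card_univ]
    have hcard : Fintype.card (Fin L → Bool) = 2 ^ L := by simp
    rw [hcard, nsmul_eq_mul, ← mul_assoc]
    have : ((2 ^ L : ℕ) : ENNReal) * p = 1 := by
      rw [hp]
      push_cast
      exact ENNReal.mul_inv_cancel (by positivity) (by exact ENNReal.pow_ne_top ENNReal.ofNat_ne_top)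
    rw [this, one_mul]
  · intro x y hxy
    apply Set.disjoint_left.mpr
    rintro ω ⟨hx, -⟩ ⟨hy, -⟩
    exact hxy (hx.symm.trans hy)
  · intro x
    exact (hb n (measurableSet_singleton x)).inter
      (MeasurableSet.biInter T.countable_toSet fun m _ => (hb m (measurableSet_singleton x)).compl)

lemma aux_bound' {Ω : Type*} [MeasurableSpace Ω] (μ : Measure Ω) [IsProbabilityMeasure μ]
    (L : ℕ)
    (b : ℤ → Ω → (Fin L → Bool)) (hb : ∀ n, Measurable (b n))
    (hindep : iIndepFun b μ)
    (hunif : ∀ (n : ℤ) (x : Fin L → Bool), μ (b n ⁻¹' {x}) = ((2 : ENNReal) ^ L)⁻¹)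
    (A : ℤ → Ω → ℕ)
    (hA : ∀ n ω, A n ω = sInf {m : ℕ | 1 ≤ m ∧ b (n - (m : ℤ)) ω = b n ω})
    (n : ℤ) (i : ℕ) (hi : 1 ≤ i) :
    μ {ω | A n ω = i} ≤ (1 - ((2 : ENNReal) ^ L)⁻¹) ^ (i - 1) := by
  classical
  set T : Finset ℤ := (Finset.Icc 1 (i - 1)).image (fun m : ℕ => n - (m : ℤ)) with hT
  have hn : n ∉ T := by
    simp only [hT, Finset.mem_image, Finset.mem_Icc, not_exists]
    rintro m ⟨⟨hm1, -⟩, hm⟩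
    omega
  have hcard : T.card = i - 1 := by
    rw [hT, Finset.card_image_of_injective _ (fun m₁ m₂ h => by omega), Nat.card_Icc]
    omega
  have hsub : {ω | A n ω = i} ⊆ {ω | ∀ m ∈ T, b m ω ≠ b n ω} := by
    intro ω hω
    simp only [Set.mem_setOf_eq] at hω ⊢
    intro m' hm' heq
    rw [hT, Finset.mem_image] at hm'
    obtain ⟨m, hm, rfl⟩ := hm'
    rw [Finset.mem_Icc] at hm
    have h1 : m ∈ {m : ℕ | 1 ≤ m ∧ b (n - (m : ℤ)) ω = b n ω} := ⟨hm.1, heq⟩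
    have h2 := Nat.sInf_le h1
    rw [← hA n ω, hω] at h2
    omega
  calc μ {ω | A n ω = i} ≤ μ {ω | ∀ m ∈ T, b m ω ≠ b n ω} := measure_mono hsub
    _ = (1 - ((2 : ENNReal) ^ L)⁻¹) ^ T.card :=
        aux_indep μ L b hb hindep hunif n T hn
    _ = _ := by rw [hcard]

/-- There exist `C > 0` and `0 < δ < 1` such that for all `n : ℤ`
and integers `k ≥ 1`, `i ≥ 1`, `j ≥ 1`,
`|Pr[A n = i, A (n+k) = j] − Pr[A n = i] · Pr[A (n+k) = j]| < C · δ^(i+j)`. -/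
theorem stmt8
    {Ω : Type*} [MeasurableSpace Ω] (μ : Measure Ω) [IsProbabilityMeasure μ]
    (L : ℕ) (hL : 1 ≤ L)
    (b : ℤ → Ω → (Fin L → Bool)) (hb : ∀ n, Measurable (b n))
    (hindep : iIndepFun b μ)
    (hunif : ∀ (n : ℤ) (x : Fin L → Bool), μ (b n ⁻¹' {x}) = ((2 : ENNReal) ^ L)⁻¹)
    (A : ℤ → Ω → ℕ)
    (hA : ∀ n ω, A n ω = sInf {m : ℕ | 1 ≤ m ∧ b (n - (m : ℤ)) ω = b n ω}) :
    ∃ C : ℝ, 0 < C ∧ ∃ δ : ℝ, 0 < δ ∧ δ < 1 ∧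
      ∀ (n : ℤ) (k i j : ℕ), 1 ≤ k → 1 ≤ i → 1 ≤ j →
        |(μ ({ω | A n ω = i} ∩ {ω | A (n + (k : ℤ)) ω = j})).toReal -
            (μ {ω | A n ω = i}).toReal * (μ {ω | A (n + (k : ℤ)) ω = j}).toReal| <
          C * δ ^ (i + j) := by
  -- the real decay rate q = 1 - 2^{-L} ∈ [1/2, 1)
  set q : ℝ := 1 - ((2 : ℝ) ^ L)⁻¹ with hqdef
  have h2L : (1 : ℝ) ≤ (2 : ℝ) ^ L := one_le_pow₀ (by norm_num)
  have h2L2 : (2 : ℝ) ≤ (2 : ℝ) ^ L := by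
    calc (2:ℝ) = 2 ^ 1 := (pow_one 2).symm
    _ ≤ 2 ^ L := pow_le_pow_right₀ (by norm_num) hL
  have hqhalf : (1:ℝ)/2 ≤ q := by
    have h1 : ((2 : ℝ) ^ L)⁻¹ ≤ (1:ℝ)/2 := by
      rw [inv_le_comm₀ (by positivity) (by norm_num)]
      linarith
    simp only [hqdef]; linarith
  have hqpos : 0 < q := lt_of_lt_of_le (by norm_num) hqhalf
  have hq0 : 0 ≤ q := le_of_lt hqpos
  have hq1 : q < 1 := by
    have : 0 < ((2 : ℝ) ^ L)⁻¹ := by positivity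
    simp only [hqdef]; linarith
  -- toReal of ENNReal q-power
  have hqe : ((1 : ENNReal) - ((2 : ENNReal) ^ L)⁻¹).toReal = q := by
    rw [ENNReal.toReal_sub_of_le]
    · simp [hqdef, ENNReal.toReal_inv]
    · exact ENNReal.inv_le_one.mpr (one_le_pow₀ (by norm_num))
    · exact ENNReal.one_ne_top
  have hqetop : (1 : ENNReal) - ((2 : ENNReal) ^ L)⁻¹ ≠ ⊤ :=
    (tsub_le_self.trans_lt (lt_of_le_of_lt le_rfl ENNReal.one_lt_top)).ne
  -- real bound on individual probabilities
  have hbound : ∀ (n : ℤ) (i : ℕ), 1 ≤ i → (μ {ω | A n ω = i}).toReal ≤ q ^ (i - 1) := by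
    intro n i hi
    have h1 := aux_bound' μ L b hb hindep hunif A hA n i hi
    have h2 := ENNReal.toReal_mono (by exact ENNReal.pow_ne_top hqetop) h1
    rwa [ENNReal.toReal_pow, hqe] at h2
  -- set δ = √q
  set d : ℝ := Real.sqrt q with hd
  have hd0 : 0 < d := Real.sqrt_pos.mpr hqpos
  have hdsq : d ^ 2 = q := Real.sq_sqrt hq0
  have hd1 : d < 1 := by
    nlinarith [hdsq, hq1, hd0]
  refine ⟨2 / d ^ 2, by positivity, d, hd0, hd1, ?_⟩
  intro n k i j hk hi hj
  set a : ℝ := (μ ({ω | A n ω = i} ∩ {ω | A (n + (k : ℤ)) ω = j})).toReal with ha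
  set b1 : ℝ := (μ {ω | A n ω = i}).toReal with hb1d
  set b2 : ℝ := (μ {ω | A (n + (k : ℤ)) ω = j}).toReal with hb2d
  have ha0 : 0 ≤ a := ENNReal.toReal_nonneg
  have hb10 : 0 ≤ b1 := ENNReal.toReal_nonneg
  have hb20 : 0 ≤ b2 := ENNReal.toReal_nonneg
  have hb1 : b1 ≤ q ^ (i - 1) := hbound n i hi
  have hb2 : b2 ≤ q ^ (j - 1) := hbound (n + (k : ℤ)) j hj
  have ha1 : a ≤ b1 := ENNReal.toReal_mono (measure_ne_top μ _)
    (measure_mono Set.inter_subset_left)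
  have ha2 : a ≤ b2 := ENNReal.toReal_mono (measure_ne_top μ _)
    (measure_mono Set.inter_subset_right)
  set M : ℝ := d ^ (i + j - 2) with hM
  have hM0 : 0 < M := pow_pos hd0 _
  have hqM : q ^ (i + j - 2) = M ^ 2 := by
    rw [hM, ← hdsq, ← pow_mul, ← pow_mul, Nat.mul_comm]
  have hsum : (i - 1) + (j - 1) = i + j - 2 := by omega
  have hprodq : q ^ (i - 1) * q ^ (j - 1) = q ^ (i + j - 2) := by
    rw [← pow_add, hsum]
  have haM : a ≤ M := by
    have hsq : a ^ 2 ≤ M ^ 2 := by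
      calc a ^ 2 = a * a := sq a
        _ ≤ q ^ (i - 1) * q ^ (j - 1) :=
            mul_le_mul (ha1.trans hb1) (ha2.trans hb2) ha0 (pow_nonneg hq0 _)
        _ = M ^ 2 := by rw [hprodq, hqM]
    nlinarith
  have hbM : b1 * b2 ≤ M := by
    have h1 : b1 * b2 ≤ q ^ (i + j - 2) :=
      hprodq ▸ mul_le_mul hb1 hb2 hb20 (pow_nonneg hq0 _)
    have h2 : q ^ (i + j - 2) ≤ M := by
      rw [← hdsq, ← pow_mul, hM]
      exact pow_le_pow_of_le_one (le_of_lt hd0) (le_of_lt hd1) (by omega)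
    linarith
  have habs : |a - b1 * b2| ≤ M := by
    rw [abs_sub_le_iff]
    constructor <;> nlinarith [mul_nonneg hb10 hb20]
  have hpow : d ^ (i + j) = M * d ^ 2 := by
    rw [hM, ← pow_add]
    congr 1
    omega
  have hrhs : 2 / d ^ 2 * d ^ (i + j) = 2 * M := by
    rw [hpow]
    field_simp
  rw [hrhs]
  linarith
end

section
/- Each X_n = g(A_n) is square-integrable, and there exist real numbers C > 0 and δ with 0 < δ < 1 such that for every integer n ≥ 2, |Cov[X_1, X_n]| < C · δ^n. -/
open MeasureTheory ProbabilityTheory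

lemma meas_sInf_aux {Ω : Type*} [MeasurableSpace Ω] (P : ℕ → Ω → Prop)
    (h : ∀ m, MeasurableSet {ω | P m ω}) :
    Measurable (fun ω => sInf {m | 1 ≤ m ∧ P m ω}) := by
  apply measurable_to_countable'
  intro k
  have hms : ∀ m, MeasurableSet {ω | ¬ (1 ≤ m ∧ P m ω)} := by
    intro m
    have : {ω | ¬ (1 ≤ m ∧ P m ω)} = ({ω | P m ω} ∩ {ω | (1:ℕ) ≤ m})ᶜ := by
      ext ω; by_cases hm : 1 ≤ m <;> simp [hm]
    rw [this]
    exact (((h m).inter (MeasurableSet.const _))).compl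
  match k with
  | 0 =>
    have heq : (fun ω => sInf {m | 1 ≤ m ∧ P m ω}) ⁻¹' {0}
        = ⋂ m, {ω | ¬ (1 ≤ m ∧ P m ω)} := by
      ext ω
      simp only [Set.mem_preimage, Set.mem_singleton_iff, Set.mem_iInter, Set.mem_setOf_eq]
      constructor
      · intro h0 m hm
        rcases Nat.sInf_eq_zero.1 h0 with h1 | h2
        · exact absurd h1.1 (by norm_num)
        · have := Set.eq_empty_iff_forall_notMem.1 h2 m
          exact this hm
      · intro hall
        apply Nat.sInf_eq_zero.2
        right
        ext m; simp only [Set.mem_setOf_eq, Set.mem_empty_iff_false, iff_false]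
        exact hall m
    rw [heq]
    exact MeasurableSet.iInter fun m => hms m
  | (k+1) =>
    have heq : (fun ω => sInf {m | 1 ≤ m ∧ P m ω}) ⁻¹' {k+1}
        = ({ω | P (k+1) ω} ∩ ⋂ j ∈ Finset.range (k+1), {ω | ¬ (1 ≤ j ∧ P j ω)}) := by
      ext ω
      simp only [Set.mem_preimage, Set.mem_singleton_iff, Set.mem_inter_iff, Set.mem_setOf_eq,
        Set.mem_iInter, Finset.mem_range]
      constructor
      · intro h0
        have hne : {m | 1 ≤ m ∧ P m ω}.Nonempty := by
          by_contra hemp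
          rw [Set.not_nonempty_iff_eq_empty] at hemp
          rw [hemp] at h0; simp [Nat.sInf_empty] at h0
        have hmem := Nat.sInf_mem hne
        rw [h0] at hmem
        refine ⟨hmem.2, fun j hj hcon => ?_⟩
        have := Nat.sInf_le (show j ∈ {m | 1 ≤ m ∧ P m ω} from hcon)
        omega
      · rintro ⟨hp, hnone⟩
        have hmem : (k+1) ∈ {m | 1 ≤ m ∧ P m ω} := ⟨Nat.succ_le_succ (Nat.zero_le _), hp⟩
        have hle := Nat.sInf_le hmem
        have hge : k + 1 ≤ sInf {m | 1 ≤ m ∧ P m ω} := by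
          by_contra hlt
          push_neg at hlt
          have hne : {m | 1 ≤ m ∧ P m ω}.Nonempty := ⟨_, hmem⟩
          have := Nat.sInf_mem hne
          exact hnone _ hlt this
        omega
    rw [heq]
    exact (h (k+1)).inter (MeasurableSet.iInter fun j => MeasurableSet.iInter fun _ => hms j)

-- truncation lemma
lemma sInf_trunc (P : ℕ → Prop) (M : ℕ) :
    sInf {m | 1 ≤ m ∧ m ≤ M ∧ P m}
      = if sInf {m | 1 ≤ m ∧ P m} ≤ M then sInf {m | 1 ≤ m ∧ P m} else 0 := by
  set a := sInf {m | 1 ≤ m ∧ P m} with ha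
  by_cases hle : a ≤ M
  · rw [if_pos hle]
    rcases Nat.eq_zero_or_pos a with h0 | hpos
    · rw [h0]
      rcases Nat.sInf_eq_zero.1 h0 with h1 | h2
      · exact absurd h1.1 (by norm_num)
      · apply Nat.sInf_eq_zero.2
        right
        ext m
        simp only [Set.mem_setOf_eq, Set.mem_empty_iff_false, iff_false]
        rintro ⟨h1, _, h3⟩
        exact Set.eq_empty_iff_forall_notMem.1 h2 m ⟨h1, h3⟩
    · have hne : {m | 1 ≤ m ∧ P m}.Nonempty := by
        by_contra hemp
        rw [Set.not_nonempty_iff_eq_empty] at hemp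
        rw [ha, hemp, Nat.sInf_empty] at hpos; omega
      have hmem := Nat.sInf_mem hne
      have hmem' : a ∈ {m | 1 ≤ m ∧ m ≤ M ∧ P m} := ⟨hmem.1, hle, hmem.2⟩
      apply le_antisymm (Nat.sInf_le hmem')
      have := Nat.sInf_mem (⟨a, hmem'⟩ : {m | 1 ≤ m ∧ m ≤ M ∧ P m}.Nonempty)
      exact Nat.sInf_le ⟨this.1, this.2.2⟩
  · rw [if_neg hle]
    have : {m | 1 ≤ m ∧ m ≤ M ∧ P m} = ∅ := by
      ext m
      simp only [Set.mem_setOf_eq, Set.mem_empty_iff_false, iff_false]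
      rintro ⟨h1, h2, h3⟩
      have := Nat.sInf_le (show m ∈ {m | 1 ≤ m ∧ P m} from ⟨h1, h3⟩)
      omega
    rw [this, Nat.sInf_empty]

lemma key_meas {Ω : Type*} [MeasurableSpace Ω] (μ : Measure Ω) [IsProbabilityMeasure μ]
    (L : ℕ) (b : ℤ → Ω → (Fin L → Bool)) (hb : ∀ n, Measurable (b n))
    (hindep : iIndepFun b μ)
    (hunif : ∀ (n : ℤ) (x : Fin L → Bool), μ (b n ⁻¹' {x}) = ((2 : ENNReal) ^ L)⁻¹)
    (n : ℤ) (m : ℕ) :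
    μ (⋂ j ∈ Finset.Icc 1 m, {ω | b (n - (j:ℤ)) ω ≠ b n ω})
      = (1 - ((2 : ENNReal) ^ L)⁻¹) ^ m := by
  classical
  set pE : ENNReal := ((2 : ENNReal) ^ L)⁻¹ with hpE
  have hcompl : ∀ (i : ℤ) (x : Fin L → Bool), μ ((b i ⁻¹' {x})ᶜ) = 1 - pE := by
    intro i x
    rw [prob_compl_eq_one_sub (hb i (measurableSet_singleton x)), hunif]
  -- per x computation
  have hper : ∀ x : Fin L → Bool,
      μ (b n ⁻¹' {x} ∩ ⋂ j ∈ Finset.Icc 1 m, (b (n - (j:ℤ)) ⁻¹' {x})ᶜ)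
        = pE * (1 - pE) ^ m := by
    intro x
    set s : Finset ℤ := insert n ((Finset.Icc 1 m).image fun j : ℕ => n - (j:ℤ)) with hs
    set f : ℤ → Set Ω := fun i => if i = n then b n ⁻¹' {x} else (b i ⁻¹' {x})ᶜ with hf
    have hnotmem : n ∉ (Finset.Icc 1 m).image fun j : ℕ => n - (j:ℤ) := by
      simp only [Finset.mem_image, Finset.mem_Icc, not_exists]
      rintro j ⟨⟨hj1, _⟩, hj2⟩
      omega
    have hinj : Set.InjOn (fun j : ℕ => n - (j:ℤ)) (Finset.Icc 1 m) := by
      intro a _ c _ h; simp only at h; omega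
    have hmeas : ∀ i ∈ s, MeasurableSet[MeasurableSpace.comap (b i) inferInstance] (f i) := by
      intro i _
      by_cases hi : i = n
      · subst hi
        refine ⟨{x}, measurableSet_singleton x, ?_⟩
        simp [hf]
      · refine ⟨{x}ᶜ, (measurableSet_singleton x).compl, ?_⟩
        simp [hf, hi]
    have hindep' := hindep.meas_biInter (S := s) hmeas
    have hset : (⋂ i ∈ s, f i)
        = b n ⁻¹' {x} ∩ ⋂ j ∈ Finset.Icc 1 m, (b (n - (j:ℤ)) ⁻¹' {x})ᶜ := by
      rw [hs, Finset.set_biInter_insert]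
      congr 1
      · simp [hf]
      · rw [Finset.set_biInter_finset_image]
        apply Set.iInter₂_congr
        intro j hj
        have : n - (j:ℤ) ≠ n := by
          simp only [Finset.mem_Icc] at hj; omega
        simp [hf, this]
    have hprod : ∏ i ∈ s, μ (f i) = pE * (1 - pE) ^ m := by
      rw [hs, Finset.prod_insert hnotmem]
      congr 1
      · simp [hf, hunif]
      · rw [Finset.prod_image (fun a _ c _ h => by omega)]
        have : ∀ j ∈ Finset.Icc 1 m, μ (f (n - (j:ℤ))) = 1 - pE := by
          intro j hj
          have hne : n - (j:ℤ) ≠ n := by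
            simp only [Finset.mem_Icc] at hj; omega
          simp [hf, hne, hcompl]
        rw [Finset.prod_congr rfl this]
        simp [Nat.card_Icc]
    rw [← hset, hindep', hprod]
  -- decompose over x
  have hdecomp : (⋂ j ∈ Finset.Icc 1 m, {ω | b (n - (j:ℤ)) ω ≠ b n ω})
      = ⋃ x : Fin L → Bool,
          (b n ⁻¹' {x} ∩ ⋂ j ∈ Finset.Icc 1 m, (b (n - (j:ℤ)) ⁻¹' {x})ᶜ) := by
    ext ω
    simp only [Set.mem_iInter, Set.mem_setOf_eq, Set.mem_iUnion, Set.mem_inter_iff,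
      Set.mem_preimage, Set.mem_singleton_iff, Set.mem_compl_iff]
    constructor
    · intro h
      exact ⟨b n ω, rfl, fun j hj => h j hj⟩
    · rintro ⟨x, hx, h⟩ j hj
      rw [hx]
      exact h j hj
  rw [hdecomp]
  have hdisj : Pairwise (Function.onFun Disjoint fun x : Fin L → Bool =>
      (b n ⁻¹' {x} ∩ ⋂ j ∈ Finset.Icc 1 m, (b (n - (j:ℤ)) ⁻¹' {x})ᶜ)) := by
    intro x y hxy
    refine Set.disjoint_left.2 ?_
    rintro ω ⟨hx, _⟩ ⟨hy, _⟩
    exact hxy (hx.symm.trans hy)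
  have hmeas' : ∀ x : Fin L → Bool, MeasurableSet
      (b n ⁻¹' {x} ∩ ⋂ j ∈ Finset.Icc 1 m, (b (n - (j:ℤ)) ⁻¹' {x})ᶜ) := by
    intro x
    refine (hb n (measurableSet_singleton x)).inter ?_
    refine MeasurableSet.biInter (Finset.countable_toSet _) fun j _ => ?_
    exact (hb _ (measurableSet_singleton x)).compl
  rw [measure_iUnion hdisj hmeas']
  rw [tsum_eq_sum (s := Finset.univ) (by simp)]
  rw [Finset.sum_congr rfl fun x _ => hper x]
  rw [Finset.sum_const, Finset.card_univ]
  have hcard : Fintype.card (Fin L → Bool) = 2 ^ L := by simp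
  rw [hcard, nsmul_eq_mul]
  push_cast
  rw [← mul_assoc, hpE, ENNReal.mul_inv_cancel (by positivity) (by simp), one_mul]

lemma aux_lintegral {Ω : Type*} [MeasurableSpace Ω] (μ : Measure Ω) [IsProbabilityMeasure μ]
    (A : Ω → ℕ) (hA : Measurable A) (g : ℕ → ℝ)
    (hgk : ∀ k : ℕ, |g k| ≤ 2 * k)
    (s : ℝ) (hs0 : 0 < s) (hs1 : s < 1)
    (hk : ∀ k : ℕ, 1 ≤ k → μ (A ⁻¹' {k}) ≤ ENNReal.ofReal ((s * s) ^ (k - 1)))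
    (N : ℕ) (hN : 1 ≤ N) :
    ∫⁻ ω, ‖(if N ≤ A ω then g (A ω) else 0)‖₊ ^ 2 ∂μ
      ≤ ENNReal.ofReal (4 * (∑' k : ℕ, (k : ℝ) ^ 2 * s ^ (k - 1)) * s ^ (N - 1)) := by
  classical
  set S' : ℝ := ∑' k : ℕ, (k : ℝ) ^ 2 * s ^ (k - 1) with hS'
  have hsum1 : Summable (fun k : ℕ => (k : ℝ) ^ 2 * s ^ (k - 1)) := by
    have h1 : Summable (fun k : ℕ => (1 / s) * ((k : ℝ) ^ 2 * s ^ k)) := by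
      exact ((summable_pow_mul_geometric_of_norm_lt_one (R := ℝ) 2
        (by rw [Real.norm_eq_abs, abs_of_pos hs0]; exact hs1)).mul_left _)
    have heq : (fun k : ℕ => (1 / s) * ((k : ℝ) ^ 2 * s ^ k))
        = fun k : ℕ => (k : ℝ) ^ 2 * s ^ (k - 1) := by
      funext k
      match k with
      | 0 => simp
      | (k+1) =>
        simp only [Nat.add_sub_cancel, pow_succ]
        field_simp
    rwa [heq] at h1
  -- the real-valued dominating sequence
  set t : ℕ → ℝ := fun k => if N ≤ k ∧ 1 ≤ k then 4 * (k : ℝ) ^ 2 * (s * s) ^ (k - 1) else 0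
    with ht
  have ht_nonneg : ∀ k, 0 ≤ t k := by
    intro k; rw [ht]; dsimp only
    split
    · positivity
    · exact le_rfl
  have ht_le : ∀ k, t k ≤ 4 * s ^ (N - 1) * ((k : ℝ) ^ 2 * s ^ (k - 1)) := by
    intro k
    rw [ht]; dsimp only
    split
    case isTrue h =>
      have h2 : (s * s) ^ (k - 1) = s ^ (k - 1) * s ^ (k - 1) := by rw [mul_pow]
      have h3 : s ^ (k - 1) ≤ s ^ (N - 1) :=
        pow_le_pow_of_le_one hs0.le hs1.le (by omega)
      rw [h2]
      have : 4 * (k : ℝ) ^ 2 * (s ^ (k - 1) * s ^ (k - 1))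
          = (4 * (k:ℝ)^2 * s ^ (k-1)) * s ^ (k-1) := by ring
      rw [this]
      calc (4 * (k:ℝ)^2 * s ^ (k-1)) * s ^ (k-1)
          ≤ (4 * (k:ℝ)^2 * s ^ (k-1)) * s ^ (N-1) := by
            apply mul_le_mul_of_nonneg_left h3 (by positivity)
        _ = 4 * s ^ (N-1) * ((k:ℝ)^2 * s ^ (k-1)) := by ring
    case isFalse h => positivity
  have ht_sum : Summable t :=
    Summable.of_nonneg_of_le ht_nonneg ht_le ((hsum1.mul_left _))
  have htsum_le : (∑' k, t k) ≤ 4 * S' * s ^ (N - 1) := by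
    calc (∑' k, t k) ≤ ∑' k : ℕ, 4 * s ^ (N - 1) * ((k : ℝ) ^ 2 * s ^ (k - 1)) :=
          Summable.tsum_le_tsum ht_le ht_sum (hsum1.mul_left _)
      _ = 4 * s ^ (N - 1) * S' := by rw [tsum_mul_left]
      _ = 4 * S' * s ^ (N - 1) := by ring
  -- now the lintegral
  have hmap : ∫⁻ ω, ‖(if N ≤ A ω then g (A ω) else 0)‖₊ ^ 2 ∂μ
      = ∑' k : ℕ, ‖(if N ≤ k then g k else 0)‖₊ ^ 2 * μ (A ⁻¹' {k}) := by
    have h1 : ∫⁻ ω, ‖(if N ≤ A ω then g (A ω) else 0)‖₊ ^ 2 ∂μ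
        = ∫⁻ k, ‖(if N ≤ k then g k else 0)‖₊ ^ 2 ∂(μ.map A) := by
      rw [lintegral_map measurable_from_nat hA]
    rw [h1, lintegral_countable']
    congr 1
    funext k
    congr 1
    rw [Measure.map_apply hA (measurableSet_singleton k)]
  rw [hmap]
  calc (∑' k : ℕ, ‖(if N ≤ k then g k else 0)‖₊ ^ 2 * μ (A ⁻¹' {k}))
      ≤ ∑' k : ℕ, ENNReal.ofReal (t k) := by
        apply ENNReal.tsum_le_tsum
        intro k
        by_cases hNk : N ≤ k
        · have h1k : 1 ≤ k := le_trans hN hNk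
          rw [if_pos hNk, ht]
          simp only [hNk, h1k, and_self, if_true]
          calc (‖g k‖₊ : ENNReal) ^ 2 * μ (A ⁻¹' {k})
              ≤ ENNReal.ofReal ((2 * k) ^ 2) * ENNReal.ofReal ((s * s) ^ (k - 1)) := by
                apply mul_le_mul' ?_ (hk k h1k)
                rw [show ((‖g k‖₊ : ENNReal)) = ENNReal.ofReal |g k| from Real.enorm_eq_ofReal_abs _, ← ENNReal.ofReal_pow (abs_nonneg _)]
                exact ENNReal.ofReal_le_ofReal (by
                  apply pow_le_pow_left₀ (abs_nonneg _) (hgk k))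
            _ = ENNReal.ofReal (4 * (k : ℝ) ^ 2 * (s * s) ^ (k - 1)) := by
                rw [← ENNReal.ofReal_mul (by positivity)]
                congr 1
                ring
        · rw [if_neg hNk, ht]
          simp only [hNk, false_and, if_false]
          simp
    _ = ENNReal.ofReal (∑' k, t k) := (ENNReal.ofReal_tsum_of_nonneg ht_nonneg ht_sum).symm
    _ ≤ ENNReal.ofReal (4 * S' * s ^ (N - 1)) := ENNReal.ofReal_le_ofReal htsum_le

lemma aux_CS {Ω : Type*} [MeasurableSpace Ω] (μ : Measure Ω) [IsProbabilityMeasure μ]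
    (f h : Ω → ℝ) (hf : AEMeasurable f μ) (hh : AEMeasurable h μ)
    (Bf Bh : ℝ) (hBf : 0 ≤ Bf) (hBh : 0 ≤ Bh)
    (h1 : ∫⁻ ω, (‖f ω‖₊ : ENNReal) ^ 2 ∂μ ≤ ENNReal.ofReal Bf)
    (h2 : ∫⁻ ω, (‖h ω‖₊ : ENNReal) ^ 2 ∂μ ≤ ENNReal.ofReal Bh) :
    |∫ ω, f ω * h ω ∂μ| ≤ Real.sqrt Bf * Real.sqrt Bh := by
  have habs : |∫ ω, f ω * h ω ∂μ|
      ≤ (∫⁻ ω, ENNReal.ofReal ‖f ω * h ω‖ ∂μ).toReal := by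
    rw [← Real.norm_eq_abs]
    exact norm_integral_le_lintegral_norm _
  have hconj : Real.HolderConjugate 2 2 := Real.HolderConjugate.two_two
  have hmono : ∀ (u : Ω → ℝ) (Bu : ℝ), 0 ≤ Bu → (∫⁻ ω, (‖u ω‖₊ : ENNReal) ^ 2 ∂μ ≤ ENNReal.ofReal Bu)
      → (∫⁻ ω, (‖u ω‖₊ : ENNReal) ^ (2:ℝ) ∂μ) ^ (1/(2:ℝ)) ≤ ENNReal.ofReal (Real.sqrt Bu) := by
    intro u Bu hBu hu
    have heq : (∫⁻ ω, (‖u ω‖₊ : ENNReal) ^ (2:ℝ) ∂μ) = ∫⁻ ω, (‖u ω‖₊ : ENNReal) ^ 2 ∂μ := by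
      congr 1; funext ω
      rw [show ((2:ℝ)) = ((2:ℕ):ℝ) by norm_num, ENNReal.rpow_natCast]
    rw [heq]
    calc (∫⁻ ω, (‖u ω‖₊ : ENNReal) ^ 2 ∂μ) ^ (1/(2:ℝ))
        ≤ (ENNReal.ofReal Bu) ^ (1/(2:ℝ)) := ENNReal.rpow_le_rpow hu (by norm_num)
      _ = ENNReal.ofReal (Real.sqrt Bu) := by
          rw [ENNReal.ofReal_rpow_of_nonneg (by linarith : (0:ℝ) ≤ Bu) (by norm_num : (0:ℝ) ≤ 1/2)]
          congr 1
          rw [Real.sqrt_eq_rpow]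
  have hhold : (∫⁻ ω, ENNReal.ofReal ‖f ω * h ω‖ ∂μ)
      ≤ ENNReal.ofReal (Real.sqrt Bf * Real.sqrt Bh) := by
    have hrw : (∫⁻ ω, ENNReal.ofReal ‖f ω * h ω‖ ∂μ)
        = ∫⁻ ω, ((fun ω => (‖f ω‖₊ : ENNReal)) * fun ω => (‖h ω‖₊ : ENNReal)) ω ∂μ := by
      congr 1; funext ω
      simp only [Pi.mul_apply]
      rw [norm_mul, ENNReal.ofReal_mul (norm_nonneg _), ofReal_norm, ofReal_norm]; rfl
    rw [hrw]
    calc ∫⁻ ω, ((fun ω => (‖f ω‖₊ : ENNReal)) * fun ω => (‖h ω‖₊ : ENNReal)) ω ∂μ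
        ≤ (∫⁻ ω, (‖f ω‖₊ : ENNReal) ^ (2:ℝ) ∂μ) ^ (1/(2:ℝ))
          * (∫⁻ ω, (‖h ω‖₊ : ENNReal) ^ (2:ℝ) ∂μ) ^ (1/(2:ℝ)) :=
          ENNReal.lintegral_mul_le_Lp_mul_Lq μ hconj
            (hf.enorm) (hh.enorm)
      _ ≤ ENNReal.ofReal (Real.sqrt Bf) * ENNReal.ofReal (Real.sqrt Bh) :=
          mul_le_mul' (hmono f Bf hBf h1) (hmono h Bh hBh h2)
      _ = ENNReal.ofReal (Real.sqrt Bf * Real.sqrt Bh) :=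
          (ENNReal.ofReal_mul (Real.sqrt_nonneg _)).symm
  calc |∫ ω, f ω * h ω ∂μ| ≤ (∫⁻ ω, ENNReal.ofReal ‖f ω * h ω‖ ∂μ).toReal := habs
    _ ≤ Real.sqrt Bf * Real.sqrt Bh :=
        ENNReal.toReal_le_of_le_ofReal (by positivity) hhold

lemma aux_CS1 {Ω : Type*} [MeasurableSpace Ω] (μ : Measure Ω) [IsProbabilityMeasure μ]
    (f : Ω → ℝ) (hf : AEMeasurable f μ)
    (Bf : ℝ) (hBf : 0 ≤ Bf)
    (h1 : ∫⁻ ω, (‖f ω‖₊ : ENNReal) ^ 2 ∂μ ≤ ENNReal.ofReal Bf) :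
    |∫ ω, f ω ∂μ| ≤ Real.sqrt Bf := by
  have := aux_CS μ f (fun _ => 1) hf aemeasurable_const Bf 1 hBf one_pos.le h1
    (by simp)
  simpa using this

lemma aux_indepfun {Ω : Type*} [MeasurableSpace Ω] (μ : Measure Ω)
    (L : ℕ) (b : ℤ → Ω → (Fin L → Bool)) (hb : ∀ n, Measurable (b n))
    (hindep : iIndepFun b μ)
    (g : ℕ → ℝ) (base1 base2 : ℤ) (M1 M2 : ℕ)
    (hdisj : Disjoint (Finset.Icc (base1 - M1) base1) (Finset.Icc (base2 - M2) base2)) :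
    IndepFun (fun ω => g (sInf {m : ℕ | 1 ≤ m ∧ m ≤ M1 ∧ b (base1 - (m:ℤ)) ω = b base1 ω}))
             (fun ω => g (sInf {m : ℕ | 1 ≤ m ∧ m ≤ M2 ∧ b (base2 - (m:ℤ)) ω = b base2 ω})) μ := by
  classical
  set S := Finset.Icc (base1 - (M1:ℤ)) base1 with hS
  set T := Finset.Icc (base2 - (M2:ℤ)) base2 with hT
  have hIF := hindep.indepFun_finset S T hdisj hb
  set φ : ((i : S) → (Fin L → Bool)) → ℝ := fun v =>
    g (sInf {m : ℕ | 1 ≤ m ∧ m ≤ M1 ∧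
      ∀ (h1 : (base1 - (m:ℤ)) ∈ S) (h2 : base1 ∈ S), v ⟨_, h1⟩ = v ⟨_, h2⟩}) with hφ
  set ψ : ((i : T) → (Fin L → Bool)) → ℝ := fun v =>
    g (sInf {m : ℕ | 1 ≤ m ∧ m ≤ M2 ∧
      ∀ (h1 : (base2 - (m:ℤ)) ∈ T) (h2 : base2 ∈ T), v ⟨_, h1⟩ = v ⟨_, h2⟩}) with hψ
  have hcomp := hIF.comp (measurable_of_countable φ) (measurable_of_countable ψ)
  have he1 : (φ ∘ fun ω (i : S) => b i ω)
      = fun ω => g (sInf {m : ℕ | 1 ≤ m ∧ m ≤ M1 ∧ b (base1 - (m:ℤ)) ω = b base1 ω}) := by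
    funext ω
    simp only [Function.comp_apply, hφ]
    congr 2
    ext m
    simp only [Set.mem_setOf_eq, and_congr_right_iff]
    intro h1 h2
    have hm1 : (base1 - (m:ℤ)) ∈ S := by rw [hS]; simp only [Finset.mem_Icc]; omega
    have hm2 : base1 ∈ S := by rw [hS]; simp only [Finset.mem_Icc]; omega
    constructor
    · intro h; exact h hm1 hm2
    · intro h _ _; exact h
  have he2 : (ψ ∘ fun ω (i : T) => b i ω)
      = fun ω => g (sInf {m : ℕ | 1 ≤ m ∧ m ≤ M2 ∧ b (base2 - (m:ℤ)) ω = b base2 ω}) := by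
    funext ω
    simp only [Function.comp_apply, hψ]
    congr 2
    ext m
    simp only [Set.mem_setOf_eq, and_congr_right_iff]
    intro h1 h2
    have hm1 : (base2 - (m:ℤ)) ∈ T := by rw [hT]; simp only [Finset.mem_Icc]; omega
    have hm2 : base2 ∈ T := by rw [hT]; simp only [Finset.mem_Icc]; omega
    constructor
    · intro h; exact h hm1 hm2
    · intro h _ _; exact h
  rwa [he1, he2] at hcomp

lemma aux_mul_int {Ω : Type*} [MeasurableSpace Ω] {μ : Measure Ω} {f h : Ω → ℝ}
    (hf : MemLp f 2 μ) (hh : MemLp h 2 μ) : Integrable (fun ω => f ω * h ω) μ := by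
  have hmem : MemLp (f • h) 1 μ :=
    hh.smul hf (hpqr := ⟨by rw [inv_one, ENNReal.inv_two_add_inv_two]⟩)
  have : (f • h) = fun ω => f ω * h ω := by
    funext ω; simp [Pi.smul_apply', smul_eq_mul]
  rw [this] at hmem
  exact memLp_one_iff_integrable.mp hmem

theorem stmt10
    {Ω : Type*} [MeasurableSpace Ω] (μ : Measure Ω) [IsProbabilityMeasure μ]
    (L : ℕ) (hL : 1 ≤ L)
    (b : ℤ → Ω → (Fin L → Bool)) (hb : ∀ n, Measurable (b n))
    (hindep : iIndepFun b μ)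
    (hunif : ∀ (n : ℤ) (x : Fin L → Bool), μ (b n ⁻¹' {x}) = ((2 : ENNReal) ^ L)⁻¹)
    (A : ℤ → Ω → ℕ)
    (hA : ∀ n ω, A n ω = sInf {m : ℕ | 1 ≤ m ∧ b (n - (m : ℤ)) ω = b n ω})
    (g : ℕ → ℝ)
    (hg : ∀ i : ℕ, g i = (1 / Real.log 2) * ∑ j ∈ Finset.Icc 1 (i - 1), (1 : ℝ) / j)
    (X : ℤ → Ω → ℝ) (hX : ∀ n ω, X n ω = g (A n ω)) :
    (∀ n : ℤ, MemLp (X n) 2 μ) ∧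
    (∃ C : ℝ, 0 < C ∧ ∃ δ : ℝ, 0 < δ ∧ δ < 1 ∧
      ∀ n : ℕ, 2 ≤ n →
        |(∫ ω, X 1 ω * X (n : ℤ) ω ∂μ) -
            (∫ ω, X 1 ω ∂μ) * (∫ ω, X (n : ℤ) ω ∂μ)| < C * δ ^ n) := by
  classical
  -- basic real constants
  set pR : ℝ := (((2:ℝ)) ^ L)⁻¹ with hpR
  set q : ℝ := 1 - pR with hq
  have hpR_pos : 0 < pR := by positivity
  have hpR_le : pR ≤ 1/2 := by
    rw [hpR]
    rw [show ((1:ℝ)/2) = ((2:ℝ)^(1:ℕ))⁻¹ by norm_num]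
    apply inv_anti₀ (by norm_num)
    exact pow_le_pow_right₀ (by norm_num) hL
  have hq_pos : 0 < q := by rw [hq]; linarith
  have hq_lt : q < 1 := by rw [hq]; linarith
  set s : ℝ := Real.sqrt q with hs
  have hs_pos : 0 < s := Real.sqrt_pos.2 hq_pos
  have hs_lt : s < 1 := by
    rw [hs]
    have := Real.sqrt_lt_sqrt hq_pos.le hq_lt
    simpa using this
  have hss : s * s = q := Real.mul_self_sqrt hq_pos.le
  set δ : ℝ := Real.sqrt s with hδ
  have hδ_pos : 0 < δ := Real.sqrt_pos.2 hs_pos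
  have hδ_lt : δ < 1 := by
    rw [hδ]
    have := Real.sqrt_lt_sqrt hs_pos.le hs_lt
    simpa using this
  have hδδ : δ * δ = s := Real.mul_self_sqrt hs_pos.le
  set S' : ℝ := ∑' k : ℕ, (k : ℝ) ^ 2 * s ^ (k - 1) with hS'
  have hS'_nonneg : 0 ≤ S' := tsum_nonneg fun k => by positivity
  -- g facts
  have hg0 : g 0 = 0 := by simp [hg]
  have hgk : ∀ k : ℕ, |g k| ≤ 2 * k := by
    intro k
    have hlog : (1:ℝ)/2 < Real.log 2 := by
      have := Real.log_two_gt_d9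
      linarith
    have hsum_nonneg : 0 ≤ ∑ j ∈ Finset.Icc 1 (k - 1), (1:ℝ) / j := by
      apply Finset.sum_nonneg; intro j _; positivity
    have hsum_le : (∑ j ∈ Finset.Icc 1 (k - 1), (1:ℝ) / j) ≤ (k : ℝ) := by
      calc (∑ j ∈ Finset.Icc 1 (k - 1), (1:ℝ) / j)
          ≤ ∑ j ∈ Finset.Icc 1 (k - 1), (1:ℝ) := by
            apply Finset.sum_le_sum
            intro j hj
            simp only [Finset.mem_Icc] at hj
            have hj1 : (1:ℝ) ≤ (j:ℝ) := by exact_mod_cast hj.1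
            rw [div_le_one (by linarith)]
            exact hj1
        _ ≤ (k : ℝ) := by
            rw [Finset.sum_const, Nat.card_Icc]
            simp only [nsmul_eq_mul, mul_one]
            exact_mod_cast Nat.sub_le k 1
    have hgpos : 0 ≤ g k := by
      rw [hg]; positivity
    rw [abs_of_nonneg hgpos, hg]
    calc (1 / Real.log 2) * ∑ j ∈ Finset.Icc 1 (k - 1), (1:ℝ) / j
        ≤ 2 * ∑ j ∈ Finset.Icc 1 (k - 1), (1:ℝ) / j := by
          apply mul_le_mul_of_nonneg_right _ hsum_nonneg
          rw [div_le_iff₀ (by linarith)]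
          linarith
      _ ≤ 2 * k := by linarith
  -- measurability
  have hPm : ∀ i j : ℤ, MeasurableSet {ω | b i ω = b j ω} := by
    intro i j
    have : {ω | b i ω = b j ω} = ⋃ x : Fin L → Bool, (b i ⁻¹' {x} ∩ b j ⁻¹' {x}) := by
      ext ω
      simp only [Set.mem_setOf_eq, Set.mem_iUnion, Set.mem_inter_iff, Set.mem_preimage,
        Set.mem_singleton_iff]
      constructor
      · intro h; exact ⟨b j ω, h, rfl⟩
      · rintro ⟨x, h1, h2⟩; rw [h1, h2]
    rw [this]
    exact MeasurableSet.iUnion fun x =>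
      (hb i (measurableSet_singleton x)).inter (hb j (measurableSet_singleton x))
  have hAm : ∀ n : ℤ, Measurable (A n) := by
    intro n
    have : A n = fun ω => sInf {m : ℕ | 1 ≤ m ∧ b (n - (m:ℤ)) ω = b n ω} :=
      funext fun ω => hA n ω
    rw [this]
    exact meas_sInf_aux _ (fun m => hPm _ _)
  have hXm : ∀ n : ℤ, Measurable (X n) := by
    intro n
    have : X n = g ∘ (A n) := funext fun ω => hX n ω
    rw [this]
    exact measurable_from_nat.comp (hAm n)
  -- ENNReal conversion
  have hofq : (1 : ENNReal) - ((2 : ENNReal) ^ L)⁻¹ = ENNReal.ofReal q := by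
    have h2L : ((2 : ENNReal) ^ L) = ENNReal.ofReal ((2:ℝ) ^ L) := by
      rw [ENNReal.ofReal_pow (by norm_num)]
      norm_num
    rw [hq, hpR, ENNReal.ofReal_sub _ (by positivity), ENNReal.ofReal_one,
      ENNReal.ofReal_inv_of_pos (by positivity), ← h2L]
  -- tail bound for the distribution of A n
  have hk : ∀ (n : ℤ) (k : ℕ), 1 ≤ k →
      μ (A n ⁻¹' {k}) ≤ ENNReal.ofReal ((s * s) ^ (k - 1)) := by
    intro n k hk1
    have hsub : A n ⁻¹' {k} ⊆
        ⋂ j ∈ Finset.Icc 1 (k-1), {ω | b (n - (j:ℤ)) ω ≠ b n ω} := by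
      intro ω hω
      simp only [Set.mem_preimage, Set.mem_singleton_iff] at hω
      simp only [Set.mem_iInter, Set.mem_setOf_eq, Finset.mem_Icc]
      rintro j ⟨hj1, hj2⟩ hcon
      have hmem : j ∈ {m : ℕ | 1 ≤ m ∧ b (n - (m:ℤ)) ω = b n ω} := ⟨hj1, hcon⟩
      have := Nat.sInf_le hmem
      rw [← hA n ω, hω] at this
      omega
    calc μ (A n ⁻¹' {k}) ≤ μ (⋂ j ∈ Finset.Icc 1 (k-1), {ω | b (n - (j:ℤ)) ω ≠ b n ω}) :=
          measure_mono hsub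
      _ = (1 - ((2 : ENNReal) ^ L)⁻¹) ^ (k-1) := key_meas μ L b hb hindep hunif n (k-1)
      _ = ENNReal.ofReal ((s * s) ^ (k - 1)) := by
          rw [hofq, hss, ← ENNReal.ofReal_pow hq_pos.le]
  -- master second-moment bound
  have hN2 : ∀ (n : ℤ) (N : ℕ), 1 ≤ N →
      ∫⁻ ω, (‖(if N ≤ A n ω then g (A n ω) else 0)‖₊ : ENNReal) ^ 2 ∂μ
        ≤ ENNReal.ofReal (4 * S' * s ^ (N - 1)) :=
    fun n N hN => aux_lintegral μ (A n) (hAm n) g hgk s hs_pos hs_lt (hk n) N hN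
  -- the X n in if-form
  have hXform : ∀ (n : ℤ), X n = fun ω => if 1 ≤ A n ω then g (A n ω) else 0 := by
    intro n
    funext ω
    rw [hX]
    rcases Nat.eq_zero_or_pos (A n ω) with h0 | hpos
    · rw [h0, if_neg (by omega), hg0]
    · rw [if_pos (by omega : 1 ≤ A n ω)]
  have hbX : ∀ n : ℤ, ∫⁻ ω, (‖X n ω‖₊ : ENNReal) ^ 2 ∂μ ≤ ENNReal.ofReal (4 * S') := by
    intro n
    have h := hN2 n 1 le_rfl
    simp only [Nat.sub_self, pow_zero, mul_one] at h
    calc ∫⁻ ω, (‖X n ω‖₊ : ENNReal) ^ 2 ∂μ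
        = ∫⁻ ω, (‖(if 1 ≤ A n ω then g (A n ω) else 0)‖₊ : ENNReal) ^ 2 ∂μ := by
          rw [hXform n]
      _ ≤ ENNReal.ofReal (4 * S') := h
  -- Part 1 : MemLp
  have hMem : ∀ n : ℤ, MemLp (X n) 2 μ := by
    intro n
    refine ⟨(hXm n).aestronglyMeasurable, ?_⟩
    rw [eLpNorm_eq_lintegral_rpow_enorm_toReal (by norm_num) (by norm_num)]
    have htr : ((2:ENNReal)).toReal = (2:ℝ) := by norm_num
    rw [htr]
    have heq : ∫⁻ ω, ‖X n ω‖ₑ ^ (2:ℝ) ∂μ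
        = ∫⁻ ω, (‖X n ω‖₊ : ENNReal) ^ 2 ∂μ := by
      congr 1; funext ω
      rw [show ((2:ℝ)) = ((2:ℕ):ℝ) by norm_num, ENNReal.rpow_natCast]; rfl
    rw [heq]
    apply ENNReal.rpow_lt_top_of_nonneg (by norm_num)
    exact ne_of_lt (lt_of_le_of_lt (hbX n) ENNReal.ofReal_lt_top)
  refine ⟨hMem, ?_⟩
  -- Part 2 : covariance decay
  set a : ℝ := Real.sqrt (4 * S') with ha
  have ha_nonneg : 0 ≤ a := Real.sqrt_nonneg _
  have hsq : ∀ k : ℕ, Real.sqrt (4 * S' * s ^ k) = a * δ ^ k := by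
    intro k
    rw [Real.sqrt_mul (by positivity)]
    congr 1
    have hsk : s ^ k = (δ ^ k) * (δ ^ k) := by rw [← hδδ, mul_pow]
    rw [hsk, Real.sqrt_mul_self (pow_nonneg hδ_pos.le k)]
  have hnn : ∀ k : ℕ, 0 ≤ 4 * S' * s ^ k :=
    fun k => mul_nonneg (by linarith) (pow_nonneg hs_pos.le k)
  have h4S : (0:ℝ) ≤ 4 * S' := by linarith
  refine ⟨2 * a ^ 2 / δ ^ 2 + 1, by positivity, δ, hδ_pos, hδ_lt, ?_⟩
  intro n hn
  -- bound for each truncation level M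
  have hbnd : ∀ M : ℕ,
      |(∫ ω, X 1 ω * X (n : ℤ) ω ∂μ) - (∫ ω, X 1 ω ∂μ) * (∫ ω, X (n : ℤ) ω ∂μ)|
        ≤ 2 * a ^ 2 * δ ^ (n - 2) + 2 * a ^ 2 * δ ^ M := by
    intro M
    set W : Ω → ℝ := fun ω => g (sInf {m : ℕ | 1 ≤ m ∧ m ≤ M ∧ b (1 - (m:ℤ)) ω = b 1 ω})
      with hWdef
    set Z : Ω → ℝ := fun ω =>
        g (sInf {m : ℕ | 1 ≤ m ∧ m ≤ n - 2 ∧ b ((n:ℤ) - (m:ℤ)) ω = b (n:ℤ) ω}) with hZdef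
    set R : Ω → ℝ := fun ω => X 1 ω - W ω with hRdef
    set D : Ω → ℝ := fun ω => X (n:ℤ) ω - Z ω with hDdef
    have hW_eq : ∀ ω, W ω = if A 1 ω ≤ M then g (A 1 ω) else 0 := by
      intro ω
      have h1 : sInf {m : ℕ | 1 ≤ m ∧ m ≤ M ∧ b (1 - (m:ℤ)) ω = b 1 ω}
          = if A 1 ω ≤ M then A 1 ω else 0 := by
        have h2 := sInf_trunc (fun m : ℕ => b (1 - (m:ℤ)) ω = b 1 ω) M
        rw [show sInf {m : ℕ | 1 ≤ m ∧ (fun m : ℕ => b (1 - (m:ℤ)) ω = b 1 ω) m}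
            = A 1 ω from (hA 1 ω).symm] at h2
        exact h2
      rw [hWdef]
      simp only []
      rw [h1]
      split
      · rfl
      · exact hg0
    have hZ_eq : ∀ ω, Z ω = if A (n:ℤ) ω ≤ n - 2 then g (A (n:ℤ) ω) else 0 := by
      intro ω
      have h1 : sInf {m : ℕ | 1 ≤ m ∧ m ≤ n - 2 ∧ b ((n:ℤ) - (m:ℤ)) ω = b (n:ℤ) ω}
          = if A (n:ℤ) ω ≤ n - 2 then A (n:ℤ) ω else 0 := by
        have h2 := sInf_trunc (fun m : ℕ => b ((n:ℤ) - (m:ℤ)) ω = b (n:ℤ) ω) (n - 2)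
        rw [show sInf {m : ℕ | 1 ≤ m ∧ (fun m : ℕ => b ((n:ℤ) - (m:ℤ)) ω = b (n:ℤ) ω) m}
            = A (n:ℤ) ω from (hA (n:ℤ) ω).symm] at h2
        exact h2
      rw [hZdef]
      simp only []
      rw [h1]
      split
      · rfl
      · exact hg0
    have hR_eq : ∀ ω, R ω = if M + 1 ≤ A 1 ω then g (A 1 ω) else 0 := by
      intro ω
      rw [hRdef]
      simp only []
      rw [hX 1 ω, hW_eq ω]
      by_cases hc : A 1 ω ≤ M
      · rw [if_pos hc, if_neg (by omega)]; ring
      · rw [if_neg hc, if_pos (by omega)]; ring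
    have hD_eq : ∀ ω, D ω = if n - 1 ≤ A (n:ℤ) ω then g (A (n:ℤ) ω) else 0 := by
      intro ω
      rw [hDdef]
      simp only []
      rw [hX (n:ℤ) ω, hZ_eq ω]
      by_cases hc : A (n:ℤ) ω ≤ n - 2
      · rw [if_pos hc, if_neg (by omega)]; ring
      · rw [if_neg hc, if_pos (by omega)]; ring
    -- measurability
    have hWm : Measurable W := by
      have : W = (fun k : ℕ => if k ≤ M then g k else 0) ∘ A 1 := funext fun ω => hW_eq ω
      rw [this]; exact measurable_from_nat.comp (hAm 1)
    have hZm : Measurable Z := by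
      have : Z = (fun k : ℕ => if k ≤ n - 2 then g k else 0) ∘ A (n:ℤ) :=
        funext fun ω => hZ_eq ω
      rw [this]; exact measurable_from_nat.comp (hAm (n:ℤ))
    have hRm : Measurable R := (hXm 1).sub hWm
    have hDm : Measurable D := (hXm (n:ℤ)).sub hZm
    -- MemLp
    have habsW : ∀ ω, ‖W ω‖ ≤ ‖X 1 ω‖ := by
      intro ω
      rw [hW_eq ω, hX 1 ω]
      split
      · exact le_rfl
      · simpa using norm_nonneg _
    have habsZ : ∀ ω, ‖Z ω‖ ≤ ‖X (n:ℤ) ω‖ := by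
      intro ω
      rw [hZ_eq ω, hX (n:ℤ) ω]
      split
      · exact le_rfl
      · simpa using norm_nonneg _
    have hMW : MemLp W 2 μ :=
      (hMem 1).of_le hWm.aestronglyMeasurable (Filter.Eventually.of_forall habsW)
    have hMZ : MemLp Z 2 μ :=
      (hMem (n:ℤ)).of_le hZm.aestronglyMeasurable (Filter.Eventually.of_forall habsZ)
    have hMR : MemLp R 2 μ := (hMem 1).sub hMW
    have hMD : MemLp D 2 μ := (hMem (n:ℤ)).sub hMZ
    have iW : Integrable W μ := hMW.integrable one_le_two
    have iZ : Integrable Z μ := hMZ.integrable one_le_two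
    have iR : Integrable R μ := hMR.integrable one_le_two
    have iD : Integrable D μ := hMD.integrable one_le_two
    have intWZ : Integrable (fun ω => W ω * Z ω) μ := aux_mul_int hMW hMZ
    have intWD : Integrable (fun ω => W ω * D ω) μ := aux_mul_int hMW hMD
    have intRX : Integrable (fun ω => R ω * X (n:ℤ) ω) μ := aux_mul_int hMR (hMem (n:ℤ))
    -- independence of W and Z
    have hcast : ((n - 2 : ℕ) : ℤ) = (n : ℤ) - 2 := by
      push_cast [Nat.cast_sub (by omega : 2 ≤ n)]
      ring
    have hdisj : Disjoint (Finset.Icc ((1:ℤ) - (M:ℤ)) 1)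
        (Finset.Icc ((n:ℤ) - ((n - 2 : ℕ):ℤ)) (n:ℤ)) := by
      rw [Finset.disjoint_left]
      intro x hx1 hx2
      rw [Finset.mem_Icc] at hx1 hx2
      rw [hcast] at hx2
      omega
    have hind : IndepFun W Z μ :=
      aux_indepfun μ L b hb hindep g 1 (n:ℤ) M (n - 2) hdisj
    have hWZint : ∫ ω, W ω * Z ω ∂μ = (∫ ω, W ω ∂μ) * ∫ ω, Z ω ∂μ := by
      have := hind.integral_mul_eq_mul_integral iW.aestronglyMeasurable iZ.aestronglyMeasurable
      simpa [Pi.mul_apply] using this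
    -- integral decompositions
    have hptXX : (fun ω => X 1 ω * X (n:ℤ) ω)
        = fun ω => W ω * Z ω + (W ω * D ω + R ω * X (n:ℤ) ω) := by
      funext ω
      rw [hRdef, hDdef]
      simp only []
      ring
    have hsplitXX : ∫ ω, X 1 ω * X (n:ℤ) ω ∂μ
        = (∫ ω, W ω * Z ω ∂μ) + ((∫ ω, W ω * D ω ∂μ) + ∫ ω, R ω * X (n:ℤ) ω ∂μ) := by
      have intsum : Integrable (fun ω => W ω * D ω + R ω * X (n:ℤ) ω) μ := intWD.add intRX
      rw [hptXX, integral_add intWZ intsum, integral_add intWD intRX]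
    have hsplitX1 : ∫ ω, X 1 ω ∂μ = (∫ ω, W ω ∂μ) + ∫ ω, R ω ∂μ := by
      have h1 : (fun ω => X 1 ω) = fun ω => W ω + R ω := by
        funext ω; rw [hRdef]; simp only []; ring
      rw [h1, integral_add iW iR]
    have hsplitXn : ∫ ω, X (n:ℤ) ω ∂μ = (∫ ω, Z ω ∂μ) + ∫ ω, D ω ∂μ := by
      have h1 : (fun ω => X (n:ℤ) ω) = fun ω => Z ω + D ω := by
        funext ω; rw [hDdef]; simp only []; ring
      rw [h1, integral_add iZ iD]
    -- second moment bounds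
    have hbW2 : ∫⁻ ω, (‖W ω‖₊ : ENNReal) ^ 2 ∂μ ≤ ENNReal.ofReal (4 * S') := by
      refine le_trans (lintegral_mono fun ω => ?_) (hbX 1)
      gcongr
      exact_mod_cast habsW ω
    have hbR2 : ∫⁻ ω, (‖R ω‖₊ : ENNReal) ^ 2 ∂μ ≤ ENNReal.ofReal (4 * S' * s ^ M) := by
      have h := hN2 1 (M + 1) (by omega)
      simp only [Nat.add_sub_cancel] at h
      calc ∫⁻ ω, (‖R ω‖₊ : ENNReal) ^ 2 ∂μ
          = ∫⁻ ω, (‖(if M + 1 ≤ A 1 ω then g (A 1 ω) else 0)‖₊ : ENNReal) ^ 2 ∂μ := by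
            congr 1; funext ω; rw [hR_eq ω]
        _ ≤ ENNReal.ofReal (4 * S' * s ^ M) := h
    have hbD2 : ∫⁻ ω, (‖D ω‖₊ : ENNReal) ^ 2 ∂μ ≤ ENNReal.ofReal (4 * S' * s ^ (n - 2)) := by
      have h := hN2 (n:ℤ) (n - 1) (by omega)
      rw [show (n - 1 - 1 : ℕ) = n - 2 by omega] at h
      calc ∫⁻ ω, (‖D ω‖₊ : ENNReal) ^ 2 ∂μ
          = ∫⁻ ω, (‖(if n - 1 ≤ A (n:ℤ) ω then g (A (n:ℤ) ω) else 0)‖₊ : ENNReal) ^ 2 ∂μ := by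
            congr 1; funext ω; rw [hD_eq ω]
        _ ≤ ENNReal.ofReal (4 * S' * s ^ (n - 2)) := h
    -- Cauchy-Schwarz bounds
    have hWD : |∫ ω, W ω * D ω ∂μ| ≤ a * (a * δ ^ (n - 2)) := by
      have := aux_CS μ W D hWm.aemeasurable hDm.aemeasurable (4 * S') (4 * S' * s ^ (n - 2))
        h4S (hnn _) hbW2 hbD2
      rwa [hsq (n - 2)] at this
    have hRX : |∫ ω, R ω * X (n:ℤ) ω ∂μ| ≤ (a * δ ^ M) * a := by
      have := aux_CS μ R (X (n:ℤ)) hRm.aemeasurable (hXm (n:ℤ)).aemeasurable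
        (4 * S' * s ^ M) (4 * S') (hnn _) h4S hbR2 (hbX (n:ℤ))
      rwa [hsq M] at this
    have hw : |∫ ω, W ω ∂μ| ≤ a := aux_CS1 μ W hWm.aemeasurable (4 * S') h4S hbW2
    have hd : |∫ ω, D ω ∂μ| ≤ a * δ ^ (n - 2) := by
      have := aux_CS1 μ D hDm.aemeasurable (4 * S' * s ^ (n - 2)) (hnn _) hbD2
      rwa [hsq (n - 2)] at this
    have hr : |∫ ω, R ω ∂μ| ≤ a * δ ^ M := by
      have := aux_CS1 μ R hRm.aemeasurable (4 * S' * s ^ M) (hnn _) hbR2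
      rwa [hsq M] at this
    have hxn : |∫ ω, X (n:ℤ) ω ∂μ| ≤ a :=
      aux_CS1 μ (X (n:ℤ)) (hXm (n:ℤ)).aemeasurable (4 * S') h4S (hbX (n:ℤ))
    -- combine
    have hcoveq : (∫ ω, X 1 ω * X (n:ℤ) ω ∂μ)
          - (∫ ω, X 1 ω ∂μ) * (∫ ω, X (n:ℤ) ω ∂μ)
        = ((∫ ω, W ω * D ω ∂μ) - (∫ ω, W ω ∂μ) * (∫ ω, D ω ∂μ))
          + ((∫ ω, R ω * X (n:ℤ) ω ∂μ) - (∫ ω, R ω ∂μ) * (∫ ω, X (n:ℤ) ω ∂μ)) := by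
      rw [hsplitXX, hWZint, hsplitX1, hsplitXn]
      ring
    have e2 : |(∫ ω, W ω ∂μ) * (∫ ω, D ω ∂μ)| ≤ a * (a * δ ^ (n - 2)) := by
      rw [abs_mul]
      exact mul_le_mul hw hd (abs_nonneg _) ha_nonneg
    have e4 : |(∫ ω, R ω ∂μ) * (∫ ω, X (n:ℤ) ω ∂μ)| ≤ (a * δ ^ M) * a := by
      rw [abs_mul]
      exact mul_le_mul hr hxn (abs_nonneg _) (by positivity)
    calc |(∫ ω, X 1 ω * X (n:ℤ) ω ∂μ) - (∫ ω, X 1 ω ∂μ) * (∫ ω, X (n:ℤ) ω ∂μ)|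
        = |((∫ ω, W ω * D ω ∂μ) - (∫ ω, W ω ∂μ) * (∫ ω, D ω ∂μ))
            + ((∫ ω, R ω * X (n:ℤ) ω ∂μ) - (∫ ω, R ω ∂μ) * (∫ ω, X (n:ℤ) ω ∂μ))| := by
          rw [hcoveq]
      _ ≤ |(∫ ω, W ω * D ω ∂μ) - (∫ ω, W ω ∂μ) * (∫ ω, D ω ∂μ)|
            + |(∫ ω, R ω * X (n:ℤ) ω ∂μ) - (∫ ω, R ω ∂μ) * (∫ ω, X (n:ℤ) ω ∂μ)| :=
          abs_add_le _ _
      _ ≤ (|∫ ω, W ω * D ω ∂μ| + |(∫ ω, W ω ∂μ) * (∫ ω, D ω ∂μ)|)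
            + (|∫ ω, R ω * X (n:ℤ) ω ∂μ| + |(∫ ω, R ω ∂μ) * (∫ ω, X (n:ℤ) ω ∂μ)|) :=
          add_le_add (abs_sub _ _) (abs_sub _ _)
      _ ≤ (a * (a * δ ^ (n - 2)) + a * (a * δ ^ (n - 2)))
            + ((a * δ ^ M) * a + (a * δ ^ M) * a) :=
          add_le_add (add_le_add hWD e2) (add_le_add hRX e4)
      _ = 2 * a ^ 2 * δ ^ (n - 2) + 2 * a ^ 2 * δ ^ M := by ring
  -- take M → ∞
  have htendsto : Filter.Tendsto (fun M : ℕ => 2 * a ^ 2 * δ ^ (n - 2) + 2 * a ^ 2 * δ ^ M)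
      Filter.atTop (nhds (2 * a ^ 2 * δ ^ (n - 2))) := by
    have h1 : Filter.Tendsto (fun M : ℕ => 2 * a ^ 2 * δ ^ M) Filter.atTop (nhds 0) := by
      have := (tendsto_pow_atTop_nhds_zero_of_lt_one (by linarith) hδ_lt).const_mul
        (2 * a ^ 2)
      simpa using this
    have := Filter.Tendsto.add (tendsto_const_nhds
      (x := 2 * a ^ 2 * δ ^ (n - 2)) (f := Filter.atTop (α := ℕ))) h1
    simpa using this
  have hle : |(∫ ω, X 1 ω * X (n : ℤ) ω ∂μ) - (∫ ω, X 1 ω ∂μ) * (∫ ω, X (n : ℤ) ω ∂μ)|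
      ≤ 2 * a ^ 2 * δ ^ (n - 2) := ge_of_tendsto' htendsto hbnd
  -- conclude
  have hδn2 : δ ^ (n - 2) * δ ^ 2 = δ ^ n := by
    rw [← pow_add]
    congr 1
    omega
  have hCδ : (2 * a ^ 2 / δ ^ 2 + 1) * δ ^ n = 2 * a ^ 2 * δ ^ (n - 2) + δ ^ n := by
    have hδ2 : (δ:ℝ) ^ 2 ≠ 0 := by positivity
    rw [← hδn2]
    field_simp
  rw [hCδ]
  have : (0:ℝ) < δ ^ n := pow_pos hδ_pos n
  linarith
end

section
/- For every integer Q ≥ 1 and every integer K ≥ 1, the random variable D_{Q,K} = (1/√K) · Σ_{n=1}^{K} (X_n − X_n^{(Q)}) has finite mean and finite variance; moreover, for each fixed Q, E[D_{Q,K}] → 0 and Var[D_{Q,K}] → 0 as K → ∞. -/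
open MeasureTheory ProbabilityTheory Filter

open scoped ENNReal NNReal

lemma sum_odds (m : ℕ) : ∑ j ∈ Finset.range m, (2*j+1) = m^2 := by
  induction m with
  | zero => simp
  | succ k ih => rw [Finset.sum_range_succ, ih]; ring

lemma lintegral_nat_layer {Ω : Type*} [MeasurableSpace Ω] (μ : Measure Ω)
    (f : Ω → ℕ) (hf : Measurable f) (c : ℕ → ℝ≥0∞) (F : ℕ → ℝ≥0∞)
    (hF : ∀ m : ℕ, F m = ∑ j ∈ Finset.range m, c j) :
    ∫⁻ ω, F (f ω) ∂μ = ∑' j : ℕ, c j * μ {ω | j < f ω} := by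
  have hms : ∀ j : ℕ, MeasurableSet {ω | j < f ω} := fun j =>
    hf (MeasurableSet.of_discrete)
  have hpt : ∀ ω, F (f ω)
      = ∑' j : ℕ, Set.indicator {ω | j < f ω} (fun _ => c j) ω := by
    intro ω
    have hsupp : ∀ j ∉ Finset.range (f ω),
        Set.indicator {ω | j < f ω} (fun _ => c j) ω = 0 := by
      intro j hj
      refine Set.indicator_of_notMem ?_ _
      simp only [Set.mem_setOf_eq]
      simpa using hj
    rw [tsum_eq_sum hsupp, hF]
    refine Finset.sum_congr rfl fun j hj => ?_
    have hm : ω ∈ {ω' | j < f ω'} := Finset.mem_range.mp hj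
    exact (Set.indicator_of_mem hm (fun _ => c j)).symm
  rw [lintegral_congr hpt,
    lintegral_tsum (fun j => ((measurable_const.indicator (hms j)).aemeasurable))]
  refine tsum_congr fun j => ?_
  rw [lintegral_indicator_const (hms j)]
lemma measA {Ω : Type*} [MeasurableSpace Ω] {L : ℕ}
    (b : ℤ → Ω → (Fin L → Bool)) (hb : ∀ n, Measurable (b n)) (n : ℤ) :
    Measurable (fun ω => sInf {m : ℕ | 1 ≤ m ∧ b (n - (m : ℤ)) ω = b n ω}) := by
  have heq : ∀ i j : ℤ, MeasurableSet {ω | b i ω = b j ω} := fun i j =>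
    measurableSet_eq_fun (hb i) (hb j)
  apply measurable_to_countable'
  intro k
  match k with
  | 0 =>
    have hset : (fun ω => sInf {m : ℕ | 1 ≤ m ∧ b (n - (m : ℤ)) ω = b n ω}) ⁻¹' {0}
        = ⋂ j : ℕ, {ω | ¬(1 ≤ j ∧ b (n - (j : ℤ)) ω = b n ω)} := by
      ext ω
      simp only [Set.mem_preimage, Set.mem_singleton_iff, Set.mem_iInter, Set.mem_setOf_eq]
      constructor
      · intro h j hj
        rcases Nat.sInf_eq_zero.mp h with h0 | hemp
        · exact absurd h0.1 (by omega)
        · have : j ∈ {m : ℕ | 1 ≤ m ∧ b (n - (m : ℤ)) ω = b n ω} := hj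
          rw [hemp] at this
          exact this
      · intro h
        refine Nat.sInf_eq_zero.mpr (Or.inr ?_)
        ext j
        simp only [Set.mem_setOf_eq, Set.mem_empty_iff_false, iff_false]
        exact h j
    rw [hset]
    refine MeasurableSet.iInter fun j => ?_
    by_cases h1 : 1 ≤ j
    · have : {ω | ¬(1 ≤ j ∧ b (n - (j : ℤ)) ω = b n ω)}
          = {ω | b (n - (j : ℤ)) ω = b n ω}ᶜ := by
        ext ω; simp [h1]
      rw [this]
      exact (heq _ _).compl
    · have : {ω | ¬(1 ≤ j ∧ b (n - (j : ℤ)) ω = b n ω)} = Set.univ := by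
        ext ω; simp [h1]
      rw [this]
      exact MeasurableSet.univ
  | (k + 1) =>
    have hset : (fun ω => sInf {m : ℕ | 1 ≤ m ∧ b (n - (m : ℤ)) ω = b n ω}) ⁻¹' {k + 1}
        = {ω | b (n - ((k:ℤ) + 1)) ω = b n ω} ∩
          ⋂ j ∈ Finset.Icc 1 k, {ω | b (n - (j : ℤ)) ω = b n ω}ᶜ := by
      ext ω
      simp only [Set.mem_preimage, Set.mem_singleton_iff, Set.mem_inter_iff,
        Set.mem_iInter, Set.mem_setOf_eq, Set.mem_compl_iff, Finset.mem_Icc]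
      set S : Set ℕ := {m : ℕ | 1 ≤ m ∧ b (n - (m : ℤ)) ω = b n ω} with hS
      constructor
      · intro h
        have hne : S.Nonempty := by
          rcases Set.eq_empty_or_nonempty S with he | hne
          · rw [he] at h; simp [Nat.sInf_empty] at h
          · exact hne
        have hmem := Nat.sInf_mem hne
        rw [h] at hmem
        refine ⟨by exact_mod_cast hmem.2, ?_⟩
        intro j hj heqj
        have : j ∈ S := ⟨hj.1, heqj⟩
        have := Nat.sInf_le this
        omega
      · rintro ⟨hk1, hj⟩
        have hmem : k + 1 ∈ S := ⟨by omega, by exact_mod_cast hk1⟩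
        have hle : sInf S ≤ k + 1 := Nat.sInf_le hmem
        have hin := Nat.sInf_mem ⟨k + 1, hmem⟩
        rcases Nat.lt_or_ge (sInf S) (k + 1) with hlt | hge
        · exfalso
          have h1 : 1 ≤ sInf S := hin.1
          exact hj (sInf S) ⟨h1, by omega⟩ hin.2
        · omega
    rw [hset]
    refine (heq _ _).inter ?_
    refine MeasurableSet.biInter (Finset.Icc 1 k).countable_toSet fun j _ => (heq _ _).compl
lemma tailprob {Ω : Type*} [MeasurableSpace Ω] (μ : Measure Ω) [IsProbabilityMeasure μ]
    {L : ℕ}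
    (b : ℤ → Ω → (Fin L → Bool)) (hb : ∀ n, Measurable (b n))
    (hindep : iIndepFun b μ)
    (hunif : ∀ (n : ℤ) (x : Fin L → Bool), μ (b n ⁻¹' {x}) = ((2 : ENNReal) ^ L)⁻¹)
    (n : ℤ) (m : ℕ) :
    μ {ω | ∀ j : ℕ, 1 ≤ j → j ≤ m → b (n - (j : ℤ)) ω ≠ b n ω}
      ≤ (1 - ((2 : ℝ≥0∞) ^ L)⁻¹) ^ m := by
  classical
  set p : ℝ≥0∞ := ((2 : ℝ≥0∞) ^ L)⁻¹ with hp
  set F : (Fin L → Bool) → Set Ω := fun x =>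
    b n ⁻¹' {x} ∩ ⋂ j ∈ Finset.Icc 1 m, b (n - (j : ℤ)) ⁻¹' ({x}ᶜ) with hF
  have hEF : {ω | ∀ j : ℕ, 1 ≤ j → j ≤ m → b (n - (j : ℤ)) ω ≠ b n ω} = ⋃ x, F x := by
    ext ω
    simp only [hF, Set.mem_setOf_eq, Set.mem_iUnion, Set.mem_inter_iff, Set.mem_preimage,
      Set.mem_singleton_iff, Set.mem_iInter, Set.mem_compl_iff, Finset.mem_Icc]
    constructor
    · intro h
      exact ⟨b n ω, rfl, fun j hj => h j hj.1 hj.2⟩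
    · rintro ⟨x, hx, hj⟩ j h1 h2 heq
      exact hj j ⟨h1, h2⟩ (by rw [heq, hx])
  have hFmeas : ∀ x, MeasurableSet (F x) := by
    intro x
    refine ((hb n) (measurableSet_singleton x)).inter ?_
    exact MeasurableSet.biInter (Finset.Icc 1 m).countable_toSet
      fun j _ => (hb _) (measurableSet_singleton x).compl
  have hdisj : Pairwise (Function.onFun Disjoint F) := by
    intro x y hxy
    refine Set.disjoint_left.mpr fun ω hx hy => hxy ?_
    have h1 : b n ω = x := hx.1
    have h2 : b n ω = y := hy.1
    rw [← h1, ← h2]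
  have hFx : ∀ x, μ (F x) = p * (1 - p) ^ m := by
    intro x
    set T : Finset ℤ := (Finset.Icc 1 m).image (fun j : ℕ => n - (j : ℤ)) with hT
    have hnT : n ∉ T := by
      simp only [hT, Finset.mem_image, Finset.mem_Icc]
      rintro ⟨j, hj, hje⟩
      omega
    set sets : ℤ → Set (Fin L → Bool) := fun i =>
      if i = n then {x} else {x}ᶜ with hsets
    have hFeq : F x = ⋂ i ∈ (insert n T : Finset ℤ), b i ⁻¹' sets i := by
      ext ω
      simp only [hF, hsets, Set.mem_inter_iff, Set.mem_preimage, Set.mem_singleton_iff,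
        Set.mem_iInter, Set.mem_compl_iff, Finset.mem_insert, Finset.mem_Icc, hT,
        Finset.mem_image]
      constructor
      · rintro ⟨hx1, hx2⟩ i hi
        rcases hi with rfl | ⟨j, hj, rfl⟩
        · simp [hx1]
        · have hne : n - (j : ℤ) ≠ n := by omega
          simp only [hne, if_false, Set.mem_compl_iff, Set.mem_singleton_iff]
          exact hx2 j hj
      · intro h
        constructor
        · have := h n (Or.inl rfl)
          simpa using this
        · intro j hj
          have hne : n - (j : ℤ) ≠ n := by omega
          have := h (n - (j : ℤ)) (Or.inr ⟨j, hj, rfl⟩)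
          simpa [hne] using this
    have hmul := hindep.measure_inter_preimage_eq_mul (insert n T) (sets := sets)
      (fun i _ => by
        by_cases hi : i = n
        · simp only [hsets, hi, if_pos rfl]; exact measurableSet_singleton x
        · simp only [hsets, if_neg hi]; exact (measurableSet_singleton x).compl)
    rw [hFeq, hmul, Finset.prod_insert hnT]
    have hn' : sets n = {x} := by simp [hsets]
    rw [hn', hunif n x]
    congr 1
    rw [hT, Finset.prod_image ?hinj]
    case hinj =>
      intro j hj k hk hjk
      simp only at hjk
      omega
    have hterm : ∀ j ∈ Finset.Icc 1 m, μ (b (n - (j : ℤ)) ⁻¹' sets (n - (j : ℤ))) = 1 - p := by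
      intro j hj
      have hj1 : 1 ≤ j := (Finset.mem_Icc.mp hj).1
      have hne : n - (j : ℤ) ≠ n := by omega
      rw [hsets]
      simp only [hne, if_neg, ite_false]
      rw [Set.preimage_compl,
        measure_compl ((hb _) (measurableSet_singleton x)) (measure_ne_top μ _),
        measure_univ, hunif, hp]
    rw [Finset.prod_congr rfl hterm, Finset.prod_const, Nat.card_Icc]
    simp
  rw [hEF, measure_iUnion hdisj hFmeas, tsum_fintype]
  have hcard : (Finset.univ : Finset (Fin L → Bool)).card = 2 ^ L := by
    simp [Finset.card_univ, Fintype.card_fun]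
  calc (∑ x : Fin L → Bool, μ (F x)) = ∑ x : Fin L → Bool, p * (1 - p) ^ m := by
        exact Finset.sum_congr rfl fun x _ => hFx x
    _ = (2 ^ L : ℕ) * (p * (1 - p) ^ m) := by
        rw [Finset.sum_const, hcard, nsmul_eq_mul]
    _ = ((2 : ℝ≥0∞) ^ L * p) * (1 - p) ^ m := by
        push_cast
        ring
    _ ≤ (1 - p) ^ m := by
        rw [hp, ENNReal.mul_inv_cancel (by positivity) (ENNReal.pow_ne_top ENNReal.ofNat_ne_top), one_mul]

/-- For every `Q ≥ 1` and `K ≥ 1`, the random variable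
`D Q K = (1/√K) · ∑_{n=1}^K (X n − X n^(Q))` (with the truncated variable
`X n^(Q) = g (A n)` if `A n ≤ Q+n−1` and `g (Q+n−1)` otherwise) has finite mean
and finite variance; moreover, for each fixed `Q`, `E[D Q K] → 0` and
`Var[D Q K] → 0` as `K → ∞`. -/
theorem stmt19
    {Ω : Type*} [MeasurableSpace Ω] (μ : Measure Ω) [IsProbabilityMeasure μ]
    (L : ℕ) (hL : 1 ≤ L)
    (b : ℤ → Ω → (Fin L → Bool)) (hb : ∀ n, Measurable (b n))
    (hindep : iIndepFun b μ)
    (hunif : ∀ (n : ℤ) (x : Fin L → Bool), μ (b n ⁻¹' {x}) = ((2 : ENNReal) ^ L)⁻¹)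
    (A : ℤ → Ω → ℕ)
    (hA : ∀ n ω, A n ω = sInf {m : ℕ | 1 ≤ m ∧ b (n - (m : ℤ)) ω = b n ω})
    (g : ℕ → ℝ)
    (hg : ∀ i : ℕ, g i = (1 / Real.log 2) * ∑ j ∈ Finset.Icc 1 (i - 1), (1 : ℝ) / j)
    (X : ℤ → Ω → ℝ) (hX : ∀ n ω, X n ω = g (A n ω))
    (XQ : ℕ → ℕ → Ω → ℝ)
    (hXQ : ∀ (Q : ℕ) (n : ℕ) (ω : Ω),
      XQ Q n ω =
        if A (n : ℤ) ω ≤ Q + n - 1 then g (A (n : ℤ) ω) else g (Q + n - 1))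
    (D : ℕ → ℕ → Ω → ℝ)
    (hD : ∀ (Q K : ℕ) (ω : Ω),
      D Q K ω = (Real.sqrt K)⁻¹ *
        ∑ n ∈ Finset.Icc 1 K, (X (n : ℤ) ω - XQ Q n ω)) :
    ∀ Q : ℕ, 1 ≤ Q →
      (∀ K : ℕ, 1 ≤ K → Integrable (D Q K) μ ∧ evariance (D Q K) μ < ⊤) ∧
      Tendsto (fun K : ℕ => ∫ ω, D Q K ω ∂μ) atTop (nhds 0) ∧
      Tendsto (fun K : ℕ => variance (D Q K) μ) atTop (nhds 0) := by
  intro Q hQ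
  -- basic constants
  set p : ℝ≥0∞ := ((2 : ℝ≥0∞) ^ L)⁻¹ with hpdef
  set q : ℝ≥0∞ := 1 - p with hqdef
  have hp0 : p ≠ 0 := ENNReal.inv_ne_zero.mpr (ENNReal.pow_ne_top ENNReal.ofNat_ne_top)
  have hq1 : q < 1 := ENNReal.sub_lt_self ENNReal.one_ne_top one_ne_zero hp0
  have hqle : q ≤ 1 := tsub_le_self
  have hqtop : q ≠ ⊤ := (hq1.trans_le le_top).ne
  -- tail bound
  have htail : ∀ (nn : ℤ) (m : ℕ), μ {ω | m < A nn ω} ≤ q ^ m := by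
    intro nn m
    have hsub : {ω | m < A nn ω}
        ⊆ {ω | ∀ j : ℕ, 1 ≤ j → j ≤ m → b (nn - (j : ℤ)) ω ≠ b nn ω} := by
      intro ω h j h1 hj heq
      have hle : A nn ω ≤ j := by
        rw [hA]; exact Nat.sInf_le ⟨h1, heq⟩
      have hm : m < A nn ω := h
      omega
    exact (measure_mono hsub).trans (tailprob μ b hb hindep hunif nn m)
  -- measurability of A
  have hAm : ∀ nn : ℤ, Measurable (A nn) := by
    intro nn
    have : A nn = fun ω => sInf {m : ℕ | 1 ≤ m ∧ b (nn - (m : ℤ)) ω = b nn ω} :=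
      funext (hA nn)
    rw [this]
    exact measA b hb nn
  -- truncation level and overshoot
  set t : ℕ → ℕ := fun n => Q + n - 1 with htdef
  have htn : ∀ n : ℕ, 1 ≤ n → n ≤ t n ∧ 1 ≤ t n := by
    intro n hn; simp only [htdef]; omega
  set N : ℕ → Ω → ℕ := fun n ω => A (n : ℤ) ω - t n with hNdef
  have hNm : ∀ n, Measurable (N n) :=
    fun n => (Measurable.of_discrete (f := fun a => a - t n)).comp (hAm n)
  have hNtail : ∀ (n j : ℕ), μ {ω | j < N n ω} ≤ q ^ (t n + j) := by
    intro n j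
    have hset : {ω | j < N n ω} = {ω | t n + j < A (n : ℤ) ω} := by
      ext ω; simp only [Set.mem_setOf_eq, hNdef]; omega
    rw [hset]; exact htail _ _
  -- second moment of N
  set Cq : ℝ≥0∞ := ∑' j : ℕ, (2 * (j : ℝ≥0∞) + 1) * q ^ j with hCqdef
  have hN2 : ∀ n : ℕ, ∫⁻ ω, ((N n ω : ℝ≥0∞)) ^ 2 ∂μ ≤ Cq * q ^ (t n) := by
    intro n
    rw [lintegral_nat_layer μ (N n) (hNm n) (fun j => 2 * (j : ℝ≥0∞) + 1)
      (fun m => (m : ℝ≥0∞) ^ 2) (by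
        intro m
        show ((m : ℝ≥0∞)) ^ 2 = ∑ j ∈ Finset.range m, (2 * (j : ℝ≥0∞) + 1)
        rw [← Nat.cast_pow, ← sum_odds m, Nat.cast_sum]
        push_cast
        rfl)]
    calc ∑' j : ℕ, (2 * (j : ℝ≥0∞) + 1) * μ {ω | j < N n ω}
        ≤ ∑' j : ℕ, (2 * (j : ℝ≥0∞) + 1) * (q ^ j * q ^ (t n)) := by
          refine ENNReal.tsum_le_tsum fun j => mul_le_mul_right ?_ _
          rw [← pow_add]
          rw [add_comm j (t n)]
          exact hNtail n j
      _ = Cq * q ^ (t n) := by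
          rw [hCqdef, ← ENNReal.tsum_mul_right]
          exact tsum_congr fun j => by ring
  have hCqtop : Cq ≠ ⊤ := by
    set qn : ℝ≥0 := q.toNNReal with hqn
    have hqc : (qn : ℝ≥0∞) = q := ENNReal.coe_toNNReal hqtop
    have hqn1 : qn < 1 := by
      have := hq1; rw [← hqc] at this; exact_mod_cast this
    have hqnr1 : (qn : ℝ) < 1 := hqn1
    have hqnr0 : (0:ℝ) ≤ qn := qn.coe_nonneg
    have hsum : Summable (fun j : ℕ => (2 * (j:ℝ) + 1) * (qn : ℝ) ^ j) := by
      have h1 : Summable (fun j : ℕ => (j : ℝ) * (qn : ℝ) ^ j) := by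
        simpa using summable_pow_mul_geometric_of_norm_lt_one 1
          (r := (qn : ℝ)) (by rw [Real.norm_eq_abs, abs_of_nonneg hqnr0]; exact hqnr1)
      have h2 : Summable (fun j : ℕ => (qn : ℝ) ^ j) :=
        summable_geometric_of_lt_one hqnr0 hqnr1
      refine Summable.congr ((h1.mul_left 2).add h2) fun j => by ring
    have hsum' : Summable (fun j : ℕ => (2 * (j : ℝ≥0) + 1) * qn ^ j) := by
      rw [← NNReal.summable_coe]
      refine Summable.congr hsum fun j => by push_cast; ring
    have : Cq = ((∑' j : ℕ, (2 * (j : ℝ≥0) + 1) * qn ^ j : ℝ≥0) : ℝ≥0∞) := by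
      rw [ENNReal.coe_tsum hsum']
      refine tsum_congr fun j => ?_
      rw [← hqc]
      push_cast
      ring
    rw [this]
    exact ENNReal.coe_ne_top
  -- first moment of N
  have hN1 : ∀ n : ℕ, ∫⁻ ω, (N n ω : ℝ≥0∞) ∂μ ≤ (1 - q)⁻¹ * q ^ (t n) := by
    intro n
    rw [lintegral_nat_layer μ (N n) (hNm n) (fun _ => 1) (fun m => (m : ℝ≥0∞)) (by simp)]
    calc ∑' j : ℕ, 1 * μ {ω | j < N n ω}
        ≤ ∑' j : ℕ, q ^ j * q ^ (t n) := by
          refine ENNReal.tsum_le_tsum fun j => ?_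
          rw [one_mul, ← pow_add, add_comm j (t n)]
          exact hNtail n j
      _ = (1 - q)⁻¹ * q ^ (t n) := by rw [ENNReal.tsum_mul_right, ENNReal.tsum_geometric]
  have h1q : (1 - q)⁻¹ ≠ ⊤ := by
    refine ENNReal.inv_ne_top.mpr ?_
    rw [Ne, tsub_eq_zero_iff_le]
    exact fun h => absurd (lt_of_lt_of_le hq1 h) (lt_irrefl _)
  -- measurability of the summands
  have hXm : ∀ nn : ℤ, Measurable (X nn) := by
    intro nn
    have : X nn = fun ω => g (A nn ω) := funext (hX nn)
    rw [this]
    exact (Measurable.of_discrete (f := g)).comp (hAm nn)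
  have hXQm : ∀ n : ℕ, Measurable (XQ Q n) := by
    intro n
    have : XQ Q n = (fun a => if a ≤ Q + n - 1 then g a else g (Q + n - 1)) ∘ A (n:ℤ) :=
      funext (hXQ Q n)
    rw [this]
    exact (Measurable.of_discrete (f := fun a => if a ≤ Q + n - 1 then g a else g (Q + n - 1))).comp (hAm n)
  have hYm : ∀ n : ℕ, Measurable (fun ω => X (n:ℤ) ω - XQ Q n ω) :=
    fun n => (hXm n).sub (hXQm n)
  -- bounds on g
  have hlog2 : (0.6931471803 : ℝ) < Real.log 2 := Real.log_two_gt_d9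
  have hlogle : (1:ℝ) / Real.log 2 ≤ 2 := by
    rw [div_le_iff₀ (by linarith)]; linarith
  have hlognn : (0:ℝ) ≤ 1 / Real.log 2 := by positivity
  have hgb : ∀ a c : ℕ, 1 ≤ c → c ≤ a →
      0 ≤ g a - g c ∧ g a - g c ≤ 2 * ((a - c : ℕ) : ℝ) := by
    intro a c h1 hca
    have hIcc : ∀ x : ℕ, Finset.Icc 1 x = Finset.Ioc 0 x := by
      intro x; ext y; simp only [Finset.mem_Icc, Finset.mem_Ioc]; omega
    have hsplit : ∑ j ∈ Finset.Ioc 0 (a-1), (1:ℝ)/j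
        = (∑ j ∈ Finset.Ioc 0 (c-1), (1:ℝ)/j) + ∑ j ∈ Finset.Ioc (c-1) (a-1), (1:ℝ)/j :=
      (Finset.sum_Ioc_consecutive _ (Nat.zero_le (c-1)) (by omega)).symm
    have hsum : g a - g c = (1/Real.log 2) * ∑ j ∈ Finset.Ioc (c-1) (a-1), (1:ℝ)/j := by
      rw [hg, hg, hIcc, hIcc, ← mul_sub, hsplit]
      ring
    have hS0 : (0:ℝ) ≤ ∑ j ∈ Finset.Ioc (c-1) (a-1), (1:ℝ)/j :=
      Finset.sum_nonneg fun j _ => by positivity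
    have hScard : ∑ j ∈ Finset.Ioc (c-1) (a-1), (1:ℝ)/j ≤ ((a - c : ℕ) : ℝ) := by
      have hcard : (Finset.Ioc (c-1) (a-1)).card = a - c := by
        rw [Nat.card_Ioc]; omega
      have hle1 : (∑ j ∈ Finset.Ioc (c-1) (a-1), (1:ℝ)/j)
          ≤ (Finset.Ioc (c-1) (a-1)).card • (1:ℝ) := by
        refine Finset.sum_le_card_nsmul _ _ _ fun j hj => ?_
        have hj1 : 1 ≤ j := by
          have := (Finset.mem_Ioc.mp hj).1; omega
        rw [div_le_one (by exact_mod_cast hj1)]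
        exact_mod_cast hj1
      rw [nsmul_eq_mul, mul_one, hcard] at hle1
      exact hle1
    constructor
    · rw [hsum]; exact mul_nonneg hlognn hS0
    · rw [hsum]
      exact mul_le_mul hlogle hScard hS0 (by norm_num)
  -- pointwise bounds on Y
  have hYb : ∀ n : ℕ, 1 ≤ n → ∀ ω, 0 ≤ X (n:ℤ) ω - XQ Q n ω ∧
      X (n:ℤ) ω - XQ Q n ω ≤ 2 * (N n ω : ℝ) := by
    intro n hn ω
    rw [hX, hXQ]
    by_cases hle : A (n:ℤ) ω ≤ Q + n - 1
    · rw [if_pos hle, sub_self]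
      exact ⟨le_refl 0, by positivity⟩
    · rw [if_neg hle]
      have h1t : 1 ≤ Q + n - 1 := by omega
      have hta : Q + n - 1 ≤ A (n:ℤ) ω := by omega
      have hNn : N n ω = A (n:ℤ) ω - (Q + n - 1) := rfl
      have := hgb (A (n:ℤ) ω) (Q + n - 1) h1t hta
      rw [hNn]
      exact this
  -- real constants
  set qr : ℝ := q.toReal with hqrdef
  have hqr0 : 0 ≤ qr := ENNReal.toReal_nonneg
  have hqr1 : qr < 1 := by
    have := ENNReal.toReal_strict_mono ENNReal.one_ne_top hq1
    simpa using this
  set u : ℝ := (qr + 1) / 2 with hudef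
  have hu0 : 0 < u := by rw [hudef]; linarith
  have hu1 : u < 1 := by rw [hudef]; linarith
  have hqru : qr < u := by rw [hudef]; linarith
  have hqq : ENNReal.ofReal qr = q := ENNReal.ofReal_toReal hqtop
  set w : ℝ := u⁻¹ * qr with hwdef
  have hw1 : w < 1 := by
    have := (div_lt_one hu0).mpr hqru
    rwa [div_eq_inv_mul] at this
  set vE : ℝ≥0∞ := ENNReal.ofReal w with hvdef
  have hv1 : vE < 1 := by rw [hvdef]; exact ENNReal.ofReal_lt_one.mpr hw1
  have hV : (∑' n : ℕ, vE ^ n) = (1 - vE)⁻¹ := ENNReal.tsum_geometric vE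
  have hVtop : (1 - vE)⁻¹ ≠ ⊤ := by
    refine ENNReal.inv_ne_top.mpr ?_
    rw [Ne, tsub_eq_zero_iff_le]
    exact not_le.mpr hv1
  -- per-n L² bound for the summands
  have hY2 : ∀ n : ℕ, 1 ≤ n →
      ∫⁻ ω, ENNReal.ofReal ((X (n:ℤ) ω - XQ Q n ω)^2) ∂μ ≤ 4 * Cq * q ^ n := by
    intro n hn
    have hpt : ∀ ω, ENNReal.ofReal ((X (n:ℤ) ω - XQ Q n ω)^2)
        ≤ 4 * ((N n ω : ℝ≥0∞))^2 := by
      intro ω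
      obtain ⟨h0, h2⟩ := hYb n hn ω
      have hN0 : (0:ℝ) ≤ 2 * (N n ω : ℝ) := by positivity
      have hsq : (X (n:ℤ) ω - XQ Q n ω)^2 ≤ (2 * (N n ω : ℝ))^2 :=
        sq_le_sq' (by linarith) h2
      have h4 : (2 * (N n ω : ℝ))^2 = 4 * ((N n ω : ℝ))^2 := by ring
      calc ENNReal.ofReal ((X (n:ℤ) ω - XQ Q n ω)^2)
          ≤ ENNReal.ofReal (4 * ((N n ω : ℝ))^2) :=
            ENNReal.ofReal_le_ofReal (by rw [← h4]; exact hsq)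
        _ = 4 * ((N n ω : ℝ≥0∞))^2 := by
            rw [ENNReal.ofReal_mul (by norm_num : (0:ℝ) ≤ 4),
              ENNReal.ofReal_pow (Nat.cast_nonneg _), ENNReal.ofReal_natCast]
            norm_num
    calc ∫⁻ ω, ENNReal.ofReal ((X (n:ℤ) ω - XQ Q n ω)^2) ∂μ
        ≤ ∫⁻ ω, 4 * ((N n ω : ℝ≥0∞))^2 ∂μ := lintegral_mono hpt
      _ = 4 * ∫⁻ ω, ((N n ω : ℝ≥0∞))^2 ∂μ :=
          lintegral_const_mul' _ _ (by norm_num)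
      _ ≤ 4 * (Cq * q ^ (t n)) := mul_le_mul_right (hN2 n) _
      _ ≤ 4 * Cq * q ^ n := by
          rw [mul_assoc]
          refine mul_le_mul_right (mul_le_mul_right ?_ _) _
          exact pow_le_pow_of_le_one (zero_le : 0 ≤ q) hqle (htn n hn).1
  -- uniform bound on the second moment of the partial sums
  set M : ℝ≥0∞ := ENNReal.ofReal ((1-u)⁻¹) * ((1 - vE)⁻¹ * (4 * Cq)) with hMdef
  have hMtop : M ≠ ⊤ := by
    refine ENNReal.mul_ne_top ENNReal.ofReal_ne_top ?_
    exact ENNReal.mul_ne_top hVtop (ENNReal.mul_ne_top (by norm_num) hCqtop)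
  have hS2 : ∀ K : ℕ,
      ∫⁻ ω, ENNReal.ofReal ((∑ n ∈ Finset.Icc 1 K, (X (n:ℤ) ω - XQ Q n ω))^2) ∂μ ≤ M := by
    intro K
    have hpt : ∀ ω, (∑ n ∈ Finset.Icc 1 K, (X (n:ℤ) ω - XQ Q n ω))^2
        ≤ (1-u)⁻¹ * ∑ n ∈ Finset.Icc 1 K, (u⁻¹)^n * (X (n:ℤ) ω - XQ Q n ω)^2 := by
      intro ω
      set s : ℝ := Real.sqrt u with hsdef
      have hs0 : 0 < s := Real.sqrt_pos.mpr hu0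
      have hs2 : s^2 = u := Real.sq_sqrt hu0.le
      have hcs := Finset.sum_mul_sq_le_sq_mul_sq (Finset.Icc 1 K)
        (fun n => s ^ n) (fun n => (s⁻¹) ^ n * (X (n:ℤ) ω - XQ Q n ω))
      have hfg : ∀ n ∈ Finset.Icc 1 K,
          s ^ n * ((s⁻¹) ^ n * (X (n:ℤ) ω - XQ Q n ω)) = X (n:ℤ) ω - XQ Q n ω := by
        intro n _
        rw [← mul_assoc, ← mul_pow, mul_inv_cancel₀ hs0.ne', one_pow, one_mul]
      rw [Finset.sum_congr rfl hfg] at hcs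
      have hsq1 : ∀ n ∈ Finset.Icc 1 K, (s ^ n)^2 = u ^ n := by
        intro n _
        rw [← pow_mul, mul_comm n 2, pow_mul, hs2]
      have hsq2 : ∀ n ∈ Finset.Icc 1 K,
          ((s⁻¹) ^ n * (X (n:ℤ) ω - XQ Q n ω))^2
            = (u⁻¹)^n * (X (n:ℤ) ω - XQ Q n ω)^2 := by
        intro n _
        have hsu : (s⁻¹)^2 = u⁻¹ := by rw [inv_pow, hs2]
        rw [mul_pow, ← pow_mul, mul_comm n 2, pow_mul, hsu]
      rw [Finset.sum_congr rfl hsq1, Finset.sum_congr rfl hsq2] at hcs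
      have hgeo : ∑ n ∈ Finset.Icc 1 K, u^n ≤ (1-u)⁻¹ := by
        have hle := Summable.sum_le_tsum (Finset.Icc 1 K) (fun i _ => pow_nonneg hu0.le i)
          (summable_geometric_of_lt_one hu0.le hu1)
        exact hle.trans (le_of_eq (tsum_geometric_of_lt_one hu0.le hu1))
      refine hcs.trans ?_
      refine mul_le_mul_of_nonneg_right hgeo ?_
      exact Finset.sum_nonneg fun n _ => by positivity
    calc ∫⁻ ω, ENNReal.ofReal ((∑ n ∈ Finset.Icc 1 K, (X (n:ℤ) ω - XQ Q n ω))^2) ∂μ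
        ≤ ∫⁻ ω, ENNReal.ofReal ((1-u)⁻¹ *
            ∑ n ∈ Finset.Icc 1 K, (u⁻¹)^n * (X (n:ℤ) ω - XQ Q n ω)^2) ∂μ :=
          lintegral_mono fun ω => ENNReal.ofReal_le_ofReal (hpt ω)
      _ = ENNReal.ofReal ((1-u)⁻¹) *
            ∫⁻ ω, ENNReal.ofReal (∑ n ∈ Finset.Icc 1 K,
              (u⁻¹)^n * (X (n:ℤ) ω - XQ Q n ω)^2) ∂μ := by
          rw [← lintegral_const_mul' _ _ ENNReal.ofReal_ne_top]
          refine lintegral_congr fun ω => ?_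
          rw [ENNReal.ofReal_mul (inv_nonneg.mpr (by linarith : (0:ℝ) ≤ 1 - u))]
      _ = ENNReal.ofReal ((1-u)⁻¹) * ∑ n ∈ Finset.Icc 1 K,
            ∫⁻ ω, ENNReal.ofReal ((u⁻¹)^n * (X (n:ℤ) ω - XQ Q n ω)^2) ∂μ := by
          congr 1
          have hcongr : ∀ ω, ENNReal.ofReal (∑ n ∈ Finset.Icc 1 K,
                (u⁻¹)^n * (X (n:ℤ) ω - XQ Q n ω)^2)
              = ∑ n ∈ Finset.Icc 1 K,
                ENNReal.ofReal ((u⁻¹)^n * (X (n:ℤ) ω - XQ Q n ω)^2) :=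
            fun ω => ENNReal.ofReal_sum_of_nonneg (fun n _ =>
              mul_nonneg (pow_nonneg (inv_nonneg.mpr hu0.le) n) (sq_nonneg _))
          rw [lintegral_congr hcongr]
          exact lintegral_finset_sum _ (fun n _ =>
            ENNReal.measurable_ofReal.comp (measurable_const.mul ((hYm n).pow_const 2)))
      _ ≤ ENNReal.ofReal ((1-u)⁻¹) * ∑ n ∈ Finset.Icc 1 K, vE^n * (4 * Cq) := by
          refine mul_le_mul_right (Finset.sum_le_sum fun n hnm => ?_) _
          have hn1 : 1 ≤ n := (Finset.mem_Icc.mp hnm).1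
          have hsplit : ∫⁻ ω, ENNReal.ofReal ((u⁻¹)^n * (X (n:ℤ) ω - XQ Q n ω)^2) ∂μ
              = ENNReal.ofReal ((u⁻¹)^n) *
                ∫⁻ ω, ENNReal.ofReal ((X (n:ℤ) ω - XQ Q n ω)^2) ∂μ := by
            rw [← lintegral_const_mul' _ _ ENNReal.ofReal_ne_top]
            refine lintegral_congr fun ω => ?_
            rw [ENNReal.ofReal_mul (by positivity)]
          rw [hsplit]
          calc ENNReal.ofReal ((u⁻¹)^n) *
                ∫⁻ ω, ENNReal.ofReal ((X (n:ℤ) ω - XQ Q n ω)^2) ∂μ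
              ≤ ENNReal.ofReal ((u⁻¹)^n) * (4 * Cq * q^n) :=
                mul_le_mul_right (hY2 n hn1) _
            _ = vE^n * (4 * Cq) := by
                have h1 : ENNReal.ofReal ((u⁻¹)^n) = (ENNReal.ofReal u⁻¹)^n :=
                  ENNReal.ofReal_pow (inv_nonneg.mpr hu0.le) n
                have h2 : q ^ n = (ENNReal.ofReal qr)^n := by rw [hqq]
                have h3 : vE = ENNReal.ofReal u⁻¹ * ENNReal.ofReal qr := by
                  rw [hvdef, hwdef, ENNReal.ofReal_mul (inv_nonneg.mpr hu0.le)]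
                rw [h1, h2, h3, mul_pow]
                ring
      _ ≤ ENNReal.ofReal ((1-u)⁻¹) * ((1 - vE)⁻¹ * (4 * Cq)) := by
          refine mul_le_mul_right ?_ _
          rw [← Finset.sum_mul, ← hV]
          exact mul_le_mul_left (ENNReal.sum_le_tsum _) _
      _ = M := hMdef.symm
  -- measurability of D
  have hDm : ∀ K : ℕ, Measurable (D Q K) := by
    intro K
    have hfun : D Q K = fun ω => (Real.sqrt K)⁻¹ *
        ∑ n ∈ Finset.Icc 1 K, (X (n:ℤ) ω - XQ Q n ω) := funext (hD Q K)
    rw [hfun]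
    exact measurable_const.mul (Finset.measurable_sum _ (fun n _ => hYm n))
  have hD2 : ∀ K : ℕ, 1 ≤ K →
      ∫⁻ ω, ENNReal.ofReal ((D Q K ω)^2) ∂μ ≤ ((K:ℝ≥0∞))⁻¹ * M := by
    intro K hK
    have hKpos : (0:ℝ) < K := by exact_mod_cast hK
    have hsq : ∀ ω, (D Q K ω)^2
        = (K:ℝ)⁻¹ * (∑ n ∈ Finset.Icc 1 K, (X (n:ℤ) ω - XQ Q n ω))^2 := by
      intro ω
      rw [hD, mul_pow, inv_pow, Real.sq_sqrt (Nat.cast_nonneg K)]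
    calc ∫⁻ ω, ENNReal.ofReal ((D Q K ω)^2) ∂μ
        = ENNReal.ofReal ((K:ℝ)⁻¹) *
          ∫⁻ ω, ENNReal.ofReal ((∑ n ∈ Finset.Icc 1 K, (X (n:ℤ) ω - XQ Q n ω))^2) ∂μ := by
          rw [← lintegral_const_mul' _ _ ENNReal.ofReal_ne_top]
          refine lintegral_congr fun ω => ?_
          rw [hsq ω, ENNReal.ofReal_mul (inv_nonneg.mpr hKpos.le)]
      _ ≤ ENNReal.ofReal ((K:ℝ)⁻¹) * M := mul_le_mul_right (hS2 K) _
      _ = (K:ℝ≥0∞)⁻¹ * M := by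
          rw [ENNReal.ofReal_inv_of_pos hKpos, ENNReal.ofReal_natCast]
  have hKMtop : ∀ K : ℕ, 1 ≤ K → ((K:ℝ≥0∞))⁻¹ * M ≠ ⊤ := by
    intro K hK
    refine ENNReal.mul_ne_top (ENNReal.inv_ne_top.mpr ?_) hMtop
    exact_mod_cast (by omega : K ≠ 0)
  have hmem2 : ∀ K : ℕ, 1 ≤ K → MemLp (D Q K) 2 μ := by
    intro K hK
    refine (memLp_two_iff_integrable_sq (hDm K).aestronglyMeasurable).mpr ?_
    refine ⟨((hDm K).pow_const 2).aestronglyMeasurable, ?_⟩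
    rw [hasFiniteIntegral_iff_ofReal (ae_of_all μ fun ω => sq_nonneg _)]
    exact lt_of_le_of_lt (hD2 K hK) (lt_top_iff_ne_top.mpr (hKMtop K hK))
  -- integrability and expectation bound for the summands
  have hYlin : ∀ n : ℕ, 1 ≤ n →
      ∫⁻ ω, ENNReal.ofReal (X (n:ℤ) ω - XQ Q n ω) ∂μ ≤ 2 * (1-q)⁻¹ * q ^ n := by
    intro n hn
    have hb2 : ∀ ω, ENNReal.ofReal (X (n:ℤ) ω - XQ Q n ω) ≤ 2 * (N n ω : ℝ≥0∞) := by
      intro ω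
      calc ENNReal.ofReal (X (n:ℤ) ω - XQ Q n ω)
          ≤ ENNReal.ofReal (2 * (N n ω : ℝ)) := ENNReal.ofReal_le_ofReal (hYb n hn ω).2
        _ = 2 * (N n ω : ℝ≥0∞) := by
            rw [ENNReal.ofReal_mul (by norm_num : (0:ℝ) ≤ 2), ENNReal.ofReal_natCast]
            norm_num
    calc ∫⁻ ω, ENNReal.ofReal (X (n:ℤ) ω - XQ Q n ω) ∂μ
        ≤ ∫⁻ ω, 2 * (N n ω : ℝ≥0∞) ∂μ := lintegral_mono hb2
      _ = 2 * ∫⁻ ω, (N n ω : ℝ≥0∞) ∂μ := lintegral_const_mul' _ _ (by norm_num)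
      _ ≤ 2 * ((1-q)⁻¹ * q ^ (t n)) := mul_le_mul_right (hN1 n) _
      _ ≤ 2 * (1-q)⁻¹ * q ^ n := by
          rw [mul_assoc]
          refine mul_le_mul_right (mul_le_mul_right ?_ _) _
          exact pow_le_pow_of_le_one (zero_le : 0 ≤ q) hqle (htn n hn).1
  have hfinlin : ∀ n : ℕ, (2 * (1-q)⁻¹ * q ^ n) ≠ ⊤ := by
    intro n
    exact ENNReal.mul_ne_top (ENNReal.mul_ne_top (by norm_num) h1q) (ENNReal.pow_ne_top hqtop)
  have hYint : ∀ n : ℕ, 1 ≤ n → Integrable (fun ω => X (n:ℤ) ω - XQ Q n ω) μ := by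
    intro n hn
    refine ⟨(hYm n).aestronglyMeasurable, ?_⟩
    rw [hasFiniteIntegral_iff_ofReal (ae_of_all μ fun ω => (hYb n hn ω).1)]
    exact lt_of_le_of_lt (hYlin n hn) (lt_top_iff_ne_top.mpr (hfinlin n))
  have hEY : ∀ n : ℕ, 1 ≤ n →
      ∫ ω, (X (n:ℤ) ω - XQ Q n ω) ∂μ ≤ (2 * (1-q)⁻¹).toReal * qr ^ n := by
    intro n hn
    rw [integral_eq_lintegral_of_nonneg_ae (ae_of_all μ fun ω => (hYb n hn ω).1)
      (hYm n).aestronglyMeasurable]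
    have hmono := ENNReal.toReal_mono (hfinlin n) (hYlin n hn)
    refine hmono.trans (le_of_eq ?_)
    rw [ENNReal.toReal_mul, ENNReal.toReal_pow]
  set B : ℝ := (2 * (1-q)⁻¹).toReal * (1 - qr)⁻¹ with hBdef
  have hEb : ∀ K : ℕ, 1 ≤ K → ∫ ω, D Q K ω ∂μ ≤ (Real.sqrt K)⁻¹ * B := by
    intro K hK
    have hint : ∫ ω, D Q K ω ∂μ = (Real.sqrt K)⁻¹ *
        ∑ n ∈ Finset.Icc 1 K, ∫ ω, (X (n:ℤ) ω - XQ Q n ω) ∂μ := by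
      simp_rw [hD Q K]
      rw [integral_const_mul, integral_finset_sum _
        (fun n hn => hYint n (Finset.mem_Icc.mp hn).1)]
    rw [hint]
    refine mul_le_mul_of_nonneg_left ?_ (inv_nonneg.mpr (Real.sqrt_nonneg _))
    calc ∑ n ∈ Finset.Icc 1 K, ∫ ω, (X (n:ℤ) ω - XQ Q n ω) ∂μ
        ≤ ∑ n ∈ Finset.Icc 1 K, (2 * (1-q)⁻¹).toReal * qr ^ n :=
          Finset.sum_le_sum (fun n hn => hEY n (Finset.mem_Icc.mp hn).1)
      _ = (2 * (1-q)⁻¹).toReal * ∑ n ∈ Finset.Icc 1 K, qr ^ n := by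
          rw [Finset.mul_sum]
      _ ≤ (2 * (1-q)⁻¹).toReal * (1 - qr)⁻¹ := by
          refine mul_le_mul_of_nonneg_left ?_ ENNReal.toReal_nonneg
          have hle := Summable.sum_le_tsum (Finset.Icc 1 K) (fun i _ => pow_nonneg hqr0 i)
            (summable_geometric_of_lt_one hqr0 hqr1)
          exact hle.trans (le_of_eq (tsum_geometric_of_lt_one hqr0 hqr1))
      _ = B := hBdef.symm
  have hE0 : ∀ K : ℕ, 0 ≤ ∫ ω, D Q K ω ∂μ := by
    intro K
    refine integral_nonneg fun ω => ?_
    rw [hD]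
    exact mul_nonneg (inv_nonneg.mpr (Real.sqrt_nonneg _))
      (Finset.sum_nonneg fun n hn => (hYb n (Finset.mem_Icc.mp hn).1 ω).1)
  have htendE : Tendsto (fun K : ℕ => ∫ ω, D Q K ω ∂μ) atTop (nhds 0) := by
    have hsq0 : Tendsto (fun K : ℕ => (Real.sqrt K)⁻¹) atTop (nhds 0) := by
      have heq : (fun K : ℕ => (Real.sqrt K)⁻¹) = fun K : ℕ => Real.sqrt ((K:ℝ)⁻¹) := by
        funext K; rw [Real.sqrt_inv]
      rw [heq]
      have hcont := Real.continuous_sqrt.tendsto (0:ℝ)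
      rw [Real.sqrt_zero] at hcont
      exact hcont.comp tendsto_inv_atTop_nhds_zero_nat
    have hup : Tendsto (fun K : ℕ => (Real.sqrt K)⁻¹ * B) atTop (nhds 0) := by
      simpa using hsq0.mul_const B
    refine tendsto_of_tendsto_of_tendsto_of_le_of_le' tendsto_const_nhds hup
      (Eventually.of_forall hE0) ?_
    filter_upwards [eventually_ge_atTop 1] with K hK
    exact hEb K hK
  have hVb : ∀ K : ℕ, 1 ≤ K → variance (D Q K) μ ≤ M.toReal * (K:ℝ)⁻¹ := by
    intro K hK
    have h2 : μ[(D Q K)^2] = (∫⁻ ω, ENNReal.ofReal ((D Q K ω)^2) ∂μ).toReal :=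
      integral_eq_lintegral_of_nonneg_ae (ae_of_all μ fun ω => sq_nonneg (D Q K ω))
        ((hDm K).pow_const 2).aestronglyMeasurable
    have hint2 : μ[(D Q K)^2] ≤ M.toReal * (K:ℝ)⁻¹ := by
      rw [h2]
      have hmono := ENNReal.toReal_mono (hKMtop K hK) (hD2 K hK)
      refine hmono.trans (le_of_eq ?_)
      rw [ENNReal.toReal_mul, ENNReal.toReal_inv, ENNReal.toReal_natCast]
      ring
    rw [variance_eq_sub (hmem2 K hK)]
    have h3 : (0:ℝ) ≤ μ[D Q K] ^ 2 := sq_nonneg _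
    linarith
  have htendV : Tendsto (fun K : ℕ => variance (D Q K) μ) atTop (nhds 0) := by
    have hup : Tendsto (fun K : ℕ => M.toReal * (K:ℝ)⁻¹) atTop (nhds 0) := by
      simpa using tendsto_inv_atTop_nhds_zero_nat.const_mul M.toReal
    refine tendsto_of_tendsto_of_tendsto_of_le_of_le' tendsto_const_nhds hup
      (Eventually.of_forall fun K => variance_nonneg _ _) ?_
    filter_upwards [eventually_ge_atTop 1] with K hK
    exact hVb K hK
  exact ⟨fun K hK => ⟨(hmem2 K hK).integrable one_le_two,
    (hmem2 K hK).evariance_lt_top⟩, htendE, htendV⟩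
end
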